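/- arXiv:1903.05005 — 12 statements merged into one kernel-verified Lean document; each statement's English description precedes it below -/
import Mathlib

section
/- No regular graph of odd degree admits a distance magic labeling. -/
/-- No regular graph of odd degree admits a distance magic labeling. -/
theorem stmt_1 {V : Type*} [Fintype V] [DecidableEq V] [Nonempty V]
    (G : SimpleGraph V) [DecidableRel G.Adj] (r : ℕ)
    (hr : Odd r) (hreg : G.IsRegularOfDegree r) :
    ¬ ∃ (f : V ≃ Fin (Fintype.card V)) (k : ℕ),
        ∀ x : V, ∑ y ∈ G.neighborFinset x, ((f y : ℕ) + 1) = k := by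
  have hne : 0 < Fintype.card V := Fintype.card_pos
  set n := Fintype.card V with hn
  rintro ⟨f, k, hk⟩
  -- the total sum over all vertices
  have h1 : ∑ x : V, ∑ y ∈ G.neighborFinset x, ((f y : ℕ) + 1) = n * k := by
    simp only [hk]
    rw [Finset.sum_const, smul_eq_mul, Finset.card_univ]
  have h2 : ∑ x : V, ∑ y ∈ G.neighborFinset x, ((f y : ℕ) + 1)
      = ∑ y : V, r * ((f y : ℕ) + 1) := by
    simp_rw [SimpleGraph.neighborFinset_eq_filter, Finset.sum_filter]
    rw [Finset.sum_comm]
    refine Finset.sum_congr rfl fun y _ => ?_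
    have h : ∑ x : V, (if G.Adj x y then ((f y : ℕ) + 1) else 0)
        = (Finset.univ.filter (fun x => G.Adj x y)).card * ((f y : ℕ) + 1) := by
      rw [← Finset.sum_filter, Finset.sum_const, smul_eq_mul]
    rw [h]
    congr 1
    have hfe : (Finset.univ.filter (fun x => G.Adj x y))
        = (Finset.univ.filter (G.Adj y)) := by
      apply Finset.filter_congr
      intro x _
      simp [SimpleGraph.adj_comm]
    rw [hfe, ← SimpleGraph.neighborFinset_eq_filter]
    exact hreg y
  have hS : ∑ y : V, ((f y : ℕ) + 1) = ∑ i : Fin n, ((i : ℕ) + 1) :=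
    Equiv.sum_comp f (fun i : Fin n => (i : ℕ) + 1)
  have hS2 : 2 * ∑ i : Fin n, ((i : ℕ) + 1) = n * (n + 1) := by
    have e1 : ∑ i : Fin n, ((i : ℕ) + 1) = ∑ i ∈ Finset.range n, (i + 1) :=
      Fin.sum_univ_eq_sum_range (fun i => i + 1) n
    have e2 : ∑ i ∈ Finset.range (n + 1), i = ∑ i ∈ Finset.range n, (i + 1) := by
      rw [Finset.sum_range_succ' (fun i => i) n]
      simp
    rw [e1, ← e2, mul_comm 2, Finset.sum_range_id_mul_two, Nat.add_sub_cancel,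
      mul_comm]
  -- combine: 2 * n * k = n * (r * (n+1))
  have h3 : 2 * (n * k) = n * (r * (n + 1)) := by
    rw [← h1, h2, ← Finset.mul_sum, hS, mul_left_comm, hS2]
    ring
  have h4 : 2 * k = r * (n + 1) :=
    Nat.eq_of_mul_eq_mul_left hne (by rw [← mul_assoc, mul_comm n 2, mul_assoc, h3])
  -- handshake: n * r is even, r odd, so n even
  have hhs : ∑ v : V, G.degree v = 2 * G.edgeFinset.card :=
    G.sum_degrees_eq_twice_card_edges
  have hdeg : ∀ v : V, G.degree v = r := hreg
  have hnr : n * r = 2 * G.edgeFinset.card := by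
    rw [← hhs]
    simp [hdeg, Finset.sum_const, mul_comm]
    exact Or.inl hn
  have hnE : Even n := by
    have hev : Even (n * r) := ⟨G.edgeFinset.card, by omega⟩
    rcases Nat.even_mul.mp hev with h | h
    · exact h
    · exact absurd h (Nat.not_even_iff_odd.mpr hr)
  have hodd : Odd (r * (n + 1)) := hr.mul hnE.add_one
  rw [← h4] at hodd
  obtain ⟨c, hc⟩ := hodd
  omega
end

section
/- Let D ⊆ {0,1,...,n} and let f: 𝔽₂ⁿ → 𝔽₂ⁿ be a bijection such that f(N_D(u)) is a balanced subset of 𝔽₂ⁿ for every u ∈ 𝔽₂ⁿ, where N_D(u) = {v : the Hamming distance d(u,v) ∈ D}. Then the labeling ζ ∘ f gives each vertex u weight ∑_{v ∈ N_D(u)} ζ(f(v)) = (|N_D(u)|/2)(2ⁿ − 1), which is a constant independent of u; hence ζ ∘ f induces a D-magic labeling of the hypercube Qₙ. -/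
lemma stmt_4_two01 (x : ZMod 2) : x = 0 ∨ x = 1 := by fin_cases x; exacts [Or.inl rfl, Or.inr rfl]

lemma stmt_4_val_eq (x : ZMod 2) : x.val = if x = 1 then 1 else 0 := by
  rcases stmt_4_two01 x with h|h <;> subst h <;> decide

lemma stmt_4_geom (n : ℕ) : ∑ i : Fin n, 2 ^ (i:ℕ) = 2 ^ n - 1 := by
  rw [Fin.sum_univ_eq_sum_range]
  induction n with
  | zero => simp
  | succ m ih => rw [Finset.sum_range_succ, ih, pow_succ]; omega

lemma stmt_4_dist (n : ℕ) (u v : Fin n → ZMod 2) :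
    hammingDist 0 (u + v) = hammingDist u v := by
  rw [hammingDist, hammingDist]
  congr 1
  apply Finset.filter_congr
  intro i _
  simp only [Pi.add_apply, Pi.zero_apply, ne_eq]
  rcases stmt_4_two01 (u i) with h1|h1 <;> rcases stmt_4_two01 (v i) with h2|h2 <;>
    rw [h1, h2] <;> decide

/-- If `f : 𝔽₂ⁿ → 𝔽₂ⁿ` is a bijection such that `f(N_D(u))` is balanced for every `u`,
then every vertex `u` has weight `∑_{v ∈ N_D(u)} ζ(f v) = (|N_D(u)|/2)(2ⁿ−1)` (stated
multiplied by 2), which is constant; hence `ζ ∘ f` induces a `D`-magic labeling of `Qₙ`. -/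
theorem stmt_4 (n : ℕ) (D : Finset ℕ) (f : (Fin n → ZMod 2) ≃ (Fin n → ZMod 2))
    (hbal : ∀ u : Fin n → ZMod 2, ∀ i : Fin n,
      2 * (((Finset.univ.filter (fun v => hammingDist u v ∈ D)).image f).filter
            (fun a => a i = 1)).card
        = ((Finset.univ.filter (fun v => hammingDist u v ∈ D)).image f).card) :
    (∀ u : Fin n → ZMod 2,
      2 * ∑ v ∈ Finset.univ.filter (fun v => hammingDist u v ∈ D),
            (∑ i : Fin n, (f v i).val * 2 ^ (i : ℕ))
        = (Finset.univ.filter (fun v => hammingDist u v ∈ D)).card * (2 ^ n - 1)) ∧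
    ∃ k : ℕ, ∀ u : Fin n → ZMod 2,
      ∑ v ∈ Finset.univ.filter (fun v => hammingDist u v ∈ D),
          (∑ i : Fin n, (f v i).val * 2 ^ (i : ℕ)) = k := by
  set N : (Fin n → ZMod 2) → Finset (Fin n → ZMod 2) :=
    fun u => Finset.univ.filter (fun v => hammingDist u v ∈ D) with hN
  -- key: for each u, i, twice the column sum equals the cardinality of N u
  have hcol : ∀ (u : Fin n → ZMod 2) (i : Fin n),
      2 * ∑ v ∈ N u, (f v i).val = (N u).card := by
    intro u i
    have h1 : ∑ a ∈ (N u).image f, (a i).val = ∑ v ∈ N u, (f v i).val :=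
      Finset.sum_image (fun x _ y _ h => f.injective h)
    have h2 : ∑ a ∈ (N u).image f, (a i).val
        = (((N u).image f).filter (fun a => a i = 1)).card := by
      rw [Finset.card_filter]
      exact Finset.sum_congr rfl (fun a _ => stmt_4_val_eq (a i))
    have h3 := hbal u i
    have h4 : ((N u).image f).card = (N u).card :=
      Finset.card_image_of_injective _ f.injective
    rw [← h1, h2, h3, h4]
  have hmain : ∀ u : Fin n → ZMod 2,
      2 * ∑ v ∈ N u, (∑ i : Fin n, (f v i).val * 2 ^ (i:ℕ))
        = (N u).card * (2 ^ n - 1) := by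
    intro u
    rw [Finset.sum_comm, Finset.mul_sum]
    have : ∀ i : Fin n, 2 * ∑ v ∈ N u, (f v i).val * 2 ^ (i:ℕ)
        = (N u).card * 2 ^ (i:ℕ) := by
      intro i
      rw [← Finset.sum_mul, ← mul_assoc, hcol u i]
    rw [Finset.sum_congr rfl (fun i _ => this i), ← Finset.mul_sum, stmt_4_geom]
  refine ⟨hmain, ?_⟩
  -- |N u| is independent of u
  have hcard : ∀ u : Fin n → ZMod 2, (N u).card = (N 0).card := by
    intro u
    apply Finset.card_bij (fun v _ => u + v)
    · intro v hv
      simp only [hN, Finset.mem_filter, Finset.mem_univ, true_and] at hv ⊢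
      rwa [stmt_4_dist]
    · intro a ha b hb h
      exact by simpa using congrArg (fun w => u + w) h
    · intro b hb
      have hub : u + (u + b) = b := by
        funext i
        simp only [Pi.add_apply]
        rcases stmt_4_two01 (u i) with h|h <;>
          rcases stmt_4_two01 (b i) with h2|h2 <;> rw [h, h2] <;> decide
      refine ⟨u + b, ?_, hub⟩
      simp only [hN, Finset.mem_filter, Finset.mem_univ, true_and] at hb ⊢
      rwa [← stmt_4_dist n u (u + b), hub]
  refine ⟨∑ v ∈ N 0, (∑ i : Fin n, (f v i).val * 2 ^ (i:ℕ)), fun u => ?_⟩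
  have h1 := hmain u
  have h2 := hmain 0
  rw [hcard u] at h1
  show ∑ v ∈ N u, (∑ i : Fin n, (f v i).val * 2 ^ (i:ℕ)) = _
  omega
end

section
/- Let f: 𝔽₂ⁿ → 𝔽₂ⁿ be a nonsingular linear transformation with matrix M (over 𝔽₂) with respect to the standard basis, and suppose n is odd. Then f is closed neighbor-balanced (i.e., f(N[u]) is balanced for every u, where N[u] = {u} ∪ {u + eⱼ : 1 ≤ j ≤ n}) if and only if every row of M has exactly (n+1)/2 entries equal to 1. -/
/-- For `n` odd and `M` an invertible `n×n` matrix over `𝔽₂` with `f(u) = Mu`,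
`f` is closed neighbor-balanced iff every row of `M` has exactly `(n+1)/2` ones.
(Balancedness stated multiplied by 2.) -/
theorem stmt_5 (n : ℕ) (hn : Odd n) (M : Matrix (Fin n) (Fin n) (ZMod 2))
    (hM : IsUnit M) :
    (∀ u : Fin n → ZMod 2, ∀ i : Fin n,
      2 * (((insert u (Finset.univ.image (fun j => u + Pi.single j 1))).image
              (fun v => M.mulVec v)).filter (fun a => a i = 1)).card
        = ((insert u (Finset.univ.image (fun j => u + Pi.single j 1))).image
              (fun v => M.mulVec v)).card)
      ↔ (∀ i : Fin n, (Finset.univ.filter (fun j => M i j = 1)).card = (n + 1) / 2) := by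
  have hinj : Function.Injective M.mulVec := Matrix.mulVec_injective_iff_isUnit.2 hM
  have hzm : ∀ c : ZMod 2, c ≠ 1 → c = 0 := by decide
  have hginj : ∀ u : Fin n → ZMod 2, ∀ j k : Fin n,
      u + Pi.single j (1 : ZMod 2) = u + Pi.single k 1 → j = k := by
    intro u j k h
    by_contra hjk
    have h3 := congrFun h j
    simp [Pi.single_eq_same, Pi.single_eq_of_ne hjk] at h3
  have hnotmem : ∀ u : Fin n → ZMod 2,
      u ∉ Finset.univ.image (fun j => u + Pi.single j 1) := by
    intro u hu
    obtain ⟨j, _, hj⟩ := Finset.mem_image.1 hu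
    have h := congrFun hj j
    simp [Pi.single_eq_same] at h
  -- cardinality of the image set
  have hcard : ∀ u : Fin n → ZMod 2,
      ((insert u (Finset.univ.image (fun j => u + Pi.single j 1))).image
          (fun v => M.mulVec v)).card = n + 1 := by
    intro u
    rw [Finset.card_image_of_injective _ hinj,
      Finset.card_insert_of_notMem (hnotmem u),
      Finset.card_image_of_injOn
        (fun j _ k _ h => hginj u j k h)]
    simp [Nat.add_comm]
  have hsplit : ∀ i : Fin n, (Finset.univ.filter (fun j => M i j = 1)).card
      + (Finset.univ.filter (fun j => ¬ M i j = 1)).card = n := by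
    intro i
    rw [Finset.card_filter_add_card_filter_not]
    simp
  -- count formula
  have key : ∀ (u : Fin n → ZMod 2) (i : Fin n),
      (((insert u (Finset.univ.image (fun j => u + Pi.single j 1))).image
          (fun v => M.mulVec v)).filter (fun a => a i = 1)).card
      = (if M.mulVec u i = 1 then 1 + (n - (Finset.univ.filter (fun j => M i j = 1)).card)
          else (Finset.univ.filter (fun j => M i j = 1)).card) := by
    intro u i
    rw [Finset.card_filter, Finset.sum_image (fun x _ y _ h => hinj h),
      Finset.sum_insert (hnotmem u), Finset.sum_image (fun j _ k _ h => hginj u j k h)]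
    have hval : ∀ j, M.mulVec (u + Pi.single j 1) i = M.mulVec u i + M i j := by
      intro j
      rw [Matrix.mulVec_add, Matrix.mulVec_single_one]
      rfl
    simp_rw [hval]
    by_cases hc : M.mulVec u i = 1
    · rw [if_pos hc, if_pos hc, hc]
      have hcond : ∀ x : ZMod 2, ((1 : ZMod 2) + x = 1) ↔ ¬ x = 1 := by decide
      have hsum : (∑ j : Fin n, if (1 : ZMod 2) + M i j = 1 then 1 else 0)
          = (Finset.univ.filter (fun j => ¬ M i j = 1)).card := by
        rw [Finset.card_filter]
        refine Finset.sum_congr rfl fun j _ => ?_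
        by_cases hx : M i j = 1
        · simp [hx]
        · simp [hx, hzm _ hx]
      rw [hsum]
      have := hsplit i
      omega
    · rw [if_neg hc, if_neg hc, hzm _ hc]
      simp_rw [zero_add]
      rw [Finset.card_filter]
  constructor
  · intro h i
    have h0 := h 0 i
    rw [key, hcard] at h0
    simp only [Matrix.mulVec_zero, Pi.zero_apply] at h0
    rw [if_neg (by decide : ¬ (0 : ZMod 2) = 1)] at h0
    obtain ⟨m, hm⟩ := hn
    omega
  · intro h u i
    rw [key, hcard, h i]
    have hr : (Finset.univ.filter (fun j => M i j = 1)).card ≤ n := by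
      calc (Finset.univ.filter (fun j => M i j = 1)).card
          ≤ (Finset.univ : Finset (Fin n)).card := Finset.card_filter_le _ _
        _ = n := by simp
    obtain ⟨m, hm⟩ := hn
    split <;> omega
end

section
/- If n ≡ 1 (mod 4), then the hypercube Qₙ admits a closed distance magic labeling, i.e., a bijection f: V(Qₙ) → {1,...,2ⁿ} such that ∑_{y ∈ N[x]} f(y) is constant over all vertices x. -/
open Finset

section CDMAux

variable {n k : ℕ} [NeZero n]

/-- Entry of the circulant 0/1 matrix over `𝔽₂` whose row `i` is the interval
`{i, i+1, …, i+k-1}` modulo `n`. -/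
def sEnt (n k : ℕ) (i j : ZMod n) : ZMod 2 := if (j - i).val < k then 1 else 0

lemma cardA (hkn : k ≤ n) (i : ZMod n) :
    ((univ : Finset (ZMod n)).filter fun u => (u - i).val < k).card = k := by
  rw [← Finset.card_range k]
  apply Finset.card_bij' (fun u _ => (u - i).val) (fun m _ => (m : ZMod n) + i)
  · intro u hu
    simp only [mem_filter] at hu
    simpa using hu.2
  · intro m hm
    simp only [mem_range] at hm
    simp [ZMod.val_cast_of_lt (lt_of_lt_of_le hm hkn), hm]
  · intro u hu
    simp [ZMod.natCast_rightInverse (u - i)]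
  · intro m hm
    simp only [mem_range] at hm
    simp [ZMod.val_cast_of_lt (lt_of_lt_of_le hm hkn)]

lemma cardA' (hkn : k ≤ n) (i : ZMod n) :
    ((univ : Finset (Fin n)).filter fun j : Fin n => (((j : ℕ) : ZMod n) - i).val < k).card
      = k := by
  refine Eq.trans ?_ (cardA hkn i)
  refine Finset.card_bij (fun (j : Fin n)
    (_ : j ∈ (univ : Finset (Fin n)).filter fun j : Fin n => (((j : ℕ) : ZMod n) - i).val < k)
      => ((j : ℕ) : ZMod n)) ?_ ?_ ?_
  · intro j hj; simp only [mem_filter] at hj ⊢; exact ⟨mem_univ _, hj.2⟩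
  · intro a ha b hb hab
    have h2 := congrArg ZMod.val hab
    rw [ZMod.val_cast_of_lt a.isLt, ZMod.val_cast_of_lt b.isLt] at h2
    exact Fin.ext h2
  · intro u hu
    refine ⟨⟨u.val, u.val_lt⟩, ?_, ?_⟩
    · simp only [mem_filter] at hu ⊢
      refine ⟨mem_univ _, ?_⟩
      simpa [ZMod.natCast_rightInverse u] using hu.2
    · simpa using ZMod.natCast_rightInverse u

lemma rowDiff (h2 : n + 1 = 2 * k) (i j : ZMod n) :
    sEnt n k i j + sEnt n k (i + 1) j
      = (if j = i then 1 else 0) + (if j = i + (k : ZMod n) then 1 else 0) := by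
  have hk1 : 1 ≤ k := by omega
  rcases eq_or_ne n 1 with h1 | h1
  · subst h1
    have hji : j = i := Subsingleton.elim _ _
    have hjik : j = i + ((k : ℕ) : ZMod 1) := Subsingleton.elim _ _
    rw [if_pos hji, if_pos hjik]
    unfold sEnt
    have hv : ∀ a : ZMod 1, a.val = 0 := fun a => by
      rw [Subsingleton.elim a 0]; rfl
    rw [if_pos (by rw [hv]; omega), if_pos (by rw [hv]; omega)]
  · have hn1 : 1 ≤ n := Nat.pos_of_ne_zero (NeZero.ne n)
    have hn2 : 2 ≤ n := by omega
    have hk2 : 2 ≤ k := by omega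
    have hkn : k < n := by omega
    have hvk : ((k : ℕ) : ZMod n).val = k := ZMod.val_cast_of_lt hkn
    unfold sEnt
    have hkey : j - (i + 1) = (j - i) - 1 := by ring
    rw [hkey]
    have e1 : (j = i) ↔ (j - i = 0) := sub_eq_zero.symm
    have e2 : (j = i + (k : ZMod n)) ↔ (j - i = (k : ZMod n)) := by
      rw [sub_eq_iff_eq_add, add_comm]
    simp only [e1, e2]
    generalize j - i = w
    rcases eq_or_ne w 0 with hw0 | hw0
    · subst hw0
      obtain ⟨m, rfl⟩ : ∃ m, n = m + 1 := ⟨n - 1, by omega⟩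
      have hneg : ((0 : ZMod (m+1)) - 1).val = m := by
        rw [zero_sub]; exact ZMod.val_neg_one m
      rw [if_pos (by rw [ZMod.val_zero]; omega),
          if_neg (by rw [hneg]; omega),
          if_pos rfl,
          if_neg (by intro h; rw [← h, ZMod.val_zero] at hvk; omega)]
    · have hd1 : 1 ≤ w.val := by
        have := (ZMod.val_eq_zero w).not.mpr hw0; omega
      have hdn : w.val < n := ZMod.val_lt w
      have hcast : ((w.val : ℕ) : ZMod n) = w := ZMod.natCast_rightInverse w
      have hwm1 : (w - 1).val = w.val - 1 := by
        have h3 : w - 1 = ((w.val - 1 : ℕ) : ZMod n) := by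
          rw [Nat.cast_sub hd1, hcast, Nat.cast_one]
        rw [h3, ZMod.val_cast_of_lt (by omega)]
      have e3 : (w = (k : ZMod n)) ↔ (w.val = k) := by
        constructor
        · intro h; rw [h, hvk]
        · intro h; rw [← hcast, h]
      rw [hwm1]
      simp only [e3, if_neg hw0]
      rcases lt_trichotomy w.val k with h | h | h
      · rw [if_pos h, if_pos (by omega), if_neg (by omega)]; decide
      · rw [if_neg (by omega), if_pos (by omega), if_pos h]
      · rw [if_neg (by omega), if_neg (by omega), if_neg (by omega)]

lemma rowSupport (hkn : k ≤ n) (hodd : k % 2 = 1) (i : ZMod n) :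
    (∑ u : ZMod n, sEnt n k i u) = (1 : ZMod 2) := by
  unfold sEnt
  rw [Finset.sum_boole, cardA hkn i]
  obtain ⟨m, rfl⟩ : ∃ m, k = 2 * m + 1 := ⟨k / 2, by omega⟩
  push_cast
  have h20 : (2 : ZMod 2) = 0 := rfl
  rw [h20]
  ring

lemma Binj (h2 : n + 1 = 2 * k) (hodd : k % 2 = 1) :
    Function.Injective
      (fun (z : ZMod n → ZMod 2) => (fun i : ZMod n => ∑ u : ZMod n, sEnt n k i u * z u)) := by
  have hn1 : 1 ≤ n := Nat.pos_of_ne_zero (NeZero.ne n)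
  have hkn : k ≤ n := by omega
  have hk1 : 1 ≤ k := by omega
  have char2 : ∀ a b : ZMod 2, a + b = 0 → b = a := by decide
  intro z z' h
  set w : ZMod n → ZMod 2 := fun u => z u + z' u with hwdef
  have hfun : ∀ i : ZMod n, ∑ u : ZMod n, sEnt n k i u * w u = 0 := by
    intro i
    have := congrFun h i
    simp only at this
    calc ∑ u : ZMod n, sEnt n k i u * w u
        = (∑ u : ZMod n, sEnt n k i u * z u) + ∑ u : ZMod n, sEnt n k i u * z' u := by
          rw [← Finset.sum_add_distrib]
          exact Finset.sum_congr rfl fun u _ => by rw [hwdef]; ring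
      _ = 0 := by rw [this]; exact CharTwo.add_self_eq_zero _
  have hstep : ∀ i : ZMod n, w (i + (k : ZMod n)) = w i := by
    intro i
    have hr : ∀ u : ZMod n, sEnt n k i u * w u + sEnt n k (i+1) u * w u
        = (if u = i then w u else 0) + (if u = i + (k : ZMod n) then w u else 0) := by
      intro u
      have hrd := rowDiff h2 i u
      calc sEnt n k i u * w u + sEnt n k (i+1) u * w u
          = (sEnt n k i u + sEnt n k (i+1) u) * w u := by ring
        _ = ((if u = i then 1 else 0) + (if u = i + (k : ZMod n) then 1 else 0)) * w u := by
            rw [hrd]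
        _ = _ := by split_ifs <;> ring
    have hsum : (0 : ZMod 2) = w i + w (i + (k : ZMod n)) := by
      calc (0 : ZMod 2) = (∑ u : ZMod n, sEnt n k i u * w u)
            + ∑ u : ZMod n, sEnt n k (i+1) u * w u := by rw [hfun i, hfun (i+1)]; ring
        _ = ∑ u : ZMod n, (sEnt n k i u * w u + sEnt n k (i+1) u * w u) := by
            rw [Finset.sum_add_distrib]
        _ = ∑ u : ZMod n, ((if u = i then w u else 0)
              + (if u = i + (k : ZMod n) then w u else 0)) := by
            exact Finset.sum_congr rfl fun u _ => hr u
        _ = w i + w (i + (k : ZMod n)) := by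
            rw [Finset.sum_add_distrib, Finset.sum_ite_eq' univ i w,
                Finset.sum_ite_eq' univ (i + (k : ZMod n)) w]
            simp
    exact char2 _ _ hsum.symm
  have hiter : ∀ t : ℕ, w ((t : ZMod n) * (k : ZMod n)) = w 0 := by
    intro t
    induction t with
    | zero => simp
    | succ t ih =>
        have hc : ((t+1 : ℕ) : ZMod n) * (k : ZMod n)
            = (t : ZMod n) * (k : ZMod n) + (k : ZMod n) := by push_cast; ring
        rw [hc, hstep, ih]
  have hconst : ∀ u : ZMod n, w u = w 0 := by
    intro u
    have hcop : Nat.Coprime k n := by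
      have hc1 : Nat.Coprime k (k - 1) := by
        obtain ⟨m, rfl⟩ : ∃ m, k = m + 1 := ⟨k-1, by omega⟩
        simp [Nat.Coprime, Nat.succ_sub_one, Nat.gcd_comm]
      have hc2 := (Nat.coprime_add_mul_left_right k (k-1) 1).mpr hc1
      have heq : k - 1 + k * 1 = n := by omega
      rwa [heq] at hc2
    set ku := ZMod.unitOfCoprime k hcop with hku
    have hcoe : ((ku : (ZMod n)ˣ) : ZMod n) = (k : ZMod n) := ZMod.coe_unitOfCoprime k hcop
    set v : ZMod n := u * ((ku⁻¹ : (ZMod n)ˣ) : ZMod n) with hv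
    have hvk : v * (k : ZMod n) = u := by
      rw [hv, ← hcoe, mul_assoc]
      have hmul : ((ku⁻¹ : (ZMod n)ˣ) : ZMod n) * ((ku : (ZMod n)ˣ) : ZMod n) = 1 := by
        rw [← Units.val_mul, inv_mul_cancel ku, Units.val_one]
      rw [hmul, mul_one]
    have hnat : ((v.val : ℕ) : ZMod n) = v := ZMod.natCast_rightInverse v
    have hit := hiter v.val
    rw [hnat, hvk] at hit
    exact hit
  have h0 : w 0 = 0 := by
    have hf0 := hfun 0
    have hs : ∑ u : ZMod n, sEnt n k 0 u * w u = (∑ u : ZMod n, sEnt n k 0 u) * w 0 := by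
      rw [Finset.sum_mul]
      exact Finset.sum_congr rfl fun u _ => by rw [hconst u]
    rw [hs, rowSupport hkn hodd 0, one_mul] at hf0
    exact hf0
  funext u
  have hwu : w u = 0 := by rw [hconst u, h0]
  exact (char2 (z u) (z' u) hwu).symm

/-- The linear bijection on vertices, given by the circulant matrix. -/
def Sfun (n k : ℕ) [NeZero n] (x : Fin n → ZMod 2) (i : Fin n) : ZMod 2 :=
  ∑ j : Fin n, sEnt n k ((i : ℕ) : ZMod n) ((j : ℕ) : ZMod n) * x j

def eFZ (n : ℕ) [NeZero n] : Fin n ≃ ZMod n where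
  toFun i := ((i : ℕ) : ZMod n)
  invFun u := ⟨u.val, u.val_lt⟩
  left_inv i := Fin.ext (ZMod.val_cast_of_lt i.isLt)
  right_inv u := ZMod.natCast_rightInverse u

lemma Sfun_inj (h2 : n + 1 = 2 * k) (hodd : k % 2 = 1) :
    Function.Injective (Sfun n k) := by
  intro x x' h
  set e := eFZ n with he
  have key : (fun i : ZMod n => ∑ u : ZMod n, sEnt n k i u * (x (e.symm u)))
      = (fun i : ZMod n => ∑ u : ZMod n, sEnt n k i u * (x' (e.symm u))) := by
    funext i
    have h1 : ∀ (y : Fin n → ZMod 2),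
        ∑ u : ZMod n, sEnt n k i u * y (e.symm u) = Sfun n k y (e.symm i) := by
      intro y
      rw [← Equiv.sum_comp e (fun u => sEnt n k i u * y (e.symm u))]
      unfold Sfun
      apply Finset.sum_congr rfl
      intro j _
      have h2 : e j = ((j : ℕ) : ZMod n) := rfl
      have h3 : ((((e.symm i) : Fin n) : ℕ) : ZMod n) = i := e.apply_symm_apply i
      rw [e.symm_apply_apply, h2, h3]
    rw [h1 x, h1 x', h]
  have := Binj h2 hodd key
  funext j
  have h4 := congrFun this (e j)
  simpa [e.symm_apply_apply] using h4

lemma Sfun_update (x : Fin n → ZMod 2) (j i : Fin n) :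
    Sfun n k (Function.update x j (x j + 1)) i
      = Sfun n k x i + sEnt n k ((i : ℕ) : ZMod n) ((j : ℕ) : ZMod n) := by
  unfold Sfun
  have hupd : ∀ j' : Fin n, Function.update x j (x j + 1) j'
      = x j' + (if j' = j then 1 else 0) := by
    intro j'
    rcases eq_or_ne j' j with h | h
    · subst h; rw [Function.update_self, if_pos rfl]
    · rw [Function.update_of_ne h, if_neg h, add_zero]
  calc ∑ j' : Fin n, sEnt n k ((i : ℕ) : ZMod n) ((j' : ℕ) : ZMod n)
          * (Function.update x j (x j + 1) j')
      = ∑ j' : Fin n, (sEnt n k ((i : ℕ) : ZMod n) ((j' : ℕ) : ZMod n) * x j'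
          + (if j' = j then sEnt n k ((i : ℕ) : ZMod n) ((j' : ℕ) : ZMod n) else 0)) := by
        apply Finset.sum_congr rfl
        intro j' _
        rw [hupd j']
        split_ifs <;> ring
    _ = _ := by
        rw [Finset.sum_add_distrib,
          Finset.sum_ite_eq' univ j (fun j' => sEnt n k ((i : ℕ) : ZMod n) ((j' : ℕ) : ZMod n))]
        simp

lemma mem_nbhd (x y : Fin n → ZMod 2) :
    hammingDist x y ≤ 1 ↔ y = x ∨ ∃ j, y = Function.update x j (x j + 1) := by
  have flip2 : ∀ a b : ZMod 2, a ≠ b → b = a + 1 := by decide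
  constructor
  · intro h
    rcases Nat.le_one_iff_eq_zero_or_eq_one.mp h with h0 | h1
    · left; exact (hammingDist_eq_zero.mp h0).symm
    · right
      have hcard : ((univ : Finset (Fin n)).filter fun i => x i ≠ y i).card = 1 := h1
      obtain ⟨j, hj⟩ := Finset.card_eq_one.mp hcard
      refine ⟨j, funext fun i => ?_⟩
      rcases eq_or_ne i j with heq | hij
      · have hjm : j ∈ (univ : Finset (Fin n)).filter fun i => x i ≠ y i := by
          rw [hj]; exact Finset.mem_singleton_self j
        simp only [mem_filter] at hjm
        rw [heq, Function.update_self]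
        exact flip2 _ _ hjm.2
      · have him : i ∉ (univ : Finset (Fin n)).filter fun i => x i ≠ y i := by
          rw [hj]; simp [hij]
        simp only [mem_filter, mem_univ, true_and, not_not] at him
        rw [Function.update_of_ne hij]
        exact him.symm
  · intro h
    rcases h with rfl | ⟨j, rfl⟩
    · simp
    · have hsub : ((univ : Finset (Fin n)).filter
          fun i => x i ≠ Function.update x j (x j + 1) i) ⊆ {j} := by
        intro i hi
        simp only [mem_filter] at hi
        by_contra hij
        simp only [Finset.mem_singleton] at hij
        exact hi.2 (by rw [Function.update_of_ne hij])
      calc hammingDist x (Function.update x j (x j + 1))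
          = ((univ : Finset (Fin n)).filter
              fun i => x i ≠ Function.update x j (x j + 1) i).card := rfl
        _ ≤ ({j} : Finset (Fin n)).card := Finset.card_le_card hsub
        _ = 1 := Finset.card_singleton j

lemma upd_inj (x : Fin n → ZMod 2) : ∀ a ∈ (univ : Finset (Fin n)), ∀ b ∈ univ,
    Function.update x a (x a + 1) = Function.update x b (x b + 1) → a = b := by
  have neq1 : ∀ a : ZMod 2, a + 1 ≠ a := by decide
  intro a _ b _ hab
  by_contra h
  have hc := congrFun hab a
  rw [Function.update_self, Function.update_of_ne h] at hc
  exact neq1 _ hc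

lemma nbhd_eq (x : Fin n → ZMod 2) :
    ((univ : Finset (Fin n → ZMod 2)).filter fun y => hammingDist x y ≤ 1)
      = insert x ((univ : Finset (Fin n)).image fun j => Function.update x j (x j + 1)) := by
  ext y
  simp only [mem_filter, mem_univ, true_and, mem_insert, mem_image]
  rw [mem_nbhd]
  constructor
  · rintro (rfl | ⟨j, rfl⟩)
    · exact Or.inl rfl
    · exact Or.inr ⟨j, rfl⟩
  · rintro (rfl | ⟨j, rfl⟩)
    · exact Or.inl rfl
    · exact Or.inr ⟨j, rfl⟩

lemma x_notMem_img (x : Fin n → ZMod 2) :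
    x ∉ (univ : Finset (Fin n)).image fun j => Function.update x j (x j + 1) := by
  have neq1 : ∀ a : ZMod 2, a + 1 ≠ a := by decide
  intro hx
  obtain ⟨j, _, hj⟩ := Finset.mem_image.mp hx
  have := congrFun hj j
  rw [Function.update_self] at this
  exact neq1 _ this

lemma bitsum (h2 : n + 1 = 2 * k) (x : Fin n → ZMod 2) (i : Fin n) :
    ∑ y ∈ ((univ : Finset (Fin n → ZMod 2)).filter fun y => hammingDist x y ≤ 1),
      (Sfun n k y i).val = k := by
  have hn1 : 1 ≤ n := Nat.pos_of_ne_zero (NeZero.ne n)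
  have hkn : k ≤ n := by omega
  have hk1 : 1 ≤ k := by omega
  rw [nbhd_eq x, Finset.sum_insert (x_notMem_img x), Finset.sum_image (upd_inj x)]
  have hupd : ∀ j : Fin n, (Sfun n k (Function.update x j (x j + 1)) i).val
      = if ((((j : ℕ) : ZMod n)) - ((i : ℕ) : ZMod n)).val < k
          then (Sfun n k x i + 1).val else (Sfun n k x i).val := by
    intro j
    rw [Sfun_update x j i]
    unfold sEnt
    split_ifs with h
    · rfl
    · rw [add_zero]
  rw [Finset.sum_congr rfl fun j _ => hupd j]
  rw [Finset.sum_ite (fun _ => (Sfun n k x i + 1).val) (fun _ => (Sfun n k x i).val)]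
  rw [Finset.sum_const, Finset.sum_const]
  have hcard1 : ((univ : Finset (Fin n)).filter
      fun j : Fin n => ((((j : ℕ) : ZMod n)) - ((i : ℕ) : ZMod n)).val < k).card = k :=
    cardA' hkn _
  have hcard2 : ((univ : Finset (Fin n)).filter
      fun j : Fin n => ¬ ((((j : ℕ) : ZMod n)) - ((i : ℕ) : ZMod n)).val < k).card = n - k := by
    have := Finset.card_filter_add_card_filter_not
      (s := (univ : Finset (Fin n)))
      (p := fun j : Fin n => ((((j : ℕ) : ZMod n)) - ((i : ℕ) : ZMod n)).val < k)
    rw [hcard1, Finset.card_univ, Fintype.card_fin] at this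
    omega
  rw [hcard1, hcard2]
  have hcases : Sfun n k x i = 0 ∨ Sfun n k x i = 1 := by
    rcases (by decide : ∀ a : ZMod 2, a = 0 ∨ a = 1) (Sfun n k x i) with h | h
    · exact Or.inl h
    · exact Or.inr h
  rcases hcases with h | h <;> rw [h] <;>
    · simp only [smul_eq_mul, show ((0:ZMod 2)+1).val = 1 from rfl,
        show (0:ZMod 2).val = 0 from rfl, show ((1:ZMod 2)+1).val = 0 from rfl,
        show (1:ZMod 2).val = 1 from rfl]
      try omega

end CDMAux

lemma two_pow_sum_aux (n : ℕ) : ∑ i ∈ Finset.range n, 2^i = 2^n - 1 := by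
  induction n with
  | zero => rfl
  | succ m ih =>
      rw [Finset.sum_range_succ, ih]
      have := Nat.one_le_two_pow (n := m)
      have h2 : (2:ℕ)^(m+1) = 2^m * 2 := pow_succ 2 m
      omega

/-- If `n ≡ 1 (mod 4)`, the hypercube `Qₙ` admits a closed distance magic labeling. -/
theorem stmt_7 (n : ℕ) (hn : n % 4 = 1) :
    ∃ (f : (Fin n → ZMod 2) ≃ Fin (2 ^ n)) (k : ℕ),
      ∀ x : Fin n → ZMod 2,
        ∑ y ∈ Finset.univ.filter (fun y => hammingDist x y ≤ 1), ((f y : ℕ) + 1) = k := by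
  haveI : NeZero n := ⟨by omega⟩
  obtain ⟨k, h2, hodd⟩ : ∃ k, n + 1 = 2 * k ∧ k % 2 = 1 := ⟨(n+1)/2, by omega, by omega⟩
  have hbij : Function.Bijective (Sfun n k) :=
    Finite.injective_iff_bijective.mp (Sfun_inj h2 hodd)
  let eS : (Fin n → ZMod 2) ≃ (Fin n → ZMod 2) := Equiv.ofBijective _ hbij
  let eP : (Fin n → ZMod 2) ≃ (Fin n → Fin 2) :=
    Equiv.piCongrRight fun _ => (Equiv.refl (ZMod 2) : ZMod 2 ≃ Fin 2)
  refine ⟨(eS.trans eP).trans finFunctionFinEquiv, k * (2^n - 1) + (n + 1), fun x => ?_⟩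
  have hval : ∀ y : Fin n → ZMod 2,
      ((((eS.trans eP).trans finFunctionFinEquiv) y : Fin (2^n)) : ℕ)
        = ∑ i : Fin n, (Sfun n k y i).val * 2 ^ (i : ℕ) := by
    intro y
    rw [Equiv.trans_apply, finFunctionFinEquiv_apply]
    rfl
  have hcard : ((Finset.univ : Finset (Fin n → ZMod 2)).filter
      fun y => hammingDist x y ≤ 1).card = n + 1 := by
    rw [nbhd_eq x, Finset.card_insert_of_notMem (x_notMem_img x),
      Finset.card_image_of_injOn (upd_inj x), Finset.card_univ, Fintype.card_fin]
  calc ∑ y ∈ Finset.univ.filter (fun y => hammingDist x y ≤ 1),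
        ((((eS.trans eP).trans finFunctionFinEquiv) y : ℕ) + 1)
      = (∑ y ∈ Finset.univ.filter (fun y => hammingDist x y ≤ 1),
          ∑ i : Fin n, (Sfun n k y i).val * 2 ^ (i : ℕ)) + (n + 1) := by
        rw [Finset.sum_add_distrib, Finset.sum_const, hcard]
        simp only [smul_eq_mul, mul_one]
        congr 1
    _ = (∑ i : Fin n, ∑ y ∈ Finset.univ.filter (fun y => hammingDist x y ≤ 1),
          (Sfun n k y i).val * 2 ^ (i : ℕ)) + (n + 1) := by rw [Finset.sum_comm]
    _ = (∑ i : Fin n, k * 2 ^ (i : ℕ)) + (n + 1) := by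
        congr 1
        refine Finset.sum_congr rfl fun i _ => ?_
        rw [← Finset.sum_mul, bitsum h2 x i]
    _ = k * (2^n - 1) + (n + 1) := by
        rw [← Finset.mul_sum]
        congr 2
        rw [Fin.sum_univ_eq_sum_range (fun i => 2 ^ i) n]
        exact two_pow_sum_aux n
end

section
/- If the hypercube Qₙ admits a closed distance magic labeling, then n ≡ 1 (mod 4). -/
open Finset

namespace Stmt8Aux


def ee : ZMod 2 → ℤ := fun a => if a = 0 then 1 else -1

lemma ee_add (a b : ZMod 2) : ee (a + b) = ee a * ee b := by revert a b; decide

lemma ee_zero : ee 0 = 1 := rfl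

lemma ee_sq (a : ZMod 2) : ee a * ee a = 1 := by revert a; decide

variable {n : ℕ}

def χ (T x : Fin n → ZMod 2) : ℤ := ∏ i, ee (T i * x i)

lemma χ_comm (T x : Fin n → ZMod 2) : χ T x = χ x T := by
  simp [χ, mul_comm]

lemma χ_add (T x y : Fin n → ZMod 2) : χ T (x + y) = χ T x * χ T y := by
  simp only [χ, Pi.add_apply, mul_add, ee_add, Finset.prod_mul_distrib]

lemma χ_zero_right (T : Fin n → ZMod 2) : χ T 0 = 1 := by
  simp [χ, ee_zero]

lemma χ_zero_left (x : Fin n → ZMod 2) : χ 0 x = 1 := by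
  simp [χ, ee_zero]

lemma χ_single (T : Fin n → ZMod 2) (i : Fin n) : χ T (Pi.single i 1) = ee (T i) := by
  rw [χ, Finset.prod_eq_single i]
  · simp
  · intro j _ hj
    simp [Pi.single_eq_of_ne hj, ee_zero]
  · simp

lemma sum_ee_mul (c : ZMod 2) : (∑ t : ZMod 2, ee (t * c)) = if c = 0 then 2 else 0 := by
  revert c; decide

lemma sum_χ (x : Fin n → ZMod 2) : ∑ T, χ T x = if x = 0 then (2 : ℤ) ^ n else 0 := by
  have : ∑ T : Fin n → ZMod 2, χ T x = ∏ i, ∑ t : ZMod 2, ee (t * x i) := by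
    rw [Finset.prod_univ_sum]
    rw [← Fintype.piFinset_univ]
    rfl
  rw [this]
  by_cases hx : x = 0
  · subst hx; simp [sum_ee_mul, ee_zero]
  · rw [if_neg hx]
    obtain ⟨i, hi⟩ : ∃ i, x i ≠ 0 := by
      by_contra hc
      push_neg at hc
      exact hx (funext hc)
    exact Finset.prod_eq_zero (Finset.mem_univ i) (by rw [sum_ee_mul, if_neg hi])

lemma zmod2_ne_iff {a b : ZMod 2} : a ≠ b ↔ b = a + 1 := by revert a b; decide

lemma nbhd_eq (x : Fin n → ZMod 2) :
    Finset.univ.filter (fun y => hammingDist x y ≤ 1) =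
      insert x (Finset.univ.image (fun i => x + Pi.single i 1)) := by
  have hdef : ∀ y : Fin n → ZMod 2,
      hammingDist x y = (Finset.univ.filter (fun i => x i ≠ y i)).card := fun y => rfl
  ext y
  simp only [mem_filter, mem_univ, true_and, mem_insert, mem_image]
  constructor
  · intro hy
    rw [hdef] at hy
    rcases Nat.le_one_iff_eq_zero_or_eq_one.mp hy with hc | hc
    · left
      have h0 := Finset.card_eq_zero.mp hc
      rw [Finset.filter_eq_empty_iff] at h0
      simp only [mem_univ, not_not, forall_const] at h0
      exact (funext h0).symm
    · right
      obtain ⟨i, hi⟩ := Finset.card_eq_one.mp hc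
      refine ⟨i, ?_⟩
      funext j
      by_cases hj : j = i
      · subst hj
        have hji : j ∈ Finset.univ.filter (fun i => x i ≠ y i) :=
          hi ▸ Finset.mem_singleton_self j
        simp only [Finset.mem_filter, mem_univ, true_and] at hji
        simp [zmod2_ne_iff.mp hji]
      · have hji : j ∉ Finset.univ.filter (fun i => x i ≠ y i) := by
          rw [hi]; simpa using hj
        simp only [Finset.mem_filter, mem_univ, true_and, not_not] at hji
        simp [Pi.single_eq_of_ne hj, ← hji]
  · rintro (rfl | ⟨i, _, rfl⟩)
    · simp [hammingDist_self]
    · rw [hdef]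
      calc (Finset.univ.filter (fun j => x j ≠ (x + Pi.single i 1 : Fin n → ZMod 2) j)).card
          ≤ ({i} : Finset (Fin n)).card := by
            apply Finset.card_le_card
            intro j hj
            simp only [Finset.mem_filter, mem_univ, true_and, Pi.add_apply] at hj
            simp only [Finset.mem_singleton]
            by_contra hji
            rw [Pi.single_eq_of_ne hji, add_zero] at hj
            exact hj rfl
        _ = 1 := Finset.card_singleton i

lemma single_ne_zero' (i : Fin n) : (Pi.single i 1 : Fin n → ZMod 2) ≠ 0 := by
  intro hc
  have := congrFun hc i
  simp at this

lemma sum_nbhd (g : (Fin n → ZMod 2) → ℤ) (x : Fin n → ZMod 2) :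
    ∑ y ∈ Finset.univ.filter (fun y => hammingDist x y ≤ 1), g y
      = g x + ∑ i, g (x + Pi.single i 1) := by
  rw [nbhd_eq, Finset.sum_insert, Finset.sum_image]
  · intro i _ j _ hij
    by_contra hne
    have h2 := congrFun (add_left_cancel hij) i
    rw [Pi.single_eq_same, Pi.single_eq_of_ne hne] at h2
    exact one_ne_zero h2
  · simp only [mem_image, mem_univ, true_and]
    rintro ⟨i, hi⟩
    exact single_ne_zero' i (add_eq_left.mp hi)

variable {n : ℕ}

/-- weight of a vector -/
def w (T : Fin n → ZMod 2) : ℕ := (Finset.univ.filter (fun i => T i ≠ 0)).card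

lemma sum_ee_eq (T : Fin n → ZMod 2) : ∑ i, ee (T i) = (n : ℤ) - 2 * w T := by
  have hsplit := Finset.card_filter_add_card_filter_not
    (s := (Finset.univ : Finset (Fin n))) (p := fun i => T i = 0)
  rw [Finset.card_univ, Fintype.card_fin] at hsplit
  have : ∑ i, ee (T i) = ∑ i ∈ Finset.univ.filter (fun i => T i = 0), (1 : ℤ)
      + ∑ i ∈ Finset.univ.filter (fun i => ¬ T i = 0), (-1 : ℤ) := by
    rw [← Finset.sum_filter_add_sum_filter_not Finset.univ (fun i => T i = 0)]
    congr 1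
    · exact Finset.sum_congr rfl (fun i hi => by
        simp only [Finset.mem_filter] at hi; simp [ee, hi.2])
    · exact Finset.sum_congr rfl (fun i hi => by
        simp only [Finset.mem_filter] at hi; simp [ee, hi.2])
  rw [this, Finset.sum_const, Finset.sum_const]
  simp only [nsmul_eq_mul, mul_one, mul_neg]
  have hw : (Finset.univ.filter (fun i => ¬ T i = 0)).card = w T := rfl
  rw [hw] at hsplit ⊢
  have : ((Finset.univ.filter (fun i => T i = 0)).card : ℤ) = (n : ℤ) - w T := by
    omega
  rw [this]; ring

lemma χ_allOnes (T : Fin n → ZMod 2) : χ T (fun _ => 1) = (-1 : ℤ) ^ (w T) := by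
  rw [χ, ← Finset.prod_filter_mul_prod_filter_not Finset.univ (fun i => T i = 0)]
  have h1 : ∏ i ∈ Finset.univ.filter (fun i => T i = 0), ee (T i * 1) = 1 :=
    Finset.prod_eq_one (fun i hi => by
      simp only [Finset.mem_filter] at hi; simp [ee, hi.2])
  have h2 : ∏ i ∈ Finset.univ.filter (fun i => ¬ T i = 0), ee (T i * 1) = (-1 : ℤ) ^ w T :=
    by
    rw [Finset.prod_congr rfl (fun i hi => by
      simp only [Finset.mem_filter] at hi
      show ee (T i * 1) = -1
      simp [ee, hi.2]), Finset.prod_const]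
    rfl
  rw [h1, h2, one_mul]

lemma w_eq_zero_iff (T : Fin n → ZMod 2) : w T = 0 ↔ T = 0 := by
  rw [w, Finset.card_eq_zero, Finset.filter_eq_empty_iff]
  simp only [mem_univ, not_not, forall_const]
  constructor
  · intro h; exact funext h
  · intro h i; rw [h]; rfl

section Main

variable (F : (Fin n → ZMod 2) → ℤ) (k : ℤ)
  (hF : ∀ x : Fin n → ZMod 2,
    ∑ y ∈ Finset.univ.filter (fun y => hammingDist x y ≤ 1), F y = k)

/-- the Fourier coefficient -/
def S (T : Fin n → ZMod 2) : ℤ := ∑ z, χ T z * F z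

include hF in
lemma master (T : Fin n → ZMod 2) :
    S F T * (1 + (n : ℤ) - 2 * w T) = k * (if T = 0 then (2 : ℤ) ^ n else 0) := by
  have key : ∑ x, χ T x * k = S F T * (1 + ((n : ℤ) - 2 * w T)) := by
    calc ∑ x, χ T x * k
        = ∑ x, χ T x * (F x + ∑ i, F (x + Pi.single i 1)) := by
          refine Finset.sum_congr rfl (fun x _ => ?_)
          rw [← sum_nbhd F x, hF x]
      _ = ∑ x, (χ T x * F x + ∑ i, χ T x * F (x + Pi.single i 1)) := by
          refine Finset.sum_congr rfl (fun x _ => ?_)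
          rw [mul_add, Finset.mul_sum]
      _ = S F T + ∑ x, ∑ i, χ T x * F (x + Pi.single i 1) := by
          rw [Finset.sum_add_distrib]; rfl
      _ = S F T + ∑ i, ∑ x, χ T x * F (x + Pi.single i 1) := by
          rw [Finset.sum_comm]
      _ = S F T + ∑ i : Fin n, ee (T i) * S F T := by
          congr 1
          refine Finset.sum_congr rfl (fun i _ => ?_)
          rw [S, Finset.mul_sum]
          refine Fintype.sum_equiv (Equiv.addRight (Pi.single i 1)) _ _ (fun z => ?_)
          simp only [Equiv.coe_addRight]
          rw [χ_add, χ_single]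
          have h2 : ee (T i) * ee (T i) = 1 := ee_sq (T i)
          linear_combination (-(χ T z * F (z + Pi.single i 1))) * h2
      _ = S F T * (1 + ((n : ℤ) - 2 * w T)) := by
          rw [← Finset.sum_mul, sum_ee_eq]; ring
  have left : ∑ x, χ T x * k = k * (if T = 0 then (2 : ℤ) ^ n else 0) := by
    have hsw : ∑ x, χ T x = if T = 0 then (2 : ℤ) ^ n else 0 := by
      rw [Finset.sum_congr rfl (fun x _ => χ_comm T x), sum_χ T]
    rw [← Finset.sum_mul, hsw, mul_comm]
  have hcomb := key.symm.trans left
  linear_combination hcomb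

lemma zmod2_add_eq_zero (a b : ZMod 2) : a + b = 0 ↔ a = b := by revert a b; decide

lemma pi_add_eq_zero (z y : Fin n → ZMod 2) : z + y = 0 ↔ z = y := by
  constructor
  · intro h; funext i
    exact (zmod2_add_eq_zero _ _).mp (congrFun h i)
  · rintro rfl; funext i; exact (zmod2_add_eq_zero _ _).mpr rfl

lemma parseval (g : (Fin n → ZMod 2) → ℤ) :
    ∑ T, (∑ z, χ T z * g z) ^ 2 = 2 ^ n * ∑ z, g z ^ 2 := by
  calc ∑ T, (∑ z, χ T z * g z) ^ 2
      = ∑ T, ∑ z, ∑ y, χ T (z + y) * (g z * g y) := by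
        refine Finset.sum_congr rfl fun T _ => ?_
        rw [sq, Finset.sum_mul_sum]
        exact Finset.sum_congr rfl fun z _ => Finset.sum_congr rfl fun y _ => by
          rw [χ_add]; ring
    _ = ∑ z, ∑ y, ∑ T, χ T (z + y) * (g z * g y) := by
        rw [Finset.sum_comm]
        exact Finset.sum_congr rfl fun z _ => Finset.sum_comm
    _ = ∑ z, ∑ y, (if z = y then (2:ℤ)^n else 0) * (g z * g y) := by
        refine Finset.sum_congr rfl fun z _ => Finset.sum_congr rfl fun y _ => ?_
        rw [← Finset.sum_mul, sum_χ]
        simp only [pi_add_eq_zero]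
    _ = ∑ z, (2:ℤ)^n * (g z * g z) := by
        refine Finset.sum_congr rfl fun z _ => ?_
        simp [ite_mul, Finset.sum_ite_eq]
    _ = 2 ^ n * ∑ z, g z ^ 2 := by
        rw [Finset.mul_sum]
        exact Finset.sum_congr rfl fun z _ => by ring

include hF in
lemma even_case (h2 : n % 2 = 0) (hn : 1 ≤ n)
    (hsum : 2 * (∑ z, F z) = 2 ^ n * ((2:ℤ) ^ n + 1)) : False := by
  have hm := master F k hF 0
  have hw0 : w (0 : Fin n → ZMod 2) = 0 := (w_eq_zero_iff 0).mpr rfl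
  rw [if_pos rfl, hw0] at hm
  have hS0 : S F (0 : Fin n → ZMod 2) = ∑ z, F z := by
    rw [S]
    exact Finset.sum_congr rfl fun z _ => by rw [χ_zero_left, one_mul]
  rw [hS0] at hm
  push_cast at hm
  -- hm : (∑ z, F z) * (1 + n - 0) = k * 2^n
  have hm' : (∑ z, F z) * (1 + (n : ℤ)) = k * 2 ^ n := by linear_combination hm
  have key : ((2:ℤ) ^ n + 1) * (1 + (n : ℤ)) = 2 * k := by
    have h2n : (2:ℤ) ^ n ≠ 0 := pow_ne_zero n two_ne_zero
    apply mul_left_cancel₀ h2n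
    calc (2:ℤ)^n * (((2:ℤ)^n + 1) * (1 + n)) = (2 * ∑ z, F z) * (1 + (n:ℤ)) := by
          rw [hsum]; ring
      _ = 2 * ((∑ z, F z) * (1 + (n:ℤ))) := by ring
      _ = 2 * (k * 2 ^ n) := by rw [hm']
      _ = 2 ^ n * (2 * k) := by ring
  obtain ⟨m, hmn⟩ : ∃ m, n = 2 * m := ⟨n / 2, by omega⟩
  obtain ⟨c, hc⟩ : ∃ c, (2:ℤ) ^ n = 2 * c := ⟨2 ^ (n - 1), by
    rw [← pow_succ', Nat.sub_add_cancel hn]⟩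
  have hodd : Odd (((2:ℤ) ^ n + 1) * (1 + (n : ℤ))) := by
    refine Odd.mul ⟨c, by rw [hc]⟩ ⟨(m : ℤ), by rw [hmn]; push_cast; ring⟩
  rw [key] at hodd
  exact (Int.not_odd_iff_even.mpr ⟨k, two_mul k⟩) hodd

include hF in
lemma three_case (h3 : n % 4 = 3) (hn : 1 ≤ n)
    (hinj : Function.Injective F) : False := by
  set a : Fin n → ZMod 2 := fun _ => 1 with ha
  set g : (Fin n → ZMod 2) → ℤ := fun z => F z - F (z + a) with hg
  have hH : ∀ T : Fin n → ZMod 2, ∑ z, χ T z * g z = 0 := by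
    intro T
    have hre : ∑ z, χ T z * F (z + a) = (-1 : ℤ) ^ (w T) * S F T := by
      rw [S, Finset.mul_sum]
      refine Fintype.sum_equiv (Equiv.addRight a) _ _ (fun z => ?_)
      simp only [Equiv.coe_addRight]
      rw [χ_add, χ_allOnes]
      have hsq : (-1 : ℤ) ^ (w T) * (-1 : ℤ) ^ (w T) = 1 := by
        rw [← pow_add]
        exact Even.neg_one_pow ⟨w T, rfl⟩
      linear_combination (-(χ T z * F (z + a))) * hsq
    have hsplit : ∑ z, χ T z * g z = S F T * (1 - (-1 : ℤ) ^ (w T)) := by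
      rw [hg]
      simp only [mul_sub]
      rw [Finset.sum_sub_distrib, hre, S]
      ring
    rw [hsplit]
    rcases Nat.even_or_odd (w T) with he | ho
    · rw [he.neg_one_pow]; ring
    · have hT0 : T ≠ 0 := by
        intro hc
        rw [hc, (w_eq_zero_iff (0 : Fin n → ZMod 2)).mpr rfl] at ho
        exact (Nat.not_odd_iff_even.mpr Even.zero) ho
      have hm := master F k hF T
      rw [if_neg hT0, mul_zero] at hm
      have hne : (1 + (n : ℤ) - 2 * w T) ≠ 0 := by
        obtain ⟨t, ht⟩ := ho
        intro hc
        have : (n : ℤ) = 4 * t + 1 := by rw [ht] at hc; push_cast at hc ⊢; linarith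
        omega
      have : S F T = 0 := by
        rcases mul_eq_zero.mp hm with h | h
        · exact h
        · exact absurd h hne
      rw [this]; ring
  have hpar := parseval (n := n) g
  rw [Finset.sum_congr rfl (fun T _ => by rw [hH T]; norm_num : ∀ T ∈ Finset.univ,
    (∑ z, χ T z * g z) ^ 2 = 0)] at hpar
  rw [Finset.sum_const, smul_zero] at hpar
  have hgsum : ∑ z, g z ^ 2 = 0 := by
    have h2n : (2 : ℤ) ^ n ≠ 0 := pow_ne_zero n two_ne_zero
    rcases mul_eq_zero.mp hpar.symm with hcase | hcase
    · exact absurd hcase h2n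
    · exact hcase
  have hgz : ∀ z, g z = 0 := by
    intro z
    have h0 := (Finset.sum_eq_zero_iff_of_nonneg (fun y _ => sq_nonneg (g y))).mp hgsum z (Finset.mem_univ z)
    exact pow_eq_zero_iff (two_ne_zero) |>.mp h0
  have hz0 := hgz 0
  rw [hg] at hz0
  simp only [sub_eq_zero] at hz0
  have := hinj hz0
  have ha0 := congrFun this.symm ⟨0, hn⟩
  simp only [Pi.add_apply, Pi.zero_apply, ha] at ha0
  rw [zero_add] at ha0
  exact one_ne_zero ha0

end Main
end Stmt8Aux

open Stmt8Aux in
/-- If the hypercube `Qₙ` admits a closed distance magic labeling, then `n ≡ 1 (mod 4)`. -/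
theorem stmt_8 (n : ℕ) (hn : 1 ≤ n)
    (h : ∃ (f : (Fin n → ZMod 2) ≃ Fin (2 ^ n)) (k : ℕ),
      ∀ x : Fin n → ZMod 2,
        ∑ y ∈ Finset.univ.filter (fun y => hammingDist x y ≤ 1), ((f y : ℕ) + 1) = k) :
    n % 4 = 1 := by
  obtain ⟨f, k, hk⟩ := h
  set F : (Fin n → ZMod 2) → ℤ := fun y => ((f y : ℕ) : ℤ) + 1 with hFdef
  have hF : ∀ x : Fin n → ZMod 2,
      ∑ y ∈ Finset.univ.filter (fun y => hammingDist x y ≤ 1), F y = (k : ℤ) := by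
    intro x
    rw [hFdef]
    have := congrArg (Nat.cast (R := ℤ)) (hk x)
    push_cast at this
    exact this
  have hinj : Function.Injective F := by
    intro y z hyz
    simp only [hFdef, add_left_inj, Nat.cast_inj] at hyz
    exact f.injective (Fin.val_injective hyz)
  have hsum : 2 * (∑ z, F z) = 2 ^ n * ((2 : ℤ) ^ n + 1) := by
    have h1 : ∑ z, F z = ∑ j : Fin (2 ^ n), (((j : ℕ) : ℤ) + 1) :=
      Equiv.sum_comp f (fun j => ((j : ℕ) : ℤ) + 1)
    have h2 : ∑ j : Fin (2 ^ n), ((j : ℕ) + 1) = (∑ i ∈ Finset.range (2 ^ n), i) + 2 ^ n := by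
      rw [Fin.sum_univ_eq_sum_range (fun i => i + 1)]
      rw [Finset.sum_add_distrib, Finset.sum_const, Finset.card_range, smul_eq_mul, mul_one]
    have hm1 : 1 ≤ 2 ^ n := Nat.one_le_two_pow
    have h3 : (∑ i ∈ Finset.range (2 ^ n), (i : ℤ)) * 2 = (2:ℤ) ^ n * ((2:ℤ) ^ n - 1) := by
      have hc := congrArg (Nat.cast (R := ℤ)) (Finset.sum_range_id_mul_two (2 ^ n))
      push_cast [Nat.cast_sub hm1] at hc
      exact_mod_cast hc
    have h5 : ∑ z, F z = ((∑ j : Fin (2 ^ n), ((j : ℕ) + 1) : ℕ) : ℤ) := by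
      rw [h1]; push_cast; rfl
    rw [h5, h2]
    push_cast
    linear_combination h3
  rcases (by omega : n % 4 = 0 ∨ n % 4 = 1 ∨ n % 4 = 2 ∨ n % 4 = 3) with hc | hc | hc | hc
  · exact (even_case F (k : ℤ) hF (by omega) hn hsum).elim
  · exact hc
  · exact (even_case F (k : ℤ) hF (by omega) hn hsum).elim
  · exact (three_case F (k : ℤ) hF hc hn hinj).elim
end

section
/- There exists a closed distance magic labeling of the hypercube Qₙ if and only if n ≡ 1 (mod 4). -/
open Finset

namespace CDM

variable {n : ℕ}

/-- character -/
def chi (s x : Fin n → ZMod 2) : ℤ := ∏ i, (-1 : ℤ) ^ (s i * x i).val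

lemma chi_comm (s x : Fin n → ZMod 2) : chi s x = chi x s := by
  unfold chi; congr 1; funext i; rw [mul_comm]

lemma chi_add (s x y : Fin n → ZMod 2) : chi s (x + y) = chi s x * chi s y := by
  have key : ∀ a b c : ZMod 2, (-1 : ℤ) ^ (a * (b + c)).val
      = (-1 : ℤ) ^ (a * b).val * (-1 : ℤ) ^ (a * c).val := by decide
  unfold chi
  rw [← Finset.prod_mul_distrib]
  exact Finset.prod_congr rfl fun i _ => key (s i) (x i) (y i)

lemma chi_zero_left (x : Fin n → ZMod 2) : chi 0 x = 1 := by
  unfold chi; simp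

lemma sum_chi (s : Fin n → ZMod 2) :
    ∑ x : Fin n → ZMod 2, chi s x = if s = 0 then (2 : ℤ) ^ n else 0 := by
  have h1 : ∑ x : Fin n → ZMod 2, chi s x
      = ∏ i, ∑ t : ZMod 2, (-1 : ℤ) ^ (s i * t).val := by
    rw [Fintype.prod_sum]; rfl
  have h2 : ∀ a : ZMod 2, (∑ t : ZMod 2, (-1 : ℤ) ^ (a * t).val)
      = if a = 0 then 2 else 0 := by decide
  rw [h1]
  by_cases hs : s = 0
  · subst hs; simp [h2]
  · rw [if_neg hs]
    obtain ⟨i, hi⟩ : ∃ i, s i ≠ 0 := by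
      by_contra h; push_neg at h; exact hs (funext h)
    exact Finset.prod_eq_zero (Finset.mem_univ i) (by rw [h2, if_neg hi])


/-- the closed ball of radius 1 -/
lemma ball_eq (x : Fin n → ZMod 2) :
    Finset.univ.filter (fun y => hammingDist x y ≤ 1)
      = insert x ((Finset.univ : Finset (Fin n)).image (fun j => x + Pi.single j 1)) := by
  ext y
  simp only [Finset.mem_filter, Finset.mem_univ, true_and, Finset.mem_insert,
    Finset.mem_image]
  constructor
  · intro h
    rcases Nat.le_one_iff_eq_zero_or_eq_one.mp h with hd | hd
    · left; exact (hammingDist_eq_zero.mp hd).symm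
    · right
      have hne : x ≠ y := by
        intro he; rw [he, hammingDist_self] at hd; omega
      obtain ⟨j, hj⟩ : ∃ j, x j ≠ y j := by
        by_contra hc; push_neg at hc; exact hne (funext hc)
      refine ⟨j, ?_⟩
      funext i
      rcases eq_or_ne i j with rfl | hij
      · simp only [Pi.add_apply, Pi.single_eq_same]
        revert hj; generalize x i = a; generalize y i = b; revert a b; decide
      · simp only [Pi.add_apply, Pi.single_eq_of_ne hij, add_zero]
        by_contra hne2
        have h2 : 2 ≤ hammingDist x y := by
          have : ({i, j} : Finset (Fin n)) ⊆ Finset.univ.filter (fun t => x t ≠ y t) := by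
            intro t ht
            simp only [Finset.mem_insert, Finset.mem_singleton] at ht
            rcases ht with rfl | rfl
            · simpa using hne2
            · simpa using hj
          calc 2 = ({i, j} : Finset (Fin n)).card := by rw [Finset.card_insert_of_notMem (by simp [hij]), Finset.card_singleton]
          _ ≤ _ := Finset.card_le_card this
        rw [hd] at h2; omega
  · rintro (rfl | ⟨j, rfl⟩)
    · rw [hammingDist_self]; omega
    · have : hammingDist x (x + Pi.single j 1) ≤ ({j} : Finset (Fin n)).card := by
        apply Finset.card_le_card
        intro t ht
        simp only [Finset.mem_filter, Finset.mem_univ, true_and, Pi.add_apply] at ht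
        simp only [Finset.mem_singleton]
        by_contra htj
        rw [Pi.single_eq_of_ne htj, add_zero] at ht
        exact ht rfl
      simpa using this

lemma single_ne (x : Fin n → ZMod 2) (j : Fin n) : x + Pi.single j 1 ≠ x := by
  intro h
  have := congrFun h j
  simp only [Pi.add_apply, Pi.single_eq_same] at this
  revert this; generalize x j = a; revert a; decide

lemma single_inj : Function.Injective (fun j : Fin n => Pi.single j (1 : ZMod 2)) := by
  intro j j' h
  by_contra hne
  have := congrFun h j
  simp only [Pi.single_eq_same, Pi.single_eq_of_ne hne] at this
  exact one_ne_zero this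

lemma ball_sum {M : Type*} [AddCommMonoid M] (x : Fin n → ZMod 2) (F : (Fin n → ZMod 2) → M) :
    ∑ y ∈ Finset.univ.filter (fun y => hammingDist x y ≤ 1), F y
      = F x + ∑ j : Fin n, F (x + Pi.single j 1) := by
  rw [ball_eq]
  have hx : x ∉ (Finset.univ : Finset (Fin n)).image (fun j => x + Pi.single j 1) := by
    simp only [Finset.mem_image, Finset.mem_univ, true_and]
    rintro ⟨j, hj⟩
    exact single_ne x j hj
  rw [Finset.sum_insert hx, Finset.sum_image (fun j _ j' _ h => single_inj (add_left_cancel h))]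


def wt (s : Fin n → ZMod 2) : ℕ := (Finset.univ.filter fun i => s i = 1).card

lemma chi_single (s : Fin n → ZMod 2) (j : Fin n) :
    chi s (Pi.single j 1) = (-1 : ℤ) ^ (s j).val := by
  unfold chi
  rw [Finset.prod_eq_single j]
  · rw [Pi.single_eq_same, mul_one]
  · intro i _ hij
    rw [Pi.single_eq_of_ne hij, mul_zero]; rfl
  · intro h; exact absurd (Finset.mem_univ j) h

lemma sum_neg_one_pow (s : Fin n → ZMod 2) :
    ∑ j : Fin n, (-1 : ℤ) ^ (s j).val = (n : ℤ) - 2 * (wt s : ℤ) := by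
  have key : ∀ a : ZMod 2, (-1 : ℤ) ^ a.val = 1 - 2 * (if a = 1 then 1 else 0) := by decide
  simp_rw [key]
  rw [Finset.sum_sub_distrib, ← Finset.mul_sum, Finset.sum_boole, Finset.sum_const]
  simp [wt]

lemma sum_chi_ball (s x : Fin n → ZMod 2) :
    ∑ y ∈ Finset.univ.filter (fun y => hammingDist x y ≤ 1), chi s y
      = ((n : ℤ) + 1 - 2 * (wt s : ℤ)) * chi s x := by
  rw [ball_sum]
  simp_rw [chi_add, chi_single]
  rw [← Finset.mul_sum, sum_neg_one_pow]
  ring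

/-- eigenvalue relation -/
lemma eigen (u : (Fin n → ZMod 2) → ℤ) (c : ℤ)
    (hu : ∀ x, ∑ y ∈ Finset.univ.filter (fun y => hammingDist x y ≤ 1), u y = c)
    (s : Fin n → ZMod 2) (hs : s ≠ 0) :
    ((n : ℤ) + 1 - 2 * (wt s : ℤ)) * (∑ x, chi s x * u x) = 0 := by
  have swap : ∑ x, chi s x * (∑ y ∈ Finset.univ.filter (fun y => hammingDist x y ≤ 1), u y)
      = ∑ y, (∑ x ∈ Finset.univ.filter (fun x => hammingDist y x ≤ 1), chi s x) * u y := by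
    simp_rw [Finset.mul_sum, Finset.sum_mul, Finset.sum_filter]
    rw [Finset.sum_comm]
    apply Finset.sum_congr rfl; intro y _
    apply Finset.sum_congr rfl; intro x _
    rw [hammingDist_comm]
  have h1 : ∑ x, chi s x * (∑ y ∈ Finset.univ.filter (fun y => hammingDist x y ≤ 1), u y)
      = c * ∑ x, chi s x := by
    simp_rw [hu]; rw [← Finset.sum_mul, mul_comm]
  rw [sum_chi, if_neg hs, mul_zero] at h1
  rw [swap] at h1
  simp_rw [sum_chi_ball] at h1
  calc ((n : ℤ) + 1 - 2 * (wt s : ℤ)) * (∑ x, chi s x * u x)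
      = ∑ y, ((n : ℤ) + 1 - 2 * (wt s : ℤ)) * chi s y * u y := by
        rw [Finset.mul_sum]; apply Finset.sum_congr rfl; intros; ring
    _ = 0 := h1

/-- Fourier inversion -/
lemma inversion (u : (Fin n → ZMod 2) → ℤ) (x : Fin n → ZMod 2) :
    (2 : ℤ) ^ n * u x = ∑ s, chi s x * (∑ y, chi s y * u y) := by
  have : ∑ s, chi s x * (∑ y, chi s y * u y) = ∑ y, (∑ s : Fin n → ZMod 2, chi s (x + y)) * u y := by
    simp_rw [Finset.mul_sum]
    rw [Finset.sum_comm]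
    apply Finset.sum_congr rfl; intro y _
    rw [Finset.sum_mul]
    apply Finset.sum_congr rfl; intro s _
    rw [chi_add]; ring
  rw [this]
  have horth : ∀ z : Fin n → ZMod 2, ∑ s : Fin n → ZMod 2, chi s z
      = if z = 0 then (2 : ℤ) ^ n else 0 := by
    intro z
    simp_rw [chi_comm _ z]
    exact sum_chi z
  simp_rw [horth]
  rw [Finset.sum_eq_single x]
  · have : x + x = 0 := by
      funext i; simp only [Pi.add_apply, Pi.zero_apply]
      generalize x i = a; revert a; decide
    rw [if_pos this, mul_comm]
  · intro y _ hyx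
    rw [if_neg, zero_mul]
    intro h
    apply hyx
    funext i
    have hi := congrFun h i
    simp only [Pi.add_apply, Pi.zero_apply] at hi
    revert hi; generalize x i = a; generalize y i = b; revert a b; decide
  · intro h; exact absurd (Finset.mem_univ x) h


lemma shift_sum (G : (Fin n → ZMod 2) → ℤ) (c x : Fin n → ZMod 2) :
    ∑ y ∈ Finset.univ.filter (fun y => hammingDist x y ≤ 1), G (y + c)
      = ∑ y ∈ Finset.univ.filter (fun y => hammingDist (x + c) y ≤ 1), G y := by
  have hcc : ∀ z : Fin n → ZMod 2, z + c + c = z := by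
    intro z; funext i; simp only [Pi.add_apply]
    generalize z i = a; generalize c i = b; revert a b; decide
  have hd : ∀ y z : Fin n → ZMod 2, hammingDist (y + c) (z + c) = hammingDist y z := by
    intro y z
    simp only [hammingDist]
    congr 1
    ext i
    simp only [Finset.mem_filter, Pi.add_apply, ne_eq, add_left_inj]
  apply Finset.sum_nbij' (fun y => y + c) (fun y => y + c)
  · intro a ha
    simp only [Finset.mem_filter, Finset.mem_univ, true_and] at ha ⊢
    rw [hd]; exact ha
  · intro a ha
    simp only [Finset.mem_filter, Finset.mem_univ, true_and] at ha ⊢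
    rw [← hcc x, hd]; exact ha
  · intro a _; exact hcc a
  · intro a _; exact hcc a
  · intro a _; rfl

lemma sum_reindex_add (F : (Fin n → ZMod 2) → ℤ) (c : Fin n → ZMod 2) :
    ∑ x, F x = ∑ x, F (x + c) := by
  have hcc : ∀ z : Fin n → ZMod 2, z + c + c = z := by
    intro z; funext i; simp only [Pi.add_apply]
    generalize z i = a; generalize c i = b; revert a b; decide
  exact (Fintype.sum_bijective (· + c) ⟨fun a b h => by
    have := congrArg (· + c) h; simpa [hcc] using this, fun b => ⟨b + c, hcc b⟩⟩ _ _
    (fun x => rfl)).symm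

lemma chi_allones (s : Fin n → ZMod 2) :
    chi s (fun _ => 1) = (-1 : ℤ) ^ (wt s) := by
  unfold chi
  have key : ∀ a : ZMod 2, (a * 1).val = if a = 1 then 1 else 0 := by decide
  simp_rw [Finset.prod_pow_eq_pow_sum, key]
  congr 1
  rw [Finset.sum_boole]
  simp [wt]

lemma necessity (hn : 1 ≤ n) (f : (Fin n → ZMod 2) ≃ Fin (2 ^ n)) (k : ℕ)
    (hf : ∀ x : Fin n → ZMod 2,
      ∑ y ∈ Finset.univ.filter (fun y => hammingDist x y ≤ 1), ((f y : ℕ) + 1) = k) :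
    n % 4 = 1 := by
  set G : (Fin n → ZMod 2) → ℤ := fun x => ((f x : ℕ) : ℤ) + 1 with hGdef
  have hG : ∀ x, ∑ y ∈ Finset.univ.filter (fun y => hammingDist x y ≤ 1), G y = (k : ℤ) := by
    intro x
    have := hf x
    have h2 : ((∑ y ∈ Finset.univ.filter (fun y => hammingDist x y ≤ 1),
        ((f y : ℕ) + 1) : ℕ) : ℤ) = (k : ℤ) := congrArg (fun m : ℕ => (m : ℤ)) this
    rw [Nat.cast_sum] at h2
    simpa [hGdef] using h2
  have hGinj : Function.Injective G := by
    intro a b hab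
    apply f.injective
    have : ((f a : ℕ) : ℤ) = ((f b : ℕ) : ℤ) := by
      simpa [hGdef] using hab
    exact Fin.val_injective (by exact_mod_cast this)
  by_contra hmod
  have hj0 : (⟨0, hn⟩ : Fin n) = ⟨0, hn⟩ := rfl
  rcases Nat.even_or_odd n with he | ho
  · -- n even
    have hcoef : ∀ s : Fin n → ZMod 2, ((n : ℤ) + 1 - 2 * (wt s : ℤ)) ≠ 0 := by
      intro s
      obtain ⟨m, hm⟩ := he
      omega
    have hhat : ∀ s : Fin n → ZMod 2, s ≠ 0 → (∑ x, chi s x * G x) = 0 := by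
      intro s hs
      have := eigen G (k : ℤ) hG s hs
      exact (mul_eq_zero.mp this).resolve_left (hcoef s)
    have hconst : ∀ x : Fin n → ZMod 2, (2 : ℤ) ^ n * G x = ∑ y, chi 0 y * G y := by
      intro x
      rw [inversion G x, Finset.sum_eq_single (0 : Fin n → ZMod 2)]
      · rw [chi_zero_left, one_mul]
      · intro s _ hs; rw [hhat s hs, mul_zero]
      · intro h; exact absurd (Finset.mem_univ _) h
    have h1 := hconst 0
    have h2 := hconst (Pi.single ⟨0, hn⟩ 1)
    have hGeq : G 0 = G (Pi.single ⟨0, hn⟩ 1) := by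
      have h3 : (2 : ℤ) ^ n * G 0 = (2 : ℤ) ^ n * G (Pi.single ⟨0, hn⟩ 1) := by rw [h1, h2]
      exact mul_left_cancel₀ (by positivity) h3
    have := hGinj hGeq
    have := congrFun this ⟨0, hn⟩
    simp only [Pi.zero_apply, Pi.single_eq_same] at this
    exact zero_ne_one this
  · -- n odd, so n % 4 = 3
    have h43 : n % 4 = 3 := by
      obtain ⟨m, hm⟩ := ho
      omega
    set c : Fin n → ZMod 2 := fun _ => 1 with hcdef
    set h : (Fin n → ZMod 2) → ℤ := fun x => G x - G (x + c) with hhdef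
    have hh : ∀ x, ∑ y ∈ Finset.univ.filter (fun y => hammingDist x y ≤ 1), h y = 0 := by
      intro x
      simp only [hhdef]
      rw [Finset.sum_sub_distrib, hG, shift_sum, hG, sub_self]
    have hhat : ∀ s : Fin n → ZMod 2, (∑ x, chi s x * h x) = 0 := by
      intro s
      rcases Nat.even_or_odd (wt s) with hwe | hwo
      · -- even weight: use antisymmetry
        have hchic : chi s c = 1 := by
          rw [hcdef, chi_allones, hwe.neg_one_pow]
        simp only [hhdef, mul_sub]
        rw [Finset.sum_sub_distrib]
        have : ∑ x, chi s x * G (x + c) = ∑ x, chi s x * G x := by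
          rw [sum_reindex_add (fun x => chi s x * G (x + c)) c]
          apply Finset.sum_congr rfl
          intro x _
          have hcc : x + c + c = x := by
            funext i; simp only [Pi.add_apply]
            generalize x i = a; generalize c i = b; revert a b; decide
          rw [hcc, chi_add, hchic, mul_one]
        rw [this, sub_self]
      · -- odd weight
        have hs : s ≠ 0 := by
          intro hs0
          rw [hs0] at hwo
          have : wt (0 : Fin n → ZMod 2) = 0 := by simp [wt]
          rw [this] at hwo
          exact (Nat.not_odd_iff_even.mpr Even.zero) hwo
        have hcoef : ((n : ℤ) + 1 - 2 * (wt s : ℤ)) ≠ 0 := by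
          obtain ⟨m, hm⟩ := hwo
          omega
        have := eigen h 0 hh s hs
        exact (mul_eq_zero.mp this).resolve_left hcoef
    have hzero : ∀ x, h x = 0 := by
      intro x
      have := inversion h x
      simp only [hhat, mul_zero, Finset.sum_const_zero] at this
      have h2n : (2 : ℤ) ^ n ≠ 0 := by positivity
      exact (mul_eq_zero.mp this).resolve_left h2n
    have := hzero 0
    simp only [hhdef, sub_eq_zero, zero_add] at this
    have := hGinj this
    have := congrFun this ⟨0, hn⟩
    simp only [Pi.zero_apply, hcdef] at this
    exact zero_ne_one this


/-! ### Construction for `n % 4 = 1` -/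

def gmap (w : ℕ) (x : Fin n → ZMod 2) : Fin n → ZMod 2 := fun i =>
  x i + (if (i : ℕ) < w then ∑ j ∈ Finset.univ.filter (fun j : Fin n => w ≤ (j : ℕ)), x j
         else ∑ j ∈ Finset.univ.filter (fun j : Fin n => (j : ℕ) < w - 1), x j)

lemma card_filter_lt (k : ℕ) (hk : k ≤ n) :
    (Finset.univ.filter (fun j : Fin n => (j : ℕ) < k)).card = k := by
  rw [← Fintype.card_subtype]
  rw [Fintype.card_congr
    (⟨fun j => ⟨j.1.1, j.2⟩, fun i => ⟨⟨i.1, lt_of_lt_of_le i.2 hk⟩, i.2⟩,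
      fun j => by ext; rfl, fun i => by ext; rfl⟩ :
      {j : Fin n // (j : ℕ) < k} ≃ Fin k)]
  exact Fintype.card_fin k

lemma card_filter_ge (k : ℕ) (hk : k ≤ n) :
    (Finset.univ.filter (fun j : Fin n => k ≤ (j : ℕ))).card = n - k := by
  have h : (Finset.univ.filter (fun j : Fin n => k ≤ (j : ℕ)))
      = Finset.univ \ (Finset.univ.filter (fun j : Fin n => (j : ℕ) < k)) := by
    ext j; simp [not_lt]
  rw [h, Finset.card_sdiff_of_subset (Finset.filter_subset _ _), card_filter_lt k hk]
  simp

lemma even_nsmul_zmod2 (e : ℕ) (he : e % 2 = 0) (t : ZMod 2) : e • t = 0 := by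
  obtain ⟨m, hm⟩ : ∃ m, e = 2 * m := ⟨e / 2, by omega⟩
  subst hm
  rw [mul_smul]
  have : ∀ u : ZMod 2, 2 • u = 0 := by decide
  exact this _

variable {w : ℕ}

lemma gmap_invol (hw : n + 1 = 2 * w) (hwodd : w % 2 = 1) :
    Function.Involutive (gmap (n := n) w) := by
  intro x
  have hwn : w ≤ n := by omega
  have hw1n : w - 1 ≤ n := by omega
  have cB : (Finset.univ.filter (fun j : Fin n => w ≤ (j : ℕ))).card = w - 1 := by
    rw [card_filter_ge w hwn]; omega
  have cA : (Finset.univ.filter (fun j : Fin n => (j : ℕ) < w - 1)).card = w - 1 := by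
    rw [card_filter_lt (w - 1) hw1n]
  have hSB : ∑ j ∈ Finset.univ.filter (fun j : Fin n => w ≤ (j : ℕ)), gmap w x j
      = ∑ j ∈ Finset.univ.filter (fun j : Fin n => w ≤ (j : ℕ)), x j := by
    have step : ∀ j ∈ Finset.univ.filter (fun j : Fin n => w ≤ (j : ℕ)),
        gmap w x j = x j + ∑ t ∈ Finset.univ.filter (fun t : Fin n => (t : ℕ) < w - 1), x t := by
      intro j hj
      simp only [Finset.mem_filter, Finset.mem_univ, true_and] at hj
      unfold gmap
      rw [if_neg (by omega)]
    rw [Finset.sum_congr rfl step, Finset.sum_add_distrib, Finset.sum_const, cB,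
      even_nsmul_zmod2 (w - 1) (by omega), add_zero]
  have hSA : ∑ j ∈ Finset.univ.filter (fun j : Fin n => (j : ℕ) < w - 1), gmap w x j
      = ∑ j ∈ Finset.univ.filter (fun j : Fin n => (j : ℕ) < w - 1), x j := by
    have step : ∀ j ∈ Finset.univ.filter (fun j : Fin n => (j : ℕ) < w - 1),
        gmap w x j = x j + ∑ t ∈ Finset.univ.filter (fun t : Fin n => w ≤ (t : ℕ)), x t := by
      intro j hj
      simp only [Finset.mem_filter, Finset.mem_univ, true_and] at hj
      unfold gmap
      rw [if_pos (by omega)]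
    rw [Finset.sum_congr rfl step, Finset.sum_add_distrib, Finset.sum_const, cA,
      even_nsmul_zmod2 (w - 1) (by omega), add_zero]
  funext i
  show gmap w x i + _ = x i
  rw [hSB, hSA]
  unfold gmap
  have habc : ∀ a t : ZMod 2, a + t + t = a := by decide
  by_cases hi : (i : ℕ) < w
  · exact habc _ _
  · exact habc _ _

lemma rowsum (hw : n + 1 = 2 * w) (x : Fin n → ZMod 2) (i : Fin n) :
    (gmap w x i).val + ∑ j : Fin n, (gmap w (x + Pi.single j 1) i).val = w := by
  have hw1 : 1 ≤ w := by omega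
  have key : ∀ S : Finset (Fin n), S.card = w - 1 → i ∉ S →
      (∀ j : Fin n, gmap w (x + Pi.single j 1) i
        = gmap w x i + ((Pi.single j 1 : Fin n → ZMod 2) i + if j ∈ S then 1 else 0)) →
      (gmap w x i).val + ∑ j : Fin n, (gmap w (x + Pi.single j 1) i).val = w := by
    intro S hcard hiS hM
    set b := gmap w x i with hb
    set T : Finset (Fin n) := insert i S with hT
    have hcT : T.card = w := by
      rw [hT, Finset.card_insert_of_notMem hiS, hcard]; omega
    have hM2 : ∀ j : Fin n, gmap w (x + Pi.single j 1) i = b + if j ∈ T then 1 else 0 := by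
      intro j
      rw [hM j]
      congr 1
      rcases eq_or_ne j i with rfl | hji
      · rw [if_neg hiS, if_pos (Finset.mem_insert_self _ _), Pi.single_eq_same, add_zero]
      · rw [Pi.single_eq_of_ne (Ne.symm hji), zero_add]
        congr 1
        simp [hT, Finset.mem_insert, hji]
    have hsum : ∑ j : Fin n, (gmap w (x + Pi.single j 1) i).val
        = ∑ j : Fin n, (if j ∈ T then (b + 1).val else b.val) := by
      apply Finset.sum_congr rfl
      intro j _
      rw [hM2 j]
      split_ifs with hj
      · rfl
      · rw [add_zero]
    rw [hsum, Finset.sum_ite, Finset.sum_const, Finset.sum_const]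
    have hfT : Finset.univ.filter (fun j => j ∈ T) = T := by
      ext j; simp
    have hfTc : (Finset.univ.filter (fun j => j ∉ T)).card = n - w := by
      have : (Finset.univ.filter (fun j => j ∉ T)) = Finset.univ \ T := by
        ext j; simp
      rw [this, Finset.card_sdiff_of_subset (Finset.subset_univ T), hcT]
      simp
    rw [hfT, hcT, hfTc]
    have hbv : b.val = 0 ∧ (b + 1).val = 1 ∨ b.val = 1 ∧ (b + 1).val = 0 := by
      have : ∀ c : ZMod 2, c.val = 0 ∧ (c + 1).val = 1 ∨ c.val = 1 ∧ (c + 1).val = 0 := by decide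
      exact this b
    simp only [smul_eq_mul]
    rcases hbv with ⟨h1, h2⟩ | ⟨h1, h2⟩ <;> rw [h1, h2] <;> omega
  by_cases hi : (i : ℕ) < w
  · apply key (Finset.univ.filter (fun j : Fin n => w ≤ (j : ℕ)))
    · rw [card_filter_ge w (by omega)]; omega
    · simp only [Finset.mem_filter, Finset.mem_univ, true_and]; omega
    · intro j
      unfold gmap
      rw [if_pos hi, if_pos hi]
      simp only [Pi.add_apply]
      rw [Finset.sum_add_distrib, Finset.sum_pi_single']
      ring
  · apply key (Finset.univ.filter (fun j : Fin n => (j : ℕ) < w - 1))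
    · rw [card_filter_lt (w - 1) (by omega)]
    · simp only [Finset.mem_filter, Finset.mem_univ, true_and]; omega
    · intro j
      unfold gmap
      rw [if_neg hi, if_neg hi]
      simp only [Pi.add_apply]
      rw [Finset.sum_add_distrib, Finset.sum_pi_single']
      ring

lemma sum_two_pow (m : ℕ) : ∑ i ∈ Finset.range m, 2 ^ i = 2 ^ m - 1 := by
  induction m with
  | zero => simp
  | succ m ih =>
    rw [Finset.sum_range_succ, ih]
    have : 1 ≤ 2 ^ m := Nat.one_le_two_pow
    omega

lemma sufficiency (hn4 : n % 4 = 1) :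
    ∃ (f : (Fin n → ZMod 2) ≃ Fin (2 ^ n)) (k : ℕ),
      ∀ x : Fin n → ZMod 2,
        ∑ y ∈ Finset.univ.filter (fun y => hammingDist x y ≤ 1), ((f y : ℕ) + 1) = k := by
  set w := (n + 1) / 2 with hwdef
  have hw : n + 1 = 2 * w := by omega
  have hwodd : w % 2 = 1 := by omega
  let bitE : (Fin n → ZMod 2) ≃ Fin (2 ^ n) := finFunctionFinEquiv
  refine ⟨(Function.Involutive.toPerm _ (gmap_invol hw hwodd)).trans bitE,
    w * (2 ^ n - 1) + (n + 1), ?_⟩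
  intro x
  have hval : ∀ y : Fin n → ZMod 2,
      (((Function.Involutive.toPerm _ (gmap_invol hw hwodd)).trans bitE) y : ℕ)
        = ∑ i : Fin n, (gmap w y i).val * 2 ^ (i : ℕ) := by
    intro y
    show ((bitE (gmap w y) : Fin (2 ^ n)) : ℕ) = _
    exact finFunctionFinEquiv_apply (gmap w y)
  rw [ball_sum]
  simp_rw [hval]
  rw [Finset.sum_add_distrib, Finset.sum_const, Finset.card_univ, Fintype.card_fin,
    smul_eq_mul, mul_one, Finset.sum_comm]
  simp_rw [← Finset.sum_mul]
  have hmain : ∑ i : Fin n, (gmap w x i).val * 2 ^ (i : ℕ)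
      + ∑ i : Fin n, (∑ j : Fin n, (gmap w (x + Pi.single j 1) i).val) * 2 ^ (i : ℕ)
      = w * (2 ^ n - 1) := by
    rw [← Finset.sum_add_distrib]
    have : ∀ i : Fin n, (gmap w x i).val * 2 ^ (i : ℕ)
        + (∑ j : Fin n, (gmap w (x + Pi.single j 1) i).val) * 2 ^ (i : ℕ)
        = w * 2 ^ (i : ℕ) := by
      intro i
      rw [← Nat.add_mul, rowsum hw x i]
    rw [Finset.sum_congr rfl (fun i _ => this i), ← Finset.mul_sum]
    congr 1
    rw [Fin.sum_univ_eq_sum_range (fun i => 2 ^ i), sum_two_pow]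
  omega

end CDM

/-- The hypercube `Qₙ` admits a closed distance magic labeling iff `n ≡ 1 (mod 4)`. -/
theorem stmt_9 (n : ℕ) (hn : 1 ≤ n) :
    (∃ (f : (Fin n → ZMod 2) ≃ Fin (2 ^ n)) (k : ℕ),
      ∀ x : Fin n → ZMod 2,
        ∑ y ∈ Finset.univ.filter (fun y => hammingDist x y ≤ 1), ((f y : ℕ) + 1) = k)
      ↔ n % 4 = 1 := by
  constructor
  · rintro ⟨f, k, hf⟩
    exact CDM.necessity hn f k hf
  · intro h4
    exact CDM.sufficiency h4
end

section
/- Let n be odd, and let A₀, A₁, ..., Aₙ be the distance matrices of the hypercube Qₙ (so (A_i)_{uv} = 1 iff the Hamming distance between u and v is i). Then for every i with 0 ≤ 2i+1 ≤ n, the kernel of A₀ + A₁ is contained in the kernel of A_{2i} + A_{2i+1}. -/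
/-- The `i`-th distance matrix of the hypercube `Qₙ` (over ℝ). -/
noncomputable def distMatrix (n i : ℕ) :
    Matrix (Fin n → ZMod 2) (Fin n → ZMod 2) ℝ :=
  fun u v => if hammingDist u v = i then 1 else 0

section Aux

variable {n : ℕ}

lemma zmod2_ne_add_one : ∀ a b : ZMod 2, (a ≠ b + 1) ↔ a = b := by decide

lemma zmod2_ne_iff : ∀ a b : ZMod 2, a ≠ b ↔ a = b + 1 := by decide

lemma dist_flip (u w : Fin n → ZMod 2) (k : Fin n) :
    hammingDist u (w + Pi.single k 1) =
      if u k = w k then hammingDist u w + 1 else hammingDist u w - 1 := by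
  set w' : Fin n → ZMod 2 := w + Pi.single k 1 with hw'
  have happ : ∀ l, w' l = if l = k then w l + 1 else w l := by
    intro l
    rcases eq_or_ne l k with rfl | hl
    · simp [hw', Pi.single_eq_same]
    · simp [hw', Pi.single_eq_of_ne hl, hl]
  unfold hammingDist
  have hfil : (Finset.univ.filter fun l => u l ≠ w' l) =
      if u k = w k then insert k (Finset.univ.filter fun l => u l ≠ w l)
      else (Finset.univ.filter fun l => u l ≠ w l).erase k := by
    split_ifs with h
    · ext l
      rcases eq_or_ne l k with rfl | hl
      · simp [happ, zmod2_ne_add_one, h]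
      · simp [happ, hl]
    · ext l
      rcases eq_or_ne l k with rfl | hl
      · simp [happ, zmod2_ne_add_one, h]
      · simp [happ, hl]
  rw [show ({i | u i ≠ w' i} : Finset (Fin n)) = _ from hfil]
  split_ifs with h
  · rw [Finset.card_insert_of_notMem (by simp [h])]
  · rw [Finset.card_erase_of_mem (by simp [h])]

lemma count_flip (u w : Fin n → ZMod 2) (j : ℕ) (hj : 1 ≤ j) :
    (Finset.univ.filter fun k => hammingDist u (w + Pi.single k 1) = j).card
      = (if hammingDist u w + 1 = j then n + 1 - j else 0)
      + (if hammingDist u w = j + 1 then j + 1 else 0) := by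
  set d := hammingDist u w with hd
  have hdn : d ≤ n := by
    simpa using (hammingDist_le_card_fintype : hammingDist u w ≤ Fintype.card (Fin n))
  have hcond : ∀ k : Fin n, hammingDist u (w + Pi.single k 1) = j ↔
      (if u k = w k then d + 1 = j else d - 1 = j) := by
    intro k
    rw [dist_flip]
    split_ifs <;> tauto
  have hS : (Finset.univ.filter fun l : Fin n => u l ≠ w l).card = d := rfl
  have hScompl : (Finset.univ.filter fun l : Fin n => u l = w l).card = n - d := by
    have := Finset.card_filter_add_card_filter_not
      (s := (Finset.univ : Finset (Fin n))) (p := fun l => u l = w l)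
    simp only [Finset.card_univ, Fintype.card_fin] at this
    have h2 : (Finset.univ.filter fun l : Fin n => ¬ u l = w l).card = d := hS
    omega
  rcases eq_or_ne (d + 1) j with h1 | h1
  · have h2 : d ≠ j + 1 := by omega
    have heq : (Finset.univ.filter fun k => hammingDist u (w + Pi.single k 1) = j)
        = Finset.univ.filter fun k : Fin n => u k = w k := by
      ext k
      simp only [Finset.mem_filter, Finset.mem_univ, true_and, hcond]
      split_ifs with h
      · tauto
      · constructor
        · intro hdj; omega
        · tauto
    rw [heq, hScompl, if_pos h1, if_neg h2]
    omega
  · rcases eq_or_ne d (j + 1) with h2 | h2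
    · have heq : (Finset.univ.filter fun k => hammingDist u (w + Pi.single k 1) = j)
          = Finset.univ.filter fun k : Fin n => u k ≠ w k := by
        ext k
        simp only [Finset.mem_filter, Finset.mem_univ, true_and, hcond]
        split_ifs with h
        · constructor
          · intro hdj; omega
          · tauto
        · constructor
          · intro _; exact h
          · intro _; omega
      rw [heq, hS, if_neg h1, if_pos h2]
      omega
    · have heq : (Finset.univ.filter fun k => hammingDist u (w + Pi.single k 1) = j)
          = (∅ : Finset (Fin n)) := by
        ext k
        simp only [Finset.mem_filter, Finset.mem_univ, true_and, hcond,
          Finset.notMem_empty, iff_false]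
        split_ifs with h
        · omega
        · intro hdj; omega
      rw [heq, if_neg h1, if_neg h2]
      simp

lemma dist_one_iff (v w : Fin n → ZMod 2) :
    hammingDist v w = 1 ↔ ∃ k, w = v + Pi.single k 1 := by
  constructor
  · intro h
    have h' : (Finset.univ.filter fun i => v i ≠ w i).card = 1 := h
    obtain ⟨k, hk⟩ := Finset.card_eq_one.mp h'
    have hmem : ∀ l : Fin n, v l ≠ w l ↔ l = k := by
      intro l
      constructor
      · intro hl
        have hin : l ∈ Finset.univ.filter fun i => v i ≠ w i := by simp [hl]
        rw [hk] at hin; simpa using hin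
      · rintro rfl
        have hin : l ∈ ({l} : Finset (Fin n)) := Finset.mem_singleton_self l
        rw [← hk] at hin; simpa using hin
    refine ⟨k, funext fun l => ?_⟩
    rcases eq_or_ne l k with rfl | hl
    · have hne : v l ≠ w l := (hmem l).mpr rfl
      have hww : w l = v l + 1 := (zmod2_ne_iff (w l) (v l)).mp (Ne.symm hne)
      simpa [Pi.single_eq_same] using hww
    · have heq : v l = w l := by
        by_contra hc
        exact hl ((hmem l).mp hc)
      simp [Pi.single_eq_of_ne hl, ← heq]
  · rintro ⟨k, rfl⟩
    rw [dist_flip]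
    simp [hammingDist_self]

lemma single_inj : Function.Injective (fun k : Fin n => Pi.single k (1 : ZMod 2)) := by
  intro k k' h
  by_contra hne
  have := congrFun h k
  simp [Pi.single_eq_same, Pi.single_eq_of_ne hne] at this

lemma sum_dist_one (v : Fin n → ZMod 2) (f : (Fin n → ZMod 2) → ℝ) :
    ∑ w, (if hammingDist v w = 1 then f w else 0)
      = ∑ k, f (v + Pi.single k 1) := by
  rw [Finset.sum_ite, Finset.sum_const_zero, add_zero]
  have himg : (Finset.univ.filter fun w => hammingDist v w = 1)
      = Finset.univ.image fun k : Fin n => v + Pi.single k 1 := by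
    ext w
    simp only [Finset.mem_filter, Finset.mem_univ, true_and, Finset.mem_image]
    rw [dist_one_iff]
    constructor
    · rintro ⟨k, rfl⟩; exact ⟨k, rfl⟩
    · rintro ⟨k, rfl⟩; exact ⟨k, rfl⟩
  rw [himg, Finset.sum_image]
  intro k _ k' _ h
  exact single_inj (by simpa using add_left_cancel h)

lemma mulVec_eq (j : ℕ) (x : (Fin n → ZMod 2) → ℝ) (u : Fin n → ZMod 2) :
    (distMatrix n j).mulVec x u = ∑ w, if hammingDist u w = j then x w else 0 := by
  simp [distMatrix, Matrix.mulVec, dotProduct, ite_mul, one_mul, zero_mul]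

lemma single_add_single_self (k : Fin n) :
    (Pi.single k 1 : Fin n → ZMod 2) + Pi.single k 1 = 0 := by
  funext l
  have h2 : ∀ a : ZMod 2, a + a = 0 := by decide
  simp [Pi.add_apply, h2]

lemma hpt_lemma (x : (Fin n → ZMod 2) → ℝ)
    (hx : (distMatrix n 0 + distMatrix n 1).mulVec x = 0) (v : Fin n → ZMod 2) :
    x v = - ∑ k, x (v + Pi.single k 1) := by
  have h := congrFun hx v
  rw [Matrix.add_mulVec, Pi.add_apply, mulVec_eq, mulVec_eq, sum_dist_one] at h
  simp only [Pi.zero_apply] at h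
  have h0 : ∑ w, (if hammingDist v w = 0 then x w else 0) = x v := by
    simp [hammingDist_eq_zero]
  rw [h0] at h
  linarith

lemma rec_y (x : (Fin n → ZMod 2) → ℝ)
    (hx : (distMatrix n 0 + distMatrix n 1).mulVec x = 0) (j : ℕ) (hj : 1 ≤ j)
    (u : Fin n → ZMod 2) :
    (distMatrix n j).mulVec x u
      + ((n + 1 - j : ℕ) : ℝ) * (distMatrix n (j - 1)).mulVec x u
      + ((j + 1 : ℕ) : ℝ) * (distMatrix n (j + 1)).mulVec x u = 0 := by
  rw [mulVec_eq, mulVec_eq, mulVec_eq]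
  have key : ∑ v, (if hammingDist u v = j then x v else 0)
      = - ∑ w, (((Finset.univ.filter
          fun k => hammingDist u (w + Pi.single k 1) = j).card : ℝ)) * x w := by
    calc ∑ v, (if hammingDist u v = j then x v else 0)
        = ∑ v, (if hammingDist u v = j
            then - ∑ k, x (v + Pi.single k 1) else 0) :=
          Finset.sum_congr rfl fun v _ => by rw [hpt_lemma x hx v]
      _ = - ∑ v, ∑ k, (if hammingDist u v = j then x (v + Pi.single k 1) else 0) := by
          rw [← Finset.sum_neg_distrib]
          refine Finset.sum_congr rfl fun v _ => ?_
          split_ifs with h <;> simp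
      _ = - ∑ k, ∑ v, (if hammingDist u v = j then x (v + Pi.single k 1) else 0) := by
          rw [Finset.sum_comm]
      _ = - ∑ k : Fin n, ∑ w, (if hammingDist u (w + Pi.single k 1) = j then x w else 0) := by
          congr 1
          refine Finset.sum_congr rfl fun k _ => ?_
          refine Fintype.sum_equiv (Equiv.addRight (Pi.single k (1 : ZMod 2))) _ _
            fun w => ?_
          simp only [Equiv.coe_addRight]
          simp only [add_assoc, single_add_single_self, add_zero]
      _ = - ∑ w, ∑ k : Fin n, (if hammingDist u (w + Pi.single k 1) = j then x w else 0) := by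
          rw [Finset.sum_comm]
      _ = - ∑ w, (((Finset.univ.filter
            fun k => hammingDist u (w + Pi.single k 1) = j).card : ℝ)) * x w := by
          congr 1
          refine Finset.sum_congr rfl fun w _ => ?_
          rw [Finset.sum_ite, Finset.sum_const_zero, add_zero, Finset.sum_const,
            nsmul_eq_mul]
  rw [key]
  have hcount : ∀ w : Fin n → ZMod 2,
      (((Finset.univ.filter
          fun k => hammingDist u (w + Pi.single k 1) = j).card : ℝ)) * x w
        = ((n + 1 - j : ℕ) : ℝ) * (if hammingDist u w = j - 1 then x w else 0)
        + ((j + 1 : ℕ) : ℝ) * (if hammingDist u w = j + 1 then x w else 0) := by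
    intro w
    rw [count_flip u w j hj]
    push_cast [apply_ite (Nat.cast : ℕ → ℝ)]
    rw [show (if hammingDist u w + 1 = j then ((n + 1 - j : ℕ) : ℝ) else 0)
        = (if hammingDist u w = j - 1 then ((n + 1 - j : ℕ) : ℝ) else 0) from
      if_congr (by omega) rfl rfl]
    split_ifs <;> push_cast <;> ring
  rw [Finset.sum_congr rfl fun w _ => hcount w, Finset.sum_add_distrib,
    ← Finset.mul_sum, ← Finset.mul_sum]
  ring

end Aux

/-- For `n` odd and `2i+1 ≤ n`, `ker (A₀ + A₁) ⊆ ker (A_{2i} + A_{2i+1})`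
for the distance matrices of `Qₙ`. -/
theorem stmt_12 (n : ℕ) (hn : Odd n) (i : ℕ) (hi : 2 * i + 1 ≤ n)
    (x : (Fin n → ZMod 2) → ℝ)
    (hx : (distMatrix n 0 + distMatrix n 1).mulVec x = 0) :
    (distMatrix n (2 * i) + distMatrix n (2 * i + 1)).mulVec x = 0 := by
  funext u1
  induction i with
  | zero => simpa using congrFun hx u1
  | succ m ih =>
    have hm : 2 * m + 1 ≤ n := by omega
    have h0u := ih hm
    rw [Matrix.add_mulVec, Pi.add_apply] at h0u
    simp only [Pi.zero_apply] at h0u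
    have hA := rec_y x hx (2 * m + 1) (by omega) u1
    have hB := rec_y x hx (2 * m + 2) (by omega) u1
    rw [Matrix.add_mulVec, Pi.add_apply, Pi.zero_apply,
      show 2 * (m + 1) = 2 * m + 2 by ring, show 2 * m + 2 + 1 = 2 * m + 3 by ring]
    rw [show 2 * m + 1 - 1 = 2 * m by omega] at hA
    rw [show 2 * m + 2 - 1 = 2 * m + 1 by omega,
      show 2 * m + 2 + 1 = 2 * m + 3 by omega] at hB
    have hc1 : ((n + 1 - (2 * m + 1) : ℕ) : ℝ) = (n : ℝ) - 2 * m := by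
      have he : n + 1 - (2 * m + 1) = n - 2 * m := by omega
      rw [he, Nat.cast_sub (by omega : 2 * m ≤ n)]
      push_cast
      ring
    have hc2 : ((n + 1 - (2 * m + 2) : ℕ) : ℝ) = (n : ℝ) - 2 * m - 1 := by
      have he : n + 1 - (2 * m + 2) = n - (2 * m + 1) := by omega
      rw [he, Nat.cast_sub (by omega : 2 * m + 1 ≤ n)]
      push_cast
      ring
    rw [hc1] at hA
    rw [hc2] at hB
    push_cast at hA hB
    have hr : (2 * (m : ℝ) + 3) ≠ 0 := by positivity
    have hkey : (2 * (m : ℝ) + 3) *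
        ((distMatrix n (2 * m + 2)).mulVec x u1
          + (distMatrix n (2 * m + 3)).mulVec x u1) = 0 := by
      linear_combination hA + hB - ((n : ℝ) - 2 * m) * h0u
    rcases mul_eq_zero.mp hkey with h | h
    · exact absurd h hr
    · exact h
end

section
/- If n ≡ 1 (mod 4), then for each i with 0 ≤ 2i+1 ≤ n, Qₙ admits a {2i, 2i+1}-magic labeling: there is a bijection f: 𝔽₂ⁿ → {1,...,2ⁿ} and a constant k such that for every vertex x, ∑_{y : d(x,y) ∈ {2i,2i+1}} f(y) = k. -/
namespace Stmt15

open Finset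
open Fin.NatCast
open Fin.CommRing

abbrev V (t : ℕ) := Fin (4*t+1) → ZMod 2

def F (t : ℕ) (x : V t) (j : Fin (4*t+1)) : ZMod 2 :=
  ∑ l ∈ Finset.range (2*t+1), x (j + (l : Fin (4*t+1)))

variable {t : ℕ}

lemma zmod2_add_cancel : ∀ a b : ZMod 2, a + b = 0 → a = b := by decide

lemma F_add (x y : V t) (j : Fin (4*t+1)) : F t (x+y) j = F t x j + F t y j := by
  simp [F, Finset.sum_add_distrib]

lemma F_shift (x : V t) (j : Fin (4*t+1)) :
    (∑ l ∈ Finset.range (2*t+1), x (j + (l : Fin (4*t+1)))) + x (j + ((2*t+1 : ℕ) : Fin (4*t+1)))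
      = F t x (j+1) + x j := by
  have e : ∀ l : ℕ, j + 1 + (l : Fin (4*t+1)) = j + ((l+1 : ℕ) : Fin (4*t+1)) := by
    intro l; push_cast; ring
  have hF : F t x (j+1) = ∑ l ∈ Finset.range (2*t+1), x (j + ((l+1 : ℕ) : Fin (4*t+1))) := by
    unfold F; exact Finset.sum_congr rfl fun l _ => by rw [e]
  have h1 := Finset.sum_range_succ' (fun l => x (j + (l : Fin (4*t+1)))) (2*t+1)
  have h2 := Finset.sum_range_succ (fun l => x (j + (l : Fin (4*t+1)))) (2*t+1)
  have h0 : j + ((0:ℕ) : Fin (4*t+1)) = j := by push_cast; ring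
  rw [h2, h0] at h1
  rw [hF]
  simpa using h1

lemma cop : Nat.Coprime (2*t+1) (4*t+1) := by
  have ha := Nat.gcd_dvd_left (2*t+1) (4*t+1)
  have hb := Nat.gcd_dvd_right (2*t+1) (4*t+1)
  have h : Nat.gcd (2*t+1) (4*t+1) ∣ 2*(2*t+1) - (4*t+1) := Nat.dvd_sub (ha.mul_left 2) hb
  have h1 : Nat.gcd (2*t+1) (4*t+1) ∣ 1 := by
    simpa [show 2*(2*t+1) - (4*t+1) = 1 by omega] using h
  exact Nat.dvd_one.mp h1

lemma F_ker (x : V t) (hx : ∀ j, F t x j = 0) : x = 0 := by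
  have hper : ∀ j : Fin (4*t+1), x (j + ((2*t+1:ℕ) : Fin (4*t+1))) = x j := by
    intro j
    have h := F_shift x j
    rw [hx] at h
    rw [show (∑ l ∈ Finset.range (2*t+1), x (j + (l : Fin (4*t+1)))) = 0 from hx j] at h
    simpa using h
  have hmul : ∀ k : ℕ, x ((k*(2*t+1) : ℕ) : Fin (4*t+1)) = x 0 := by
    intro k; induction k with
    | zero => norm_num
    | succ k ih =>
      have e : (((k+1)*(2*t+1) : ℕ) : Fin (4*t+1))
          = ((k*(2*t+1):ℕ) : Fin (4*t+1)) + ((2*t+1:ℕ):Fin (4*t+1)) := by push_cast; ring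
      rw [e, hper, ih]
  have hconst : ∀ j : Fin (4*t+1), x j = x 0 := by
    rcases Nat.eq_zero_or_pos t with ht | ht
    · subst ht
      intro j
      have hj : j = 0 := by
        have := j.isLt; exact Fin.ext (by omega)
      rw [hj]
    · have hlt : 1 < 4*t+1 := by omega
      obtain ⟨u, hu⟩ := Nat.exists_mul_mod_eq_one_of_coprime (cop (t := t)) hlt
      intro j
      have key : ((j.val * ((2*t+1) * u) : ℕ) : Fin (4*t+1)) = j := by
        have hq : (2*t+1) * u = (4*t+1) * ((2*t+1)*u / (4*t+1)) + 1 := by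
          have h0 := Nat.div_add_mod ((2*t+1)*u) (4*t+1)
          rw [hu.2] at h0; omega
        rw [hq, Nat.cast_mul, Nat.cast_add, Nat.cast_mul, Nat.cast_one, Fin.natCast_self,
          zero_mul, zero_add, mul_one, Fin.cast_val_eq_self]
      have := hmul (j.val * u)
      rw [show j.val * u * (2*t+1) = j.val * ((2*t+1) * u) by ring, key] at this
      exact this
  have hx0 : x 0 = 0 := by
    have h := hx 0
    unfold F at h
    have hc : ∀ l ∈ Finset.range (2*t+1), x (0 + (l : Fin (4*t+1))) = x 0 := fun l _ => hconst _
    rw [Finset.sum_congr rfl hc, Finset.sum_const, Finset.card_range] at h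
    have : ((2*t+1 : ℕ) : ZMod 2) * x 0 = 0 := by rw [← h, nsmul_eq_mul]
    have h2 : ((2*t+1 : ℕ) : ZMod 2) = 1 := by
      push_cast
      rw [show (2 : ZMod 2) = 0 by decide]
      ring
    rw [h2, one_mul] at this
    exact this
  funext j
  rw [hconst j, hx0]; rfl

lemma F_bij : Function.Bijective (F t) := by
  rw [← Finite.injective_iff_bijective]
  intro x y h
  have hk : x + y = 0 := F_ker _ (fun j => by
    rw [F_add, h]; exact CharTwo.add_self_eq_zero _)
  funext j
  exact zmod2_add_cancel _ _ (congrFun hk j)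

def σe (t : ℕ) : Fin (2*t+1) ⊕ Fin (2*t) ≃ Fin (4*t+1) :=
  finSumFinEquiv.trans (finCongr (by ring))

lemma σe_inl (a : Fin (2*t+1)) : σe t (Sum.inl a) = ((a.val : ℕ) : Fin (4*t+1)) := by
  apply Fin.ext
  simp [σe]
  rw [Nat.mod_eq_of_lt (by have := a.isLt; omega)]

/-- indicator -/
def ind (c : ZMod 2) : ℕ := if c ≠ 0 then 1 else 0

lemma hammingNorm_eq_sum {m : ℕ} (u : Fin m → ZMod 2) :
    hammingNorm u = ∑ a : Fin m, ind (u a) := by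
  rw [hammingNorm, Finset.card_filter]; rfl

lemma sum_eq_cast_norm {m : ℕ} (u : Fin m → ZMod 2) :
    (∑ a : Fin m, u a) = ((hammingNorm u : ℕ) : ZMod 2) := by
  rw [hammingNorm_eq_sum, Nat.cast_sum]
  refine Finset.sum_congr rfl fun a _ => ?_
  exact (by decide : ∀ c : ZMod 2, c = ((ind c : ℕ) : ZMod 2)) (u a)

lemma wt_snoc {m : ℕ} (v : Fin m → ZMod 2) (ε : ZMod 2) :
    hammingNorm (Fin.snoc v ε : Fin (m+1) → ZMod 2) = hammingNorm v + ind ε := by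
  rw [hammingNorm_eq_sum, hammingNorm_eq_sum, Fin.sum_univ_castSucc]
  simp [Fin.snoc_castSucc, Fin.snoc_last]

lemma wt_init {m : ℕ} (u : Fin (m+1) → ZMod 2) :
    hammingNorm u = hammingNorm (Fin.init u) + ind (u (Fin.last m)) := by
  rw [hammingNorm_eq_sum, hammingNorm_eq_sum, Fin.sum_univ_castSucc]
  simp [Fin.init]

lemma wt_split (z : V t) :
    hammingNorm z = hammingNorm (fun a : Fin (2*t+1) => z (σe t (Sum.inl a)))
      + hammingNorm (fun b : Fin (2*t) => z (σe t (Sum.inr b))) := by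
  rw [hammingNorm_eq_sum, hammingNorm_eq_sum, hammingNorm_eq_sum]
  rw [← Equiv.sum_comp (σe t) (fun p => ind (z p)), Fintype.sum_sum_type]

lemma F_zero_eq (z : V t) :
    F t z 0 = ((hammingNorm (fun a : Fin (2*t+1) => z (σe t (Sum.inl a))) : ℕ) : ZMod 2) := by
  rw [← sum_eq_cast_norm]
  unfold F
  rw [← Fin.sum_univ_eq_sum_range (fun l : ℕ => z (0 + (l : Fin (4*t+1)))) (2*t+1)]
  refine Finset.sum_congr rfl fun a _ => ?_
  rw [σe_inl, zero_add]

def uu (z : V t) : Fin (2*t+1) → ZMod 2 := fun a => z (σe t (Sum.inl a))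
def vv (z : V t) : Fin (2*t) → ZMod 2 := fun b => z (σe t (Sum.inr b))

lemma wt_split' (z : V t) : hammingNorm z = hammingNorm (uu z) + hammingNorm (vv z) :=
  wt_split z

lemma F_zero_eq' (z : V t) : F t z 0 = ((hammingNorm (uu z) : ℕ) : ZMod 2) :=
  F_zero_eq z

def Φ (t i : ℕ) (z : V t) : V t :=
  fun p => Sum.elim
    (Fin.snoc (vv z) (if hammingNorm (uu z) + hammingNorm (vv z) = 2*i then (1 : ZMod 2) else 0))
    (Fin.init (uu z)) ((σe t).symm p)

lemma elim_uu_vv (z : V t) (p : Fin (4*t+1)) :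
    Sum.elim (uu z) (vv z) ((σe t).symm p) = z p := by
  conv_rhs => rw [← (σe t).apply_symm_apply p]
  generalize (σe t).symm p = s
  cases s <;> rfl

lemma uu_Φ (i : ℕ) (z : V t) :
    uu (Φ t i z) = Fin.snoc (vv z)
      (if hammingNorm (uu z) + hammingNorm (vv z) = 2*i then (1 : ZMod 2) else 0) := by
  funext a; unfold uu Φ; rw [Equiv.symm_apply_apply]; rfl

lemma vv_Φ (i : ℕ) (z : V t) : vv (Φ t i z) = Fin.init (uu z) := by
  funext b; unfold vv Φ; rw [Equiv.symm_apply_apply]; rfl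

lemma ind_le_one (c : ZMod 2) : ind c ≤ 1 := by unfold ind; split_ifs <;> omega

lemma Φ_props (i : ℕ) (z : V t) (hz : hammingNorm z = 2*i ∨ hammingNorm z = 2*i+1) :
    (hammingNorm (Φ t i z) = 2*i ∨ hammingNorm (Φ t i z) = 2*i+1)
    ∧ F t (Φ t i z) 0 = 1 + F t z 0
    ∧ Φ t i (Φ t i z) = z := by
  set u := uu z with hu
  set v := vv z with hv
  set ε : ZMod 2 := if hammingNorm u + hammingNorm v = 2*i then 1 else 0 with hε
  have hz' : hammingNorm u + hammingNorm v = 2*i ∨ hammingNorm u + hammingNorm v = 2*i+1 := by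
    rw [← wt_split' z]; exact hz
  have hindε : ind ε = if hammingNorm u + hammingNorm v = 2*i then 1 else 0 := by
    rw [hε]; split_ifs <;> decide
  have hsnoc : hammingNorm (Fin.snoc v ε : Fin (2*t+1) → ZMod 2) + hammingNorm u = 2*i+1 := by
    rw [wt_snoc, hindε]
    rcases hz' with h | h
    · rw [if_pos h]; omega
    · rw [if_neg (by omega)]; omega
  set δ : ℕ := ind (u (Fin.last (2*t))) with hδ
  have hinit : hammingNorm u = hammingNorm (Fin.init u) + δ := wt_init u
  have hδ1 : δ ≤ 1 := ind_le_one _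
  have hwtΦ : hammingNorm (Φ t i z)
      = hammingNorm (Fin.snoc v ε : Fin (2*t+1) → ZMod 2) + hammingNorm (Fin.init u) := by
    rw [wt_split' (Φ t i z), uu_Φ, vv_Φ, ← hu, ← hv, ← hε]
  refine ⟨?_, ?_, ?_⟩
  · rcases Nat.eq_zero_or_pos δ with h0 | h0
    · right; omega
    · left; omega
  · rw [F_zero_eq' (Φ t i z), uu_Φ, ← hv, ← hε, F_zero_eq' z, ← hu]
    have hcast : ((hammingNorm (Fin.snoc v ε : Fin (2*t+1) → ZMod 2) : ℕ) : ZMod 2)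
        + ((hammingNorm u : ℕ) : ZMod 2) = 1 := by
      rw [← Nat.cast_add, hsnoc]
      push_cast
      rw [show (2 : ZMod 2) = 0 by decide]
      ring
    exact (by decide : ∀ a b : ZMod 2, a + b = 1 → a = 1 + b) _ _ hcast
  · funext p
    show Sum.elim
      (Fin.snoc (vv (Φ t i z))
        (if hammingNorm (uu (Φ t i z)) + hammingNorm (vv (Φ t i z)) = 2*i then (1:ZMod 2) else 0))
      (Fin.init (uu (Φ t i z))) ((σe t).symm p) = z p
    have hε' : (if hammingNorm (uu (Φ t i z)) + hammingNorm (vv (Φ t i z)) = 2*i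
        then (1:ZMod 2) else 0) = u (Fin.last (2*t)) := by
      rw [uu_Φ, vv_Φ, ← hu, ← hv, ← hε]
      rcases (by decide : ∀ c : ZMod 2, (c = 0 ∧ ind c = 0) ∨ (c = 1 ∧ ind c = 1))
          (u (Fin.last (2*t))) with ⟨h1, h2⟩ | ⟨h1, h2⟩
      · rw [if_neg (by rw [wt_snoc, hindε] at hsnoc ⊢; omega), h1]
      · rw [if_pos (by rw [wt_snoc, hindε] at hsnoc ⊢; omega), h1]
    rw [hε', vv_Φ, uu_Φ, ← hu, ← hv, ← hε, Fin.init_snoc, Fin.snoc_init_self]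
    exact elim_uu_vv z p

def CC (t i : ℕ) (j : Fin (4*t+1)) (ε : ZMod 2) : Finset (V t) :=
  univ.filter (fun z => (hammingNorm z = 2*i ∨ hammingNorm z = 2*i+1) ∧ F t z j = ε)

lemma card_CC_swap (i : ℕ) : (CC t i 0 0).card = (CC t i 0 1).card := by
  apply Finset.card_nbij' (Φ t i) (Φ t i)
  · intro z hz
    simp only [CC, Finset.mem_coe, mem_filter, mem_univ, true_and] at hz ⊢
    obtain ⟨p1, p2, _⟩ := Φ_props i z hz.1
    exact ⟨p1, by rw [p2, hz.2]; decide⟩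
  · intro z hz
    simp only [CC, Finset.mem_coe, mem_filter, mem_univ, true_and] at hz ⊢
    obtain ⟨p1, p2, _⟩ := Φ_props i z hz.1
    exact ⟨p1, by rw [p2, hz.2]; decide⟩
  · intro z hz
    simp only [CC, Finset.mem_coe, mem_filter, mem_univ, true_and] at hz
    exact (Φ_props i z hz.1).2.2
  · intro z hz
    simp only [CC, Finset.mem_coe, mem_filter, mem_univ, true_and] at hz
    exact (Φ_props i z hz.1).2.2

def ρ (t : ℕ) (j : Fin (4*t+1)) (z : V t) : V t := fun p => z (j + p)

lemma wt_ρ (j : Fin (4*t+1)) (z : V t) : hammingNorm (ρ t j z) = hammingNorm z := by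
  rw [hammingNorm_eq_sum, hammingNorm_eq_sum]
  simpa [ρ] using Equiv.sum_comp (Equiv.addLeft j) (fun p => ind (z p))

lemma F_ρ (j : Fin (4*t+1)) (z : V t) : F t (ρ t j z) 0 = F t z j := by
  unfold F ρ
  exact Finset.sum_congr rfl fun l _ => by rw [zero_add]

lemma ρ_cancel (j : Fin (4*t+1)) (z : V t) : ρ t (-j) (ρ t j z) = z := by
  funext p; show z (j + (-j + p)) = z p; congr 1; abel

lemma card_CC_rot (i : ℕ) (j : Fin (4*t+1)) (ε : ZMod 2) :
    (CC t i j ε).card = (CC t i 0 ε).card := by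
  apply Finset.card_nbij' (ρ t j) (ρ t (-j))
  · intro z hz; simp only [CC, Finset.mem_coe, mem_filter, mem_univ, true_and] at hz ⊢
    exact ⟨by rw [wt_ρ]; exact hz.1, by rw [F_ρ]; exact hz.2⟩
  · intro z hz; simp only [CC, Finset.mem_coe, mem_filter, mem_univ, true_and] at hz ⊢
    refine ⟨by rw [wt_ρ]; exact hz.1, ?_⟩
    have h := F_ρ (t := t) j (ρ t (-j) z)
    rw [show ρ t j (ρ t (-j) z) = z from by
      have h2 := ρ_cancel (t := t) (-j) z; rwa [neg_neg] at h2] at h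
    rw [← h]; exact hz.2
  · intro z _; exact ρ_cancel j z
  · intro z _; have h2 := ρ_cancel (t := t) (-j) z; rwa [neg_neg] at h2

lemma card_CC (i : ℕ) (j : Fin (4*t+1)) (ε : ZMod 2) :
    (CC t i j ε).card = (CC t i 0 1).card := by
  rw [card_CC_rot]
  rcases (by decide : ∀ c : ZMod 2, c = 0 ∨ c = 1) ε with h | h
  · rw [h, card_CC_swap]
  · rw [h]

lemma dist_eq (x y : V t) : hammingDist x y = hammingNorm (x + y) := by
  rw [hammingDist_eq_hammingNorm]
  congr 1
  funext p
  exact (by decide : ∀ a b : ZMod 2, -a + b = a + b) (x p) (y p)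

lemma add_add_cancel (x z : V t) : x + (x + z) = z := by
  funext p
  exact (by decide : ∀ a b : ZMod 2, a + (a + b) = b) _ _

def ZD (t i : ℕ) : Finset (V t) :=
  univ.filter (fun z => hammingNorm z = 2*i ∨ hammingNorm z = 2*i+1)

lemma card_Ax (i : ℕ) (x : V t) (s : Finset (V t))
    (hs : ∀ y, y ∈ s ↔ (hammingDist x y = 2*i ∨ hammingDist x y = 2*i+1)) :
    s.card = (ZD t i).card := by
  apply Finset.card_nbij' (fun y => x + y) (fun z => x + z)
  · intro y hy
    simp only [ZD, Finset.mem_coe, mem_filter, mem_univ, true_and]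
    rw [← dist_eq]; exact (hs y).mp hy
  · intro z hz
    simp only [ZD, Finset.mem_coe, mem_filter, mem_univ, true_and] at hz
    rw [Finset.mem_coe, hs, dist_eq, add_add_cancel]; exact hz
  · intro y _; exact add_add_cancel x y
  · intro z _; exact add_add_cancel x z

lemma card_trans (i : ℕ) (x : V t) (jf : Fin (4*t+1)) (s : Finset (V t))
    (hs : ∀ y, y ∈ s ↔ ((hammingDist x y = 2*i ∨ hammingDist x y = 2*i+1) ∧ F t y jf = 1)) :
    s.card = (CC t i jf (1 + F t x jf)).card := by
  apply Finset.card_nbij' (fun y => x + y) (fun z => x + z)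
  · intro y hy
    obtain ⟨h1, h2⟩ := (hs y).mp hy
    simp only [CC, Finset.mem_coe, mem_filter, mem_univ, true_and]
    constructor
    · rw [← dist_eq]; exact h1
    · rw [F_add, h2, add_comm]
  · intro z hz
    simp only [CC, Finset.mem_coe, mem_filter, mem_univ, true_and] at hz
    rw [Finset.mem_coe, hs]
    constructor
    · rw [dist_eq, add_add_cancel]; exact hz.1
    · rw [F_add, hz.2]
      exact (by decide : ∀ a b : ZMod 2, a + (b + a) = b) _ _
  · intro y _; exact add_add_cancel x y
  · intro z _; exact add_add_cancel x z

lemma val_ite : ∀ c : ZMod 2, Fin.val c = if c = 1 then 1 else 0 := by decide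

end Stmt15

open Stmt15 in
/-- If `n ≡ 1 (mod 4)` then for each `i` with `2i+1 ≤ n`, the hypercube `Qₙ`
admits a `{2i, 2i+1}`-magic labeling. -/
theorem stmt_15 (n : ℕ) (hn : n % 4 = 1) (i : ℕ) (hi : 2 * i + 1 ≤ n) :
    ∃ (f : (Fin n → ZMod 2) ≃ Fin (2 ^ n)) (k : ℕ),
      ∀ x : Fin n → ZMod 2,
        ∑ y ∈ Finset.univ.filter
            (fun y => hammingDist x y = 2 * i ∨ hammingDist x y = 2 * i + 1),
          ((f y : ℕ) + 1) = k := by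
  obtain ⟨t, rfl⟩ : ∃ t, n = 4*t+1 := ⟨n/4, by omega⟩
  set f : (Fin (4*t+1) → ZMod 2) ≃ Fin (2 ^ (4*t+1)) :=
    (Equiv.ofBijective (F t) F_bij).trans finFunctionFinEquiv with hfdef
  refine ⟨f, (∑ jf : Fin (4*t+1), (CC t i 0 1).card * 2^(jf:ℕ)) + (ZD t i).card, ?_⟩
  intro x
  have main : ∀ A : Finset (V t),
      (∀ y, y ∈ A ↔ (hammingDist x y = 2*i ∨ hammingDist x y = 2*i+1)) →
      ∑ y ∈ A, ((f y : ℕ) + 1)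
        = (∑ jf : Fin (4*t+1), (CC t i 0 1).card * 2^(jf:ℕ)) + (ZD t i).card := by
    intro A hA
    rw [Finset.sum_add_distrib, Finset.sum_const, smul_eq_mul, mul_one]
    have hf : ∀ y : V t, ((f y : ℕ))
        = ∑ jf : Fin (4*t+1), (Fin.val (F t y jf)) * 2^(jf:ℕ) := by
      intro y
      rw [hfdef]
      exact finFunctionFinEquiv_apply (F t y)
    have h1 : ∑ y ∈ A, (f y : ℕ)
        = ∑ jf : Fin (4*t+1), (CC t i 0 1).card * 2^(jf:ℕ) := by
      rw [Finset.sum_congr rfl (fun y _ => hf y), Finset.sum_comm]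
      refine Finset.sum_congr rfl fun jf _ => ?_
      rw [← Finset.sum_mul]
      congr 1
      rw [Finset.sum_congr rfl (fun y (_ : y ∈ A) => val_ite (F t y jf)),
        ← Finset.card_filter]
      rw [card_trans i x jf _ (by
        intro y
        simp only [Finset.mem_filter]
        rw [hA y])]
      exact card_CC i jf _
    rw [h1, card_Ax i x A hA]
  exact main _ (by
    intro y
    simp only [Finset.mem_filter, Finset.mem_univ, true_and])
end

section
/- If n ≡ 1 (mod 4), then for each j with 0 ≤ j ≤ (n−1)/2, Qₙ admits a {j, n−j}-magic labeling. -/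
private lemma aux_geom (n : ℕ) : ∑ i ∈ Finset.range n, 2 ^ i = 2 ^ n - 1 := by
  induction n with
  | zero => simp
  | succ m ih => rw [Finset.sum_range_succ, ih]; have := Nat.one_le_two_pow (n := m); omega

/-- If `n ≡ 1 (mod 4)` then for each `j ≤ (n−1)/2`, the hypercube `Qₙ`
admits a `{j, n−j}`-magic labeling. -/
theorem stmt_16 (n : ℕ) (hn : n % 4 = 1) (j : ℕ) (hj : j ≤ (n - 1) / 2) :
    ∃ (f : (Fin n → ZMod 2) ≃ Fin (2 ^ n)) (k : ℕ),
      ∀ x : Fin n → ZMod 2,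
        ∑ y ∈ Finset.univ.filter
            (fun y => hammingDist x y = j ∨ hammingDist x y = n - j),
          ((f y : ℕ) + 1) = k := by
  have hjn : j < n - j := by omega
  -- the complementation map
  set c : (Fin n → ZMod 2) → (Fin n → ZMod 2) := fun y i => y i + 1 with hc
  have hcc : ∀ y, c (c y) = y := by
    intro y; funext i
    have : ∀ a : ZMod 2, a + 1 + 1 = a := by decide
    simp [hc, this]
  have hdist : ∀ x y : Fin n → ZMod 2, hammingDist x (c y) = n - hammingDist x y := by
    intro x y
    have h1 : hammingDist x (c y) = (Finset.univ.filter fun i => x i ≠ y i + 1).card := by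
      simp [hammingDist, hc]
    have h2 : hammingDist x y = (Finset.univ.filter fun i => x i ≠ y i).card := by
      simp [hammingDist]
    have hiff : ∀ a b : ZMod 2, (a ≠ b + 1) ↔ ¬ (a ≠ b) := by decide
    have h3 : (Finset.univ.filter fun i => x i ≠ y i + 1)
        = (Finset.univ.filter fun i => x i ≠ y i)ᶜ := by
      rw [Finset.compl_filter]
      exact Finset.filter_congr (fun i _ => hiff (x i) (y i))
    rw [h1, h3, Finset.card_compl, h2]
    simp
  -- the labeling
  let F : (Fin n → ZMod 2) ≃ Fin (2 ^ n) := finFunctionFinEquiv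
  refine ⟨F,
    (Finset.univ.filter (fun y : Fin n → ZMod 2 => hammingDist 0 y = j)).card * (2 ^ n + 1), ?_⟩
  intro x
  have happly : ∀ y : Fin n → ZMod 2,
      ((F y) : ℕ) = ∑ i : Fin n, (y i).val * 2 ^ (i : ℕ) :=
    fun y => finFunctionFinEquiv_apply y
  -- pair sum
  have hgeom : ∑ i ∈ Finset.range n, 2 ^ i = 2 ^ n - 1 := aux_geom n
  have hpair : ∀ y : Fin n → ZMod 2,
      (((F y) : ℕ) + 1)
        + (((F (c y)) : ℕ) + 1) = 2 ^ n + 1 := by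
    intro y
    have hval : ∀ a : ZMod 2, a.val + (a + 1).val = 1 := by decide
    have hsum : ((F y) : ℕ)
        + ((F (c y)) : ℕ) = 2 ^ n - 1 := by
      rw [happly, happly, ← Finset.sum_add_distrib]
      have : ∀ i : Fin n, (y i).val * 2 ^ (i : ℕ) + ((c y) i).val * 2 ^ (i : ℕ)
          = 2 ^ (i : ℕ) := by
        intro i
        simp [hc, ← Nat.add_mul, hval (y i)]
      rw [Finset.sum_congr rfl (fun i _ => this i), Fin.sum_univ_eq_sum_range, hgeom]
    have := Nat.one_le_two_pow (n := n)
    omega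
  -- splitting the filter
  rw [Finset.filter_or, Finset.sum_union (by
    rw [Finset.disjoint_left]
    intro a ha hb
    simp only [Finset.mem_filter] at ha hb
    omega)]
  -- second sum reindexed by c
  have hre : ∑ y ∈ Finset.univ.filter (fun y => hammingDist x y = n - j),
        (((F y) : ℕ) + 1)
      = ∑ y ∈ Finset.univ.filter (fun y => hammingDist x y = j),
        (((F (c y)) : ℕ) + 1) := by
    refine Finset.sum_nbij' c c ?_ ?_ ?_ ?_ ?_
    · intro a ha
      simp only [Finset.mem_filter, Finset.mem_univ, true_and] at ha ⊢
      rw [hdist, ha]; omega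
    · intro a ha
      simp only [Finset.mem_filter, Finset.mem_univ, true_and] at ha ⊢
      rw [hdist, ha]
    · intro a _; exact hcc a
    · intro a _; exact hcc a
    · intro a _; rw [hcc]
  rw [hre, ← Finset.sum_add_distrib]
  rw [Finset.sum_congr rfl (fun y _ => hpair y), Finset.sum_const, smul_eq_mul]
  -- card independence of x
  congr 1
  refine Finset.card_nbij (fun y i => x i + y i) ?_ ?_ ?_
  · intro a ha
    simp only [Finset.mem_coe, Finset.mem_filter, Finset.mem_univ, true_and] at ha ⊢
    have : ∀ u v : ZMod 2, ((0 : ZMod 2) ≠ u + v) ↔ (u ≠ v) := by decide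
    have heq : hammingDist (0 : Fin n → ZMod 2) (fun i => x i + a i) = hammingDist x a := by
      simp only [hammingDist]
      exact congrArg Finset.card (Finset.filter_congr (fun i _ => by
        simpa using this (x i) (a i)))
    rw [heq]; exact ha
  · intro a _ b _ hab
    funext i
    have := congrFun hab i
    simp only at this
    have h2 : ∀ u v w : ZMod 2, u + v = u + w → v = w := by decide
    exact h2 _ _ _ this
  · intro z hz
    simp only [Finset.coe_filter, Set.mem_setOf_eq, Finset.mem_univ, true_and] at hz
    refine ⟨fun i => x i + z i, ?_, ?_⟩
    · simp only [Finset.coe_filter, Set.mem_setOf_eq, Finset.mem_univ, true_and]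
      have : ∀ u v : ZMod 2, (u ≠ u + v) ↔ ((0:ZMod 2) ≠ v) := by decide
      have heq : hammingDist x (fun i => x i + z i) = hammingDist (0 : Fin n → ZMod 2) z := by
        simp only [hammingDist]
        exact congrArg Finset.card (Finset.filter_congr (fun i _ => by
          simpa using this (x i) (z i)))
      rw [heq]; exact hz
    · funext i
      have : ∀ u v : ZMod 2, u + (u + v) = v := by decide
      simp [this]
end

section
/- Let G be a distance-regular graph of diameter d that is an antipodal double cover (each vertex x has a unique vertex x' at distance d). If l is a distance magic labeling of G, then l(x) + l(x') = |V(G)| + 1 for every vertex x, and consequently l is a {j, d−j}-magic labeling for every j with 0 ≤ j ≤ d: for all x, ∑_{y ∈ G_j(x)} l(y) + ∑_{y ∈ G_{d−j}(x)} l(y) = (|V(G)|+1)·|G_j(x)|. -/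
open Finset SimpleGraph

lemma walkDistA {V : Type*} {G : SimpleGraph V} (h : G.Connected) :
    ∀ {u v : V} (p : G.Walk u v) (j : ℕ), G.dist u (p.getVert j) ≤ j := by
  intro u v p
  induction p with
  | nil => intro j; simp [SimpleGraph.Walk.getVert_of_length_le, SimpleGraph.dist_self]
  | @cons u w v hadj q ih =>
    intro j
    cases j with
    | zero => simp [SimpleGraph.dist_self]
    | succ j =>
      rw [SimpleGraph.Walk.getVert_cons_succ]
      have h1 : G.dist u w = 1 := (SimpleGraph.dist_eq_one_iff_adj).2 hadj
      calc G.dist u (q.getVert j) ≤ G.dist u w + G.dist w (q.getVert j) := h.dist_triangle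
        _ ≤ 1 + j := by rw [h1]; exact Nat.add_le_add_left (ih j) 1
        _ = j + 1 := by omega

lemma walkDistB {V : Type*} {G : SimpleGraph V} :
    ∀ {u v : V} (p : G.Walk u v) (j : ℕ), G.dist (p.getVert j) v ≤ p.length - j := by
  intro u v p
  induction p with
  | nil => intro j; simp [SimpleGraph.Walk.getVert_of_length_le]
  | @cons u w v hadj q ih =>
    intro j
    cases j with
    | zero =>
      simpa using SimpleGraph.dist_le (SimpleGraph.Walk.cons hadj q)
    | succ j =>
      rw [SimpleGraph.Walk.getVert_cons_succ]
      simpa [Nat.succ_sub_succ] using ih j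

lemma dcount {V : Type*} [Fintype V] [DecidableEq V] (G : SimpleGraph V) [DecidableRel G.Adj]
    (f : V → ℚ) (P : V → Prop) [DecidablePred P] :
    ∑ y ∈ Finset.univ.filter P, ∑ w ∈ G.neighborFinset y, f w
      = ∑ w : V, f w * ((G.neighborFinset w).filter P).card := by
  have h1 : ∀ y : V, ∑ w ∈ G.neighborFinset y, f w = ∑ w : V, if G.Adj y w then f w else 0 := by
    intro y
    rw [SimpleGraph.neighborFinset_eq_filter, Finset.sum_filter]
  have h2 : ∀ w : V, (Finset.univ.filter P).filter (fun y => G.Adj y w)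
      = (G.neighborFinset w).filter P := by
    intro w
    ext y
    simp only [Finset.mem_filter, Finset.mem_univ, true_and, SimpleGraph.mem_neighborFinset]
    rw [SimpleGraph.adj_comm]
    exact and_comm
  calc ∑ y ∈ Finset.univ.filter P, ∑ w ∈ G.neighborFinset y, f w
      = ∑ y ∈ Finset.univ.filter P, ∑ w : V, if G.Adj y w then f w else 0 := by
        simp_rw [h1]
    _ = ∑ w : V, ∑ y ∈ Finset.univ.filter P, if G.Adj y w then f w else 0 := Finset.sum_comm
    _ = ∑ w : V, f w * ((G.neighborFinset w).filter P).card := by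
        refine Finset.sum_congr rfl fun w _ => ?_
        rw [← Finset.sum_filter, h2, Finset.sum_const, nsmul_eq_mul, mul_comm]



/-- Let `G` be a distance-regular graph of diameter `d` which is an antipodal double cover
(with antipodal map `a`). If `l` is a distance magic labeling of `G`, then
`l(x) + l(x') = |V(G)| + 1` for every `x`, and consequently for every `j ≤ d` and every `x`,
`∑_{y : d(x,y)=j} l(y) + ∑_{y : d(x,y)=d−j} l(y) = (|V(G)|+1)·|G_j(x)|`,
i.e. `l` is a `{j, d−j}`-magic labeling. -/
theorem stmt_17 {V : Type*} [Fintype V] [DecidableEq V]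
    (G : SimpleGraph V) [DecidableRel G.Adj] (hconn : G.Connected)
    (d : ℕ) (hdiam : ∀ x y : V, G.dist x y ≤ d)
    -- distance-regularity: intersection numbers b, c
    (b c : ℕ → ℕ)
    (hb : ∀ x y : V,
      ((G.neighborFinset y).filter (fun z => G.dist x z = G.dist x y + 1)).card
        = b (G.dist x y))
    (hc : ∀ x y : V,
      ((G.neighborFinset y).filter (fun z => G.dist x z + 1 = G.dist x y)).card
        = c (G.dist x y))
    -- antipodal double cover: `a x` is the unique vertex at distance `d` from `x`
    (a : V → V)
    (ha : ∀ x : V, G.dist x (a x) = d ∧ ∀ y : V, G.dist x y = d → y = a x)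
    -- `l` is a distance magic labeling
    (l : V ≃ Fin (Fintype.card V)) (k : ℕ)
    (hmagic : ∀ x : V, ∑ y ∈ G.neighborFinset x, ((l y : ℕ) + 1) = k) :
    (∀ x : V, ((l x : ℕ) + 1) + ((l (a x) : ℕ) + 1) = Fintype.card V + 1) ∧
    ∀ j : ℕ, j ≤ d → ∀ x : V,
      (∑ y ∈ Finset.univ.filter (fun y => G.dist x y = j), ((l y : ℕ) + 1))
        + (∑ y ∈ Finset.univ.filter (fun y => G.dist x y = d - j), ((l y : ℕ) + 1))
      = (Fintype.card V + 1) * (Finset.univ.filter (fun y => G.dist x y = j)).card := by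
  have hnon : Nonempty V := hconn.nonempty
  rcases Nat.eq_zero_or_pos d with hd0 | hd
  · -- degenerate case d = 0
    subst hd0
    have hall : ∀ x y : V, x = y := by
      intro x y
      have h1 := hdiam x y
      have h2 : G.dist x y = 0 := by omega
      exact (hconn.dist_eq_zero_iff.1 h2)
    obtain ⟨x0⟩ := hnon
    have hcard : Fintype.card V = 1 := Fintype.card_eq_one_iff.2 ⟨x0, fun y => (hall y x0)⟩
    have hl : ∀ x : V, (l x : ℕ) = 0 := by
      intro x
      have := (l x).isLt
      omega
    constructor
    · intro x
      rw [hl, hl, hcard]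
    · intro j hj x
      have hj0 : j = 0 := by omega
      subst hj0
      have hfil : Finset.univ.filter (fun y => G.dist x y = 0) = {x} := by
        ext y
        simp only [Finset.mem_filter, Finset.mem_univ, true_and, Finset.mem_singleton]
        constructor
        · intro _; exact (hall y x)
        · rintro rfl; exact SimpleGraph.dist_self
      simp only [Nat.sub_zero, hfil, Finset.sum_singleton, Finset.card_singleton, hl, hcard]
  · -- main case d ≥ 1
    have hinv : ∀ x : V, a (a x) = x := by
      intro x
      exact ((ha (a x)).2 x (by rw [SimpleGraph.dist_comm]; exact (ha x).1)).symm
    have hsphere0 : ∀ x : V, Finset.univ.filter (fun y => G.dist x y = 0) = {x} := by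
      intro x
      ext y
      simp only [Finset.mem_filter, Finset.mem_univ, true_and, Finset.mem_singleton]
      rw [hconn.dist_eq_zero_iff]
      exact eq_comm
    have hsphered : ∀ x : V, Finset.univ.filter (fun y => G.dist x y = d) = {a x} := by
      intro x
      ext y
      simp only [Finset.mem_filter, Finset.mem_univ, true_and, Finset.mem_singleton]
      constructor
      · exact (ha x).2 y
      · rintro rfl; exact (ha x).1
    have hF1 : ∀ j, j ≤ d → ∀ x : V, ∃ y : V, G.dist x y = j ∧ G.dist y (a x) = d - j := by
      intro j hj x
      obtain ⟨p, hp⟩ := hconn.exists_walk_length_eq_dist x (a x)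
      refine ⟨p.getVert j, ?_⟩
      have h1 := walkDistA hconn p j
      have h2 := walkDistB p j
      rw [hp, (ha x).1] at h2
      have h3 : d ≤ G.dist x (p.getVert j) + G.dist (p.getVert j) (a x) := by
        rw [← (ha x).1]; exact hconn.dist_triangle
      constructor <;> omega
    have hcpos : ∀ j, 1 ≤ j → j ≤ d → 1 ≤ c j := by
      intro j h1 h2
      obtain ⟨x⟩ := hnon
      obtain ⟨y, hy, -⟩ := hF1 j h2 x
      obtain ⟨q, hq⟩ := hconn.exists_walk_length_eq_dist y x
      have hql : q.length = j := by rw [hq, SimpleGraph.dist_comm, hy]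
      have hadj : G.Adj y (q.getVert 1) := by
        have := q.adj_getVert_succ (i := 0) (by omega)
        simpa using this
      have hd1 : G.dist (q.getVert 1) x ≤ j - 1 := by
        have := walkDistB q 1
        omega
      have hd2 : j ≤ G.dist x (q.getVert 1) + 1 := by
        have ht : G.dist x y ≤ G.dist x (q.getVert 1) + G.dist (q.getVert 1) y :=
          hconn.dist_triangle
        have hone : G.dist (q.getVert 1) y = 1 :=
          SimpleGraph.dist_eq_one_iff_adj.2 hadj.symm
        omega
      have hz : G.dist x (q.getVert 1) + 1 = j := by
        rw [SimpleGraph.dist_comm (u := q.getVert 1)] at hd1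
        omega
      have hcc := hc x y
      rw [hy] at hcc
      rw [← hcc]
      apply Finset.card_pos.2
      refine ⟨q.getVert 1, Finset.mem_filter.2 ⟨?_, hz⟩⟩
      rw [SimpleGraph.mem_neighborFinset]
      exact hadj
    have hbpos : ∀ j, j < d → ∀ x y : V, G.dist x y = j → 1 ≤ b j := by
      intro j hjd x y hy
      -- first find a good vertex y* on a geodesic
      obtain ⟨y', hy', hy2⟩ := hF1 j (le_of_lt hjd) x
      obtain ⟨q, hq⟩ := hconn.exists_walk_length_eq_dist y' (a x)
      have hql : q.length = d - j := by rw [hq, hy2]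
      have hadj : G.Adj y' (q.getVert 1) := by
        have := q.adj_getVert_succ (i := 0) (by omega)
        simpa using this
      have hd1 : G.dist (q.getVert 1) (a x) ≤ d - j - 1 := by
        have := walkDistB q 1
        omega
      have hd2 : d ≤ G.dist x (q.getVert 1) + G.dist (q.getVert 1) (a x) := by
        rw [← (ha x).1]; exact hconn.dist_triangle
      have hd3 : G.dist x (q.getVert 1) ≤ j + 1 := by
        have ht : G.dist x (q.getVert 1) ≤ G.dist x y' + G.dist y' (q.getVert 1) :=
          hconn.dist_triangle
        have hone : G.dist y' (q.getVert 1) = 1 := SimpleGraph.dist_eq_one_iff_adj.2 hadj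
        omega
      have hz : G.dist x (q.getVert 1) = j + 1 := by omega
      have hbb := hb x y'
      rw [hy'] at hbb
      rw [← hbb]
      apply Finset.card_pos.2
      refine ⟨q.getVert 1, Finset.mem_filter.2 ⟨?_, hz⟩⟩
      rw [SimpleGraph.mem_neighborFinset]
      exact hadj
    have hF5 : ∀ x y : V, G.dist y (a x) = d - G.dist x y := by
      have key : ∀ m : ℕ, ∀ x y : V, d - G.dist x y ≤ m → G.dist y (a x) = d - G.dist x y := by
        intro m
        induction m with
        | zero =>
          intro x y hm
          have h1 : G.dist x y = d := le_antisymm (hdiam x y) (by omega)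
          have h2 := (ha x).2 y h1
          subst h2
          rw [h1]
          simp [SimpleGraph.dist_self]
        | succ m ih =>
          intro x y hm
          by_cases hcase : d - G.dist x y ≤ m
          · exact ih x y hcase
          · have hj : G.dist x y < d := by omega
            have hb1 := hbpos (G.dist x y) hj x y rfl
            have hbb := hb x y
            rw [← hbb] at hb1
            obtain ⟨z, hz⟩ := Finset.card_pos.1 hb1
            simp only [Finset.mem_filter, SimpleGraph.mem_neighborFinset] at hz
            obtain ⟨hadj, hdz⟩ := hz
            have hz2 : G.dist z (a x) = d - G.dist x z := ih x z (by omega)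
            have hup : G.dist y (a x) ≤ G.dist y z + G.dist z (a x) := hconn.dist_triangle
            have hone : G.dist y z = 1 := SimpleGraph.dist_eq_one_iff_adj.2 hadj
            have hlow : d ≤ G.dist x y + G.dist y (a x) := by
              rw [← (ha x).1]; exact hconn.dist_triangle
            omega
      intro x y; exact key d x y (by omega)
    have hswap : ∀ j, j ≤ d → ∀ x : V,
        Finset.univ.filter (fun y => G.dist x y = d - j)
          = Finset.univ.filter (fun y => G.dist (a x) y = j) := by
      intro j hj x
      ext y
      simp only [Finset.mem_filter, Finset.mem_univ, true_and]
      constructor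
      · intro h
        have h5 := hF5 x y
        rw [h] at h5
        rw [SimpleGraph.dist_comm]
        omega
      · intro h
        have h5 := hF5 (a x) y
        rw [h, hinv] at h5
        rw [SimpleGraph.dist_comm]
        omega
    have hdeg : ∀ x : V, (G.neighborFinset x).card = b 0 := by
      intro x
      have hbb := hb x x
      rw [SimpleGraph.dist_self] at hbb
      rw [← hbb]
      congr 1
      symm
      apply (Finset.filter_eq_self).2
      intro z hz
      rw [zero_add]
      rw [SimpleGraph.mem_neighborFinset] at hz
      exact SimpleGraph.dist_eq_one_iff_adj.2 hz
    -- the fundamental recurrence, for an arbitrary weight function g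
    have hadjd : ∀ x y z : V, G.Adj y z → G.dist x z ≤ G.dist x y + 1 ∧ G.dist x y ≤ G.dist x z + 1 := by
      intro x y z hadj
      have h1 : G.dist x z ≤ G.dist x y + G.dist y z := hconn.dist_triangle
      have h2 : G.dist x y ≤ G.dist x z + G.dist z y := hconn.dist_triangle
      have h3 : G.dist y z = 1 := SimpleGraph.dist_eq_one_iff_adj.2 hadj
      have h4 : G.dist z y = 1 := SimpleGraph.dist_eq_one_iff_adj.2 hadj.symm
      omega
    have hrec : ∀ (g : V → ℚ) (x : V) (j : ℕ), 1 ≤ j →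
        ∑ y ∈ Finset.univ.filter (fun y => G.dist x y = j), ∑ w ∈ G.neighborFinset y, g w
          = (b (j-1) : ℚ) * ∑ y ∈ Finset.univ.filter (fun y => G.dist x y = j - 1), g y
          + ((b 0 : ℚ) - (b j : ℚ) - (c j : ℚ)) * ∑ y ∈ Finset.univ.filter (fun y => G.dist x y = j), g y
          + (c (j+1) : ℚ) * ∑ y ∈ Finset.univ.filter (fun y => G.dist x y = j + 1), g y := by
      intro g x j hj
      rw [dcount]
      have hcards : ∀ w : V, g w * (((G.neighborFinset w).filter (fun z => G.dist x z = j)).card : ℚ)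
          = (if G.dist x w = j - 1 then (b (j-1) : ℚ) * g w else 0)
          + (if G.dist x w = j then ((b 0 : ℚ) - (b j : ℚ) - (c j : ℚ)) * g w else 0)
          + (if G.dist x w = j + 1 then (c (j+1) : ℚ) * g w else 0) := by
        intro w
        by_cases h1 : G.dist x w = j - 1
        · have hfil : (G.neighborFinset w).filter (fun z => G.dist x z = j)
              = (G.neighborFinset w).filter (fun z => G.dist x z = G.dist x w + 1) := by
            apply Finset.filter_congr
            intro z _
            rw [h1]
            constructor <;> intro h' <;> omega
          rw [hfil, hb x w, h1]
          rw [if_pos rfl, if_neg (by omega), if_neg (by omega)]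
          ring
        · by_cases h2 : G.dist x w = j
          · -- the partition argument
            have hA := hb x w
            have hB := hc x w
            rw [h2] at hA hB
            have hcardN := hdeg w
            have hdisj1 : Disjoint ((G.neighborFinset w).filter (fun z => G.dist x z = j + 1))
                ((G.neighborFinset w).filter (fun z => G.dist x z + 1 = j)) := by
              apply Finset.disjoint_left.2
              intro z hz1 hz2
              simp only [Finset.mem_filter] at hz1 hz2
              omega
            have hdisj2 : Disjoint (((G.neighborFinset w).filter (fun z => G.dist x z = j + 1)) ∪
                ((G.neighborFinset w).filter (fun z => G.dist x z + 1 = j)))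
                ((G.neighborFinset w).filter (fun z => G.dist x z = j)) := by
              rw [Finset.disjoint_union_left]
              constructor <;>
              · apply Finset.disjoint_left.2
                intro z hz1 hz2
                simp only [Finset.mem_filter] at hz1 hz2
                omega
            have hcover : ((G.neighborFinset w).filter (fun z => G.dist x z = j + 1)) ∪
                ((G.neighborFinset w).filter (fun z => G.dist x z + 1 = j)) ∪
                ((G.neighborFinset w).filter (fun z => G.dist x z = j)) = G.neighborFinset w := by
              rw [← Finset.filter_or, ← Finset.filter_or]
              apply (Finset.filter_eq_self).2
              intro z hz
              rw [SimpleGraph.mem_neighborFinset] at hz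
              have := hadjd x w z hz
              omega
            have hcount : ((G.neighborFinset w).filter (fun z => G.dist x z = j + 1)).card
                + ((G.neighborFinset w).filter (fun z => G.dist x z + 1 = j)).card
                + ((G.neighborFinset w).filter (fun z => G.dist x z = j)).card
                = b 0 := by
              have hu := Finset.card_union_of_disjoint hdisj2
              rw [hcover, Finset.card_union_of_disjoint hdisj1] at hu
              omega
            have hAj : ((G.neighborFinset w).filter (fun z => G.dist x z = j + 1)).card = b j := by
              rw [← hA]
            have hBj : ((G.neighborFinset w).filter (fun z => G.dist x z + 1 = j)).card = c j := by
              rw [← hB]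
            rw [hAj, hBj] at hcount
            rw [if_neg (by omega), if_pos h2, if_neg (by omega)]
            have : (((G.neighborFinset w).filter (fun z => G.dist x z = j)).card : ℚ)
                = (b 0 : ℚ) - (b j : ℚ) - (c j : ℚ) := by
              have := hcount
              push_cast [← this]
              ring
            rw [this]
            ring
          · by_cases h3 : G.dist x w = j + 1
            · have hfil : (G.neighborFinset w).filter (fun z => G.dist x z = j)
                  = (G.neighborFinset w).filter (fun z => G.dist x z + 1 = G.dist x w) := by
                apply Finset.filter_congr
                intro z _
                rw [h3]
                constructor <;> intro h' <;> omega
              rw [hfil, hc x w, h3]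
              rw [if_neg (by omega), if_neg (by omega), if_pos rfl]
              ring
            · have hfil : (G.neighborFinset w).filter (fun z => G.dist x z = j) = ∅ := by
                apply Finset.filter_eq_empty_iff.2
                intro z hz
                rw [SimpleGraph.mem_neighborFinset] at hz
                have := hadjd x w z hz
                omega
              rw [hfil]
              rw [if_neg h1, if_neg h2, if_neg h3]
              simp
      calc ∑ w : V, g w * (((G.neighborFinset w).filter (fun z => G.dist x z = j)).card : ℚ)
          = ∑ w : V, ((if G.dist x w = j - 1 then (b (j-1) : ℚ) * g w else 0)
            + (if G.dist x w = j then ((b 0 : ℚ) - (b j : ℚ) - (c j : ℚ)) * g w else 0)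
            + (if G.dist x w = j + 1 then (c (j+1) : ℚ) * g w else 0)) := by
            exact Finset.sum_congr rfl fun w _ => hcards w
        _ = (∑ w : V, if G.dist x w = j - 1 then (b (j-1) : ℚ) * g w else 0)
            + (∑ w : V, if G.dist x w = j then ((b 0 : ℚ) - (b j : ℚ) - (c j : ℚ)) * g w else 0)
            + (∑ w : V, if G.dist x w = j + 1 then (c (j+1) : ℚ) * g w else 0) := by
            rw [Finset.sum_add_distrib, Finset.sum_add_distrib]
        _ = (b (j-1) : ℚ) * ∑ y ∈ Finset.univ.filter (fun y => G.dist x y = j - 1), g y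
          + ((b 0 : ℚ) - (b j : ℚ) - (c j : ℚ)) * ∑ y ∈ Finset.univ.filter (fun y => G.dist x y = j), g y
          + (c (j+1) : ℚ) * ∑ y ∈ Finset.univ.filter (fun y => G.dist x y = j + 1), g y := by
            rw [← Finset.sum_filter, ← Finset.sum_filter, ← Finset.sum_filter,
              Finset.mul_sum, Finset.mul_sum, Finset.mul_sum]
    set f : V → ℚ := fun y => ((l y : ℕ) : ℚ) + 1 with hf
    have hmagicQ : ∀ x : V, ∑ w ∈ G.neighborFinset x, f w = (k : ℚ) := by
      intro x
      rw [← hmagic x]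
      push_cast
      rfl
    have haffine : ∀ j, j ≤ d → ∃ K A B : ℚ, ∀ x : V,
        ((Finset.univ.filter (fun y => G.dist x y = j)).card : ℚ) = K ∧
        (∑ y ∈ Finset.univ.filter (fun y => G.dist x y = j), f y) = A + B * f x := by
      intro j
      induction j using Nat.strong_induction_on with
      | _ j ih =>
        rcases j with _ | j
        · intro _
          refine ⟨1, 0, 1, fun x => ?_⟩
          rw [hsphere0 x]
          constructor
          · simp
          · simp only [Finset.sum_singleton]
            ring
        rcases j with _ | m
        · intro _
          refine ⟨(b 0 : ℚ), (k : ℚ), 0, fun x => ?_⟩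
          have hone : Finset.univ.filter (fun y => G.dist x y = 1) = G.neighborFinset x := by
            ext y
            simp only [Finset.mem_filter, Finset.mem_univ, true_and,
              SimpleGraph.mem_neighborFinset]
            exact SimpleGraph.dist_eq_one_iff_adj
          rw [hone]
          constructor
          · exact_mod_cast congrArg (Nat.cast (R := ℚ)) (hdeg x)
          · rw [hmagicQ x]; ring
        · intro hm
          obtain ⟨K1, A1, B1, h1⟩ := ih (m+1) (by omega) (by omega)
          obtain ⟨K0, A0, B0, h0⟩ := ih m (by omega) (by omega)
          have hc2 : 1 ≤ c (m+1+1) := hcpos (m+1+1) (by omega) hm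
          have hcq : ((c (m+1+1) : ℕ) : ℚ) ≠ 0 := by
            exact_mod_cast (by omega : (c (m+1+1) : ℕ) ≠ 0)
          refine ⟨((b 0 : ℚ) * K1 - (b m : ℚ) * K0
              - ((b 0 : ℚ) - (b (m+1) : ℚ) - (c (m+1) : ℚ)) * K1) / (c (m+1+1) : ℚ),
            ((k : ℚ) * K1 - (b m : ℚ) * A0
              - ((b 0 : ℚ) - (b (m+1) : ℚ) - (c (m+1) : ℚ)) * A1) / (c (m+1+1) : ℚ),
            (-(b m : ℚ) * B0
              - ((b 0 : ℚ) - (b (m+1) : ℚ) - (c (m+1) : ℚ)) * B1) / (c (m+1+1) : ℚ),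
            fun x => ?_⟩
          have hKx := (h1 x).1
          have hK0x := (h0 x).1
          have hsum1x := (h1 x).2
          have hsum0x := (h0 x).2
          have r1 := hrec f x (m+1) (by omega)
          have r2 := hrec (fun _ => (1:ℚ)) x (m+1) (by omega)
          simp only [Nat.add_sub_cancel] at r1 r2
          have cst : ∀ (s : Finset V), ∑ y ∈ s, (1:ℚ) = (s.card : ℚ) := by simp
          have lhs1 : ∑ y ∈ Finset.univ.filter (fun y => G.dist x y = m+1),
              ∑ w ∈ G.neighborFinset y, f w = K1 * (k : ℚ) := by
            rw [Finset.sum_congr rfl (fun y _ => hmagicQ y), Finset.sum_const,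
              nsmul_eq_mul, hKx]
          have lhs2 : ∑ y ∈ Finset.univ.filter (fun y => G.dist x y = m+1),
              ∑ w ∈ G.neighborFinset y, (1:ℚ) = K1 * (b 0 : ℚ) := by
            have hdegQ : ∀ y : V, ∑ w ∈ G.neighborFinset y, (1:ℚ) = (b 0 : ℚ) := by
              intro y
              rw [Finset.sum_const, nsmul_eq_mul, mul_one]
              exact_mod_cast congrArg (Nat.cast (R := ℚ)) (hdeg y)
            rw [Finset.sum_congr rfl (fun y _ => hdegQ y), Finset.sum_const,
              nsmul_eq_mul, hKx]
          rw [lhs1, hsum0x, hsum1x] at r1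
          rw [lhs2, cst, cst, cst, hK0x, hKx] at r2
          constructor
          · rw [eq_div_iff hcq]
            linear_combination -r2
          · rw [div_mul_eq_mul_div, ← add_div, eq_div_iff hcq]
            linear_combination -r1
    -- total sum of labels
    have gauss : ∀ N : ℕ, 2 * ∑ i ∈ Finset.range N, (i : ℚ) = N * (N - 1) := by
      intro N
      induction N with
      | zero => simp
      | succ N ihN =>
        rw [Finset.sum_range_succ]
        push_cast
        push_cast at ihN
        ring_nf
        ring_nf at ihN
        nlinarith [ihN]
    have TS : 2 * ∑ y : V, f y = (Fintype.card V : ℚ) * ((Fintype.card V : ℚ) + 1) := by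
      have e1 : ∑ y : V, f y = ∑ i : Fin (Fintype.card V), (((i : ℕ) : ℚ) + 1) :=
        Equiv.sum_comp l (fun i => (((i : ℕ) : ℚ) + 1))
      have e2 : ∑ i : Fin (Fintype.card V), (((i : ℕ) : ℚ) + 1)
          = (∑ i ∈ Finset.range (Fintype.card V), (i : ℚ)) + (Fintype.card V : ℚ) := by
        rw [Finset.sum_add_distrib, Finset.sum_const, Finset.card_univ, Fintype.card_fin,
          nsmul_eq_mul, mul_one]
        congr 1
        exact Fin.sum_univ_eq_sum_range (fun i => (i : ℚ)) (Fintype.card V)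
      have e3 := gauss (Fintype.card V)
      rw [e1, e2]
      ring_nf
      ring_nf at e3
      linarith [e3]
    have hcardV : (0 : ℚ) < (Fintype.card V : ℚ) := by
      exact_mod_cast Fintype.card_pos
    have hfinj : ∀ x y : V, f x = f y → x = y := by
      intro x y hxy
      have : ((l x : ℕ) : ℚ) = ((l y : ℕ) : ℚ) := by
        simp only [hf] at hxy
        linarith
      have h2 : (l x : ℕ) = (l y : ℕ) := by exact_mod_cast this
      exact l.injective (Fin.val_injective h2)
    have hne : ∀ x : V, a x ≠ x := by
      intro x hx
      have := (ha x).1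
      rw [hx] at this
      rw [SimpleGraph.dist_self] at this
      omega
    -- part 1
    obtain ⟨Kd, Ad, Bd, hKABd⟩ := haffine d le_rfl
    have hTd : ∀ x : V, f (a x) = Ad + Bd * f x := by
      intro x
      have := (hKABd x).2
      rw [hsphered x, Finset.sum_singleton] at this
      exact this
    obtain ⟨x0⟩ := hnon
    have hnex0 : f (a x0) ≠ f x0 := fun h => hne x0 (hfinj _ _ h)
    have hB : Bd = -1 := by
      have e4 := hTd x0
      have e5 := hTd (a x0)
      rw [hinv x0] at e5
      -- f x0 = Ad + Bd * f (a x0)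
      have hBB : (Bd + 1) * (f x0 - f (a x0)) = 0 := by
        linear_combination e5 - e4
      have hd2 : f x0 - f (a x0) ≠ 0 := fun h => hnex0 (by linarith)
      rcases mul_eq_zero.1 hBB with h | h
      · linarith
      · exact absurd h hd2
    have habij : ∑ x : V, f (a x) = ∑ x : V, f x :=
      Function.Bijective.sum_comp (Function.Involutive.bijective hinv) f
    have hA : Ad = (Fintype.card V : ℚ) + 1 := by
      have e6 : ∑ x : V, f (a x) = ∑ x : V, (Ad + Bd * f x) :=
        Finset.sum_congr rfl fun x _ => hTd x
      have e6b : ∑ x : V, (Ad + Bd * f x)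
          = (Fintype.card V : ℚ) * Ad + Bd * ∑ x : V, f x := by
        rw [Finset.sum_add_distrib, Finset.sum_const, Finset.card_univ, nsmul_eq_mul,
          ← Finset.mul_sum]
      rw [habij, e6b, hB] at e6
      have : (Fintype.card V : ℚ) * Ad = (Fintype.card V : ℚ) * ((Fintype.card V : ℚ) + 1) := by
        linarith [TS]
      exact mul_left_cancel₀ (ne_of_gt hcardV) this
    have part1Q : ∀ x : V, f x + f (a x) = (Fintype.card V : ℚ) + 1 := by
      intro x
      rw [hTd x, hB, hA]
      ring
    constructor
    · intro x
      have := part1Q x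
      simp only [hf] at this
      exact_mod_cast (by push_cast; linarith : ((((l x : ℕ) + 1) + ((l (a x) : ℕ) + 1) : ℕ) : ℚ)
        = (((Fintype.card V + 1 : ℕ)) : ℚ))
    · -- part 2
      intro j hj x
      obtain ⟨K, A, B, hKAB⟩ := haffine j hj
      -- column sums
      have hsumT : ∑ z : V, (∑ y ∈ Finset.univ.filter (fun y => G.dist z y = j), f y)
          = K * ∑ y : V, f y := by
        calc ∑ z : V, (∑ y ∈ Finset.univ.filter (fun y => G.dist z y = j), f y)
            = ∑ z : V, ∑ y : V, if G.dist z y = j then f y else 0 := by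
              refine Finset.sum_congr rfl fun z _ => ?_
              rw [Finset.sum_filter]
          _ = ∑ y : V, ∑ z : V, if G.dist z y = j then f y else 0 := Finset.sum_comm
          _ = ∑ y : V, f y * K := by
              refine Finset.sum_congr rfl fun y _ => ?_
              rw [← Finset.sum_filter, Finset.sum_const, nsmul_eq_mul, mul_comm]
              congr 1
              have : Finset.univ.filter (fun z => G.dist z y = j)
                  = Finset.univ.filter (fun z => G.dist y z = j) := by
                apply Finset.filter_congr
                intro z _
                rw [SimpleGraph.dist_comm]
              rw [this]
              exact (hKAB y).1
          _ = K * ∑ y : V, f y := by rw [← Finset.sum_mul, mul_comm]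
      have hsumT2 : ∑ z : V, (∑ y ∈ Finset.univ.filter (fun y => G.dist z y = j), f y)
          = (Fintype.card V : ℚ) * A + B * ∑ y : V, f y := by
        rw [Finset.sum_congr rfl (fun z _ => (hKAB z).2), Finset.sum_add_distrib,
          Finset.sum_const, Finset.card_univ, nsmul_eq_mul, ← Finset.mul_sum]
      have key : 2 * A + B * ((Fintype.card V : ℚ) + 1) = K * ((Fintype.card V : ℚ) + 1) := by
        have e7 : (Fintype.card V : ℚ) * A + B * ∑ y : V, f y = K * ∑ y : V, f y := by
          rw [← hsumT2, hsumT]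
        have : (Fintype.card V : ℚ) * (2 * A + B * ((Fintype.card V : ℚ) + 1))
            = (Fintype.card V : ℚ) * (K * ((Fintype.card V : ℚ) + 1)) := by
          linear_combination 2 * e7 + (K - B) * TS
        exact mul_left_cancel₀ (ne_of_gt hcardV) this
      have hswapx := hswap j hj x
      have goalQ : (∑ y ∈ Finset.univ.filter (fun y => G.dist x y = j), f y)
          + (∑ y ∈ Finset.univ.filter (fun y => G.dist x y = d - j), f y)
          = ((Fintype.card V : ℚ) + 1) * K := by
        rw [hswapx, (hKAB x).2, (hKAB (a x)).2]
        linear_combination key + B * (part1Q x)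
      have hcardK := (hKAB x).1
      simp only [hf] at goalQ
      rw [← Nat.cast_inj (R := ℚ)]
      push_cast
      linear_combination goalQ - ((Fintype.card V : ℚ) + 1) * hcardK
end

section
/- If n ≡ 2 (mod 4) and the hypercube Qₙ admits a distance magic labeling l, then l(x) + l(x̄) = 2ⁿ + 1 for every vertex x, where x̄ = x + 𝟏 is the antipode of x; and the hypercube Qₙ admits no distance magic labeling when n is even and n ≢ 2 (mod 4). -/
namespace Stmt18Aux
variable {n : ℕ}

def sgn (a : ZMod 2) : ℤ := if a = 0 then 1 else -1

lemma sgn_add (a b : ZMod 2) : sgn (a + b) = sgn a * sgn b := by revert a b; decide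

lemma sgn_zero : sgn 0 = 1 := rfl
lemma sgn_one : sgn 1 = -1 := rfl

def ip (s x : Fin n → ZMod 2) : ZMod 2 := ∑ i, s i * x i

def ch (s x : Fin n → ZMod 2) : ℤ := sgn (ip s x)

lemma ip_add_right (s x y : Fin n → ZMod 2) : ip s (x + y) = ip s x + ip s y := by
  simp [ip, mul_add, Finset.sum_add_distrib]

lemma ip_add_left (s t x : Fin n → ZMod 2) : ip (s + t) x = ip s x + ip t x := by
  simp [ip, add_mul, Finset.sum_add_distrib]

lemma ch_add_right (s x y : Fin n → ZMod 2) : ch s (x + y) = ch s x * ch s y := by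
  rw [ch, ip_add_right, sgn_add]; rfl

lemma ip_zero_right (s : Fin n → ZMod 2) : ip s 0 = 0 := by simp [ip]

lemma ip_zero_left (x : Fin n → ZMod 2) : ip 0 x = 0 := by
  simp [ip]

def delta (t : Fin n) : Fin n → ZMod 2 := fun j => if j = t then 1 else 0

lemma ip_delta (s : Fin n → ZMod 2) (t : Fin n) : ip s (delta t) = s t := by
  simp [ip, delta, Finset.sum_ite_eq']

lemma delta_add_delta (x : Fin n → ZMod 2) (t : Fin n) : x + delta t + delta t = x := by
  funext j
  simp only [Pi.add_apply, delta]
  split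
  · rw [add_assoc, show (1:ZMod 2) + 1 = 0 from rfl, add_zero]
  · rw [add_zero, add_zero]


lemma delta_inj {t t' : Fin n} (h : delta t = delta t') : t = t' := by
  by_contra hne
  have := congrFun h t
  simp [delta, hne] at this

lemma sum_ch_ne_zero {v : Fin n → ZMod 2} (hv : v ≠ 0) : ∑ s, ch s v = 0 := by
  obtain ⟨i, hi⟩ : ∃ i, v i ≠ 0 := by
    by_contra h
    push_neg at h
    exact hv (funext h)
  have hvi : v i = 1 := by
    have := hi; revert this; generalize v i = a; revert a; decide
  have key : ∑ s, ch s v = ∑ s, ch (s + delta i) v := by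
    exact (Fintype.sum_equiv (Equiv.addRight (delta i)) _ _ (fun s => rfl)).symm
  have step : ∀ s : Fin n → ZMod 2, ch (s + delta i) v = - ch s v := by
    intro s
    have : ip (delta i) v = 1 := by
      simpa [ip, delta, Finset.sum_ite_eq] using hvi
    rw [ch, ip_add_left, this, sgn_add, sgn_one, ch]
    ring
  have h1 : ∑ s, ch s v = - ∑ s, ch s v := by
    conv_lhs => rw [key]
    simp [step]
  linarith

lemma sum_ch_zero : ∑ s : Fin n → ZMod 2, ch s 0 = 2 ^ n := by
  simp [ch, ip_zero_right, sgn_zero, Finset.card_univ]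

lemma nbhd_eq (x : Fin n → ZMod 2) :
    Finset.univ.filter (fun y => hammingDist x y = 1) =
      Finset.univ.image (fun t : Fin n => x + delta t) := by
  ext y
  simp only [Finset.mem_filter, Finset.mem_univ, true_and, Finset.mem_image]
  constructor
  · intro hy
    rw [hammingDist, Finset.card_eq_one] at hy
    obtain ⟨a, ha⟩ := hy
    refine ⟨a, ?_⟩
    symm
    funext j
    by_cases hj : j = a
    · subst hj
      have hmem : j ∈ Finset.univ.filter (fun i => x i ≠ y i) := by rw [ha]; simp
      simp only [Finset.mem_filter] at hmem
      have : y j = x j + 1 := by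
        have := hmem.2; revert this; generalize x j = a; generalize y j = b
        revert a b; decide
      simp [delta, this]
    · have hmem : j ∉ Finset.univ.filter (fun i => x i ≠ y i) := by rw [ha]; simp [hj]
      simp only [Finset.mem_filter, Finset.mem_univ, true_and, not_not] at hmem
      simp [delta, hj, ← hmem]
  · rintro ⟨t, rfl⟩
    rw [hammingDist]
    have : (Finset.univ.filter fun i => x i ≠ (x + delta t) i) = {t} := by
      ext j
      simp only [Finset.mem_filter, Finset.mem_univ, true_and, Finset.mem_singleton,
        Pi.add_apply, delta]
      constructor
      · intro hj
        by_contra hne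
        simp [hne] at hj
      · intro hj
        subst hj
        refine Finset.mem_filter.mpr ⟨Finset.mem_univ _, ?_⟩
        show x j ≠ x j + (if j = j then (1 : ZMod 2) else 0)
        rw [if_pos rfl]
        generalize x j = a; revert a; decide
    rw [this, Finset.card_singleton]

lemma sum_nbhd (x : Fin n → ZMod 2) (g : (Fin n → ZMod 2) → ℤ) :
    ∑ y ∈ Finset.univ.filter (fun y => hammingDist x y = 1), g y =
      ∑ t : Fin n, g (x + delta t) := by
  rw [nbhd_eq, Finset.sum_image]
  intro t _ t' _ h
  exact delta_inj (by have := add_left_cancel h; exact this)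


def wt (s : Fin n → ZMod 2) : ℕ := (Finset.univ.filter (fun i => s i = 1)).card

lemma sum_sgn (s : Fin n → ZMod 2) : ∑ t, sgn (s t) = (n : ℤ) - 2 * wt s := by
  have h : ∀ t, sgn (s t) = 1 - 2 * (if s t = 1 then (1:ℤ) else 0) := by
    intro t; generalize s t = a; revert a; decide
  rw [Finset.sum_congr rfl (fun t _ => h t), Finset.sum_sub_distrib]
  simp [wt, Finset.sum_ite, Finset.sum_const, mul_comm]

lemma sum_coords (s : Fin n → ZMod 2) : ∑ i, s i = (wt s : ZMod 2) := by
  rw [← Finset.sum_filter_add_sum_filter_not Finset.univ (fun i => s i = 1)]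
  have h2 : ∑ i ∈ Finset.univ.filter (fun i => ¬ s i = 1), s i = 0 := by
    apply Finset.sum_eq_zero
    intro i hi
    simp only [Finset.mem_filter] at hi
    have := hi.2; revert this; generalize s i = a; revert a; decide
  have h1 : ∑ i ∈ Finset.univ.filter (fun i => s i = 1), s i
      = ∑ _i ∈ Finset.univ.filter (fun i => s i = 1), (1 : ZMod 2) := by
    apply Finset.sum_congr rfl
    intro i hi
    simpa using (Finset.mem_filter.mp hi).2
  rw [h1, h2, add_zero, Finset.sum_const, wt, nsmul_eq_mul, mul_one]

lemma add_self (x : Fin n → ZMod 2) : x + x = 0 := by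
  funext i
  simp only [Pi.add_apply, Pi.zero_apply]
  generalize x i = a; revert a; decide

lemma ip_comm (s x : Fin n → ZMod 2) : ip s x = ip x s := by
  simp [ip, mul_comm]

lemma ch_delta (s : Fin n → ZMod 2) (t : Fin n) : ch s (delta t) = sgn (s t) := by
  rw [ch, ip_delta]

lemma sum_ch_snd_ne_zero {s : Fin n → ZMod 2} (hs : s ≠ 0) :
    ∑ y, ch s y = 0 := by
  have : ∀ y : Fin n → ZMod 2, ch s y = ch y s := fun y => by rw [ch, ch, ip_comm]
  rw [Finset.sum_congr rfl (fun y _ => this y)]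
  exact sum_ch_ne_zero hs

lemma wt_zero : wt (0 : Fin n → ZMod 2) = 0 := by
  simp only [wt, Finset.card_eq_zero, Finset.filter_eq_empty_iff]
  intro i _
  simp only [Pi.zero_apply]
  decide

section Main
variable (l : (Fin n → ZMod 2) ≃ Fin (2 ^ n))

def f (x : Fin n → ZMod 2) : ℤ := (l x : ℤ) + 1

def F (s : Fin n → ZMod 2) : ℤ := ∑ y, ch s y * f l y

lemma inversion (x : Fin n → ZMod 2) : ∑ s, ch s x * F l s = 2 ^ n * f l x := by
  have step1 : ∑ s, ch s x * F l s = ∑ y, (∑ s, ch s (x + y)) * f l y := by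
    simp only [F, Finset.mul_sum]
    rw [Finset.sum_comm]
    apply Finset.sum_congr rfl
    intro y _
    rw [Finset.sum_mul]
    apply Finset.sum_congr rfl
    intro s _
    rw [ch_add_right]; ring
  rw [step1]
  have hz : ∀ y ∈ Finset.univ, y ≠ x → (∑ s, ch s (x + y)) * f l y = 0 := by
    intro y _ hy
    rw [sum_ch_ne_zero, zero_mul]
    intro hxy
    apply hy
    calc y = x + (x + y) := by rw [← add_assoc, add_self, zero_add]
      _ = x := by rw [hxy, add_zero]
  rw [Finset.sum_eq_single x hz (fun hx => absurd (Finset.mem_univ x) hx), add_self, sum_ch_zero]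

lemma magic_fourier (k : ℕ) (h : ∀ x, ∑ t, f l (x + delta t) = (k : ℤ))
    {s : Fin n → ZMod 2} (hs : s ≠ 0) : ((n : ℤ) - 2 * wt s) * F l s = 0 := by
  calc ((n : ℤ) - 2 * wt s) * F l s
      = ∑ t, sgn (s t) * F l s := by rw [← sum_sgn, Finset.sum_mul]
    _ = ∑ t, ∑ y, ch s y * f l (y + delta t) := by
        apply Finset.sum_congr rfl
        intro t _
        have hchg : ∀ y, ch s (y + delta t) * f l (y + delta t + delta t)
            = sgn (s t) * (ch s y * f l y) := by
          intro y
          rw [delta_add_delta, ch_add_right, ch_delta, ch]; ring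
        calc sgn (s t) * F l s = ∑ y, sgn (s t) * (ch s y * f l y) := by
              rw [F, Finset.mul_sum]
          _ = ∑ y, ch s (y + delta t) * f l (y + delta t + delta t) := by
              simp only [hchg]
          _ = ∑ y, ch s y * f l (y + delta t) :=
              Equiv.sum_comp (Equiv.addRight (delta t))
                (fun y => ch s y * f l (y + delta t))
    _ = ∑ y, ch s y * ∑ t, f l (y + delta t) := by
        rw [Finset.sum_comm]
        simp [Finset.mul_sum]
    _ = ∑ y, ch s y * (k : ℤ) := by simp only [h]
    _ = 0 := by rw [← Finset.sum_mul, sum_ch_snd_ne_zero hs, zero_mul]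

lemma F_zero : 2 * F l 0 = 2 ^ n * (2 ^ n + 1) := by
  have h1 : F l 0 = ∑ y, f l y := by
    simp [F, ch, ip_zero_left, sgn_zero]
  have h2 : ∑ y, f l y = ∑ j : Fin (2 ^ n), ((j : ℤ) + 1) :=
    Equiv.sum_comp l (fun j : Fin (2 ^ n) => (j : ℤ) + 1)
  have hm : 1 ≤ 2 ^ n := Nat.one_le_two_pow
  have key : (∑ i ∈ Finset.range (2 ^ n), (i : ℤ)) * 2 = 2 ^ n * (2 ^ n - 1) := by
    have h3 := congrArg (Nat.cast : ℕ → ℤ) (Finset.sum_range_id_mul_two (2 ^ n))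
    push_cast [hm] at h3
    convert h3 using 2
  rw [h1, h2, Fin.sum_univ_eq_sum_range (fun j => (j : ℤ) + 1), Finset.sum_add_distrib,
    Finset.sum_const, Finset.card_range]
  push_cast [nsmul_eq_mul]
  linarith

lemma convert_hyp (k : ℕ)
    (h : ∀ x : Fin n → ZMod 2,
      ∑ y ∈ Finset.univ.filter (fun y => hammingDist x y = 1), ((l y : ℕ) + 1) = k) :
    ∀ x, ∑ t, f l (x + delta t) = (k : ℤ) := by
  intro x
  calc ∑ t, f l (x + delta t)
      = ∑ y ∈ Finset.univ.filter (fun y => hammingDist x y = 1), f l y :=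
        (sum_nbhd x (f l)).symm
    _ = (k : ℤ) := by
        rw [← h x]
        push_cast
        rfl

lemma antipode (k : ℕ) (h : ∀ x, ∑ t, f l (x + delta t) = (k : ℤ)) (ε : ℤ)
    (hε : ∀ w : ℕ, n = 2 * w → sgn ((w : ZMod 2)) = ε) (x : Fin n → ZMod 2) :
    2 ^ n * f l (x + fun _ => 1) = (1 - ε) * F l 0 + ε * (2 ^ n * f l x) := by
  have hone : ∀ s : Fin n → ZMod 2,
      ch s (x + fun _ => 1) = ch s x * sgn ((wt s : ZMod 2)) := by
    intro s
    rw [ch_add_right]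
    congr 1
    have hip : ip s (fun _ => 1) = (wt s : ZMod 2) := by
      rw [← sum_coords]; simp [ip]
    rw [ch, hip]
  have per : ∀ s : Fin n → ZMod 2, ch s (x + fun _ => 1) * F l s
      = ε * (ch s x * F l s) + (if s = 0 then (1 - ε) * F l 0 else 0) := by
    intro s
    by_cases hs : s = 0
    · subst hs
      rw [hone, wt_zero, if_pos rfl]
      have hch : ch (0 : Fin n → ZMod 2) x = 1 := by rw [ch, ip_zero_left, sgn_zero]
      rw [hch, Nat.cast_zero, sgn_zero]
      ring
    · rw [if_neg hs, add_zero, hone]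
      by_cases hF : F l s = 0
      · rw [hF]; ring
      · have hmag := magic_fourier l k h hs
        have hnw : (n : ℤ) = 2 * wt s := by
          rcases mul_eq_zero.mp hmag with h1 | h1
          · linarith
          · exact absurd h1 hF
        have hn2 : n = 2 * wt s := by exact_mod_cast hnw
        rw [hε (wt s) hn2]
        ring
  calc 2 ^ n * f l (x + fun _ => 1)
      = ∑ s, ch s (x + fun _ => 1) * F l s := (inversion l _).symm
    _ = ∑ s, (ε * (ch s x * F l s) + if s = 0 then (1 - ε) * F l 0 else 0) :=
        Finset.sum_congr rfl (fun s _ => per s)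
    _ = ε * (∑ s, ch s x * F l s) + (1 - ε) * F l 0 := by
        rw [Finset.sum_add_distrib, ← Finset.mul_sum,
          Finset.sum_ite_eq' Finset.univ (0 : Fin n → ZMod 2)]
        simp
    _ = (1 - ε) * F l 0 + ε * (2 ^ n * f l x) := by rw [inversion]; ring

end Main
end Stmt18Aux

open Stmt18Aux

/-- If `n ≡ 2 (mod 4)` and `l` is a distance magic labeling of the hypercube `Qₙ`, then
`l(x) + l(x̄) = 2ⁿ + 1` for every vertex `x` (where `x̄ = x + 𝟏` is the antipode);
and `Qₙ` admits no distance magic labeling when `n` is even and `n ≢ 2 (mod 4)`. -/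
theorem stmt_18 (n : ℕ) (hn : 1 ≤ n) :
    (n % 4 = 2 →
      ∀ (l : (Fin n → ZMod 2) ≃ Fin (2 ^ n)) (k : ℕ),
        (∀ x : Fin n → ZMod 2,
          ∑ y ∈ Finset.univ.filter (fun y => hammingDist x y = 1), ((l y : ℕ) + 1) = k) →
        ∀ x : Fin n → ZMod 2,
          ((l x : ℕ) + 1) + ((l (x + fun _ => 1) : ℕ) + 1) = 2 ^ n + 1) ∧
    (Even n → n % 4 ≠ 2 →
      ¬ ∃ (l : (Fin n → ZMod 2) ≃ Fin (2 ^ n)) (k : ℕ),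
        ∀ x : Fin n → ZMod 2,
          ∑ y ∈ Finset.univ.filter (fun y => hammingDist x y = 1), ((l y : ℕ) + 1) = k) := by
  constructor
  · intro hn4 l k h x
    have hm := convert_hyp l k h
    have hε : ∀ w : ℕ, n = 2 * w → sgn ((w : ZMod 2)) = -1 := by
      intro w hw
      have hodd : w % 2 = 1 := by omega
      have hcast : (w : ZMod 2) = 1 := by
        rw [← ZMod.natCast_mod w 2, hodd]; rfl
      rw [hcast]; rfl
    have key := antipode l k hm (-1) hε x
    have hF := F_zero l
    have hpow : (0 : ℤ) < 2 ^ n := by positivity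
    have h2 : (2 : ℤ) ^ n * (f l x + f l (x + fun _ => 1)) = 2 ^ n * ((2 : ℤ) ^ n + 1) := by
      ring_nf
      ring_nf at key hF
      linarith
    have h3 : f l x + f l (x + fun _ => 1) = (2 : ℤ) ^ n + 1 :=
      mul_left_cancel₀ (ne_of_gt hpow) h2
    have h4 : ((l x : ℤ) + 1) + ((l (x + fun _ => 1) : ℤ) + 1) = 2 ^ n + 1 := h3
    exact_mod_cast h4
  · intro heven hn4 ⟨l, k, h⟩
    have hn0 : n % 4 = 0 := by
      obtain ⟨m, hm⟩ := heven
      omega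
    have hm := convert_hyp l k h
    have hε : ∀ w : ℕ, n = 2 * w → sgn ((w : ZMod 2)) = 1 := by
      intro w hw
      have hev : w % 2 = 0 := by omega
      have hcast : (w : ZMod 2) = 0 := by
        rw [← ZMod.natCast_mod w 2, hev]; rfl
      rw [hcast]; rfl
    have key := antipode l k hm 1 hε 0
    have hpow : (0 : ℤ) < 2 ^ n := by positivity
    have h3 : f l (0 + fun _ => 1) = f l 0 := by
      have := key
      ring_nf at this
      nlinarith
    have h4 : (l (0 + fun _ => 1) : ℤ) = (l 0 : ℤ) := by
      have : ((l (0 + fun _ => 1) : ℤ) + 1) = ((l 0 : ℤ) + 1) := h3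
      linarith
    have h5 : l (0 + fun _ => 1) = l 0 := by
      apply Fin.ext
      exact_mod_cast h4
    have h6 : (0 + fun _ => (1 : ZMod 2)) = (0 : Fin n → ZMod 2) := l.injective h5
    have h7 := congrFun h6 ⟨0, hn⟩
    simp at h7
end

section
/- Suppose n ≡ 2 (mod 4) and Qₙ admits a distance magic labeling l (viewed as a real vector indexed by 𝔽₂ⁿ with A₁l ∈ span{𝟏}). Then for every nonempty set D of odd integers in {1,...,n}, l is also a D-magic labeling, i.e., (∑_{i ∈ D} A_i) l ∈ span{𝟏}. -/
open Finset

lemma zmod2_ne (a : ZMod 2) (h : a ≠ 0) : a = 1 := by revert h; revert a; decide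

lemma norm_single (n : ℕ) (j : Fin n) : hammingNorm (Pi.single j 1 : Fin n → ZMod 2) = 1 := by
  unfold hammingNorm
  rw [Finset.card_eq_one]
  refine ⟨j, ?_⟩
  ext k
  simp only [mem_filter, mem_univ, true_and, mem_singleton, Pi.single_apply]
  constructor
  · intro h; by_contra hc; simp [hc] at h
  · intro h; simp [h]

lemma norm_eq_one (n : ℕ) (t : Fin n → ZMod 2) (ht : hammingNorm t = 1) :
    ∃ j, t = Pi.single j 1 := by
  unfold hammingNorm at ht
  rw [Finset.card_eq_one] at ht
  obtain ⟨j, hj⟩ := ht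
  refine ⟨j, ?_⟩
  ext k
  have hiff : t k ≠ 0 ↔ k = j := by
    rw [← Finset.mem_singleton, ← hj]; simp
  by_cases h : k = j
  · subst h
    rw [zmod2_ne (t k) (hiff.mpr rfl), Pi.single_apply]
    simp
  · have h0 : t k = 0 := by by_contra hc; exact h (hiff.mp hc)
    simp [h0, Pi.single_apply, h]

lemma single_injective (n : ℕ) : Function.Injective (fun j : Fin n => (Pi.single j 1 : Fin n → ZMod 2)) := by
  intro j k h
  by_contra hc
  have := congrFun h j
  simp [Pi.single_apply, hc] at this

lemma sum_weight_one (n : ℕ) (g : (Fin n → ZMod 2) → ℝ) :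
    ∑ t : Fin n → ZMod 2, (if hammingNorm t = 1 then g t else 0)
      = ∑ j : Fin n, g (Pi.single j 1) := by
  rw [← Finset.sum_filter]
  have himg : ({t | hammingNorm t = 1} : Finset (Fin n → ZMod 2))
      = Finset.image (fun j : Fin n => (Pi.single j 1 : Fin n → ZMod 2)) univ := by
    ext t
    simp only [mem_filter, mem_univ, true_and, mem_image]
    constructor
    · intro h; obtain ⟨j, hj⟩ := norm_eq_one n t h; exact ⟨j, hj.symm⟩
    · rintro ⟨j, rfl⟩; exact norm_single n j
  rw [himg, Finset.sum_image (fun a _ b _ h => single_injective n h)]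

lemma norm_add_single_zero (n : ℕ) (s : Fin n → ZMod 2) (j : Fin n) (h : s j = 0) :
    hammingNorm (s + Pi.single j 1) = hammingNorm s + 1 := by
  unfold hammingNorm
  have : ({i | (s + Pi.single j 1 : Fin n → ZMod 2) i ≠ 0} : Finset (Fin n))
      = insert j ({i | s i ≠ 0} : Finset (Fin n)) := by
    ext k
    simp only [mem_filter, mem_univ, true_and, mem_insert, Pi.add_apply, Pi.single_apply]
    by_cases hk : k = j
    · subst hk; simp [h]
    · simp [hk]
  rw [this, Finset.card_insert_of_notMem (by simp [h])]

lemma norm_add_single_one (n : ℕ) (s : Fin n → ZMod 2) (j : Fin n) (h : s j ≠ 0) :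
    hammingNorm (s + Pi.single j 1) + 1 = hammingNorm s := by
  have h1 : s j = 1 := zmod2_ne _ h
  unfold hammingNorm
  have : ({i | s i ≠ 0} : Finset (Fin n))
      = insert j ({i | (s + Pi.single j 1 : Fin n → ZMod 2) i ≠ 0} : Finset (Fin n)) := by
    ext k
    simp only [mem_filter, mem_univ, true_and, mem_insert, Pi.add_apply, Pi.single_apply]
    by_cases hk : k = j
    · subst hk; simp [h1, h]
    · simp [hk]
  rw [this, Finset.card_insert_of_notMem (by simp [h1]; decide)]

lemma card_zero_coords (n : ℕ) (s : Fin n → ZMod 2) :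
    #({j | s j = 0} : Finset (Fin n)) + hammingNorm s = n := by
  unfold hammingNorm
  have h := Finset.card_filter_add_card_filter_not (s := (univ : Finset (Fin n))) (p := fun j => s j = 0)
  simp only [Finset.card_univ, Fintype.card_fin] at h
  simpa using h

lemma count_step (n i : ℕ) (s : Fin n → ZMod 2) :
    ∑ j : Fin n, (if hammingNorm (s + Pi.single j 1) = i then (1:ℝ) else 0)
      = (if hammingNorm s = i + 1 then ((i:ℝ)+1) else 0)
        + (if hammingNorm s + 1 = i then ((n:ℝ) - (i:ℝ) + 1) else 0) := by
  classical
  rw [← Finset.sum_filter_add_sum_filter_not univ (fun j => s j = 0)]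
  have h1 : ∑ j ∈ ({j | s j = 0} : Finset (Fin n)),
      (if hammingNorm (s + Pi.single j 1) = i then (1:ℝ) else 0)
      = (if hammingNorm s + 1 = i then ((n:ℝ) - (i:ℝ) + 1) else 0) := by
    have : ∀ j ∈ ({j | s j = 0} : Finset (Fin n)),
        (if hammingNorm (s + Pi.single j 1) = i then (1:ℝ) else 0)
        = (if hammingNorm s + 1 = i then (1:ℝ) else 0) := by
      intro j hj
      simp only [mem_filter, mem_univ, true_and] at hj
      rw [norm_add_single_zero n s j hj]
    rw [Finset.sum_congr rfl this, Finset.sum_const, nsmul_eq_mul]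
    by_cases hc : hammingNorm s + 1 = i
    · simp only [hc, if_true, mul_one]
      have hcard : (#({j | s j = 0} : Finset (Fin n)) : ℝ) = (n:ℝ) - (i:ℝ) + 1 := by
        have := card_zero_coords n s
        have hn : hammingNorm s = i - 1 := by omega
        have hle : hammingNorm s ≤ n := by
          have := card_zero_coords n s; omega
        push_cast [← this, ← hc]
        ring
      exact hcard
    · simp [hc]
  have h2 : ∑ j ∈ ({j | s j = 0} : Finset (Fin n))ᶜ ∪ ∅,
      (0:ℝ) = 0 := by simp
  have h2' : ∑ j ∈ (univ.filter (fun j => ¬ s j = 0)),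
      (if hammingNorm (s + Pi.single j 1) = i then (1:ℝ) else 0)
      = (if hammingNorm s = i + 1 then ((i:ℝ)+1) else 0) := by
    have heq : ∀ j ∈ (univ.filter (fun j => ¬ s j = 0)),
        (if hammingNorm (s + Pi.single j 1) = i then (1:ℝ) else 0)
        = (if hammingNorm s = i + 1 then (1:ℝ) else 0) := by
      intro j hj
      simp only [mem_filter, mem_univ, true_and] at hj
      have hflip := norm_add_single_one n s j hj
      congr 1
      simp only [eq_iff_iff]
      omega
    rw [Finset.sum_congr rfl heq, Finset.sum_const, nsmul_eq_mul]
    have hcard : #(univ.filter (fun j => ¬ s j = 0)) = hammingNorm s := rfl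
    by_cases hc : hammingNorm s = i + 1
    · simp only [hc, if_true, mul_one, hcard, hc]
      push_cast
      ring
    · simp [hc]
  rw [h1, h2']
  ring

lemma dist_eq_norm_add (n : ℕ) (u v : Fin n → ZMod 2) :
    hammingDist u v = hammingNorm (u + v) := by
  rw [hammingDist_eq_hammingNorm]
  congr 1
  funext k
  simp [sub_eq_add_neg, CharTwo.neg_eq]

lemma distMatrix_rec (n i : ℕ) (hi : 1 ≤ i) :
    distMatrix n 1 * distMatrix n i
      = ((i:ℝ)+1) • distMatrix n (i+1) + ((n:ℝ) - (i:ℝ) + 1) • distMatrix n (i-1) := by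
  ext u w
  rw [Matrix.mul_apply]
  have hre : ∑ v, distMatrix n 1 u v * distMatrix n i v w
      = ∑ t, distMatrix n 1 u (u + t) * distMatrix n i (u + t) w :=
    (Fintype.sum_equiv (Equiv.addLeft u) _ _ (fun t => rfl)).symm
  rw [hre]
  have hA1 : ∀ t, distMatrix n 1 u (u + t) = if hammingNorm t = 1 then (1:ℝ) else 0 := by
    intro t
    unfold distMatrix
    rw [dist_eq_norm_add]
    have h : u + (u + t) = t := by
      funext k
      simp [← add_assoc, CharTwo.add_self_eq_zero]
    rw [h]
  simp_rw [hA1, ite_mul, one_mul, zero_mul]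
  rw [sum_weight_one n (fun t => distMatrix n i (u + t) w)]
  have hAi : ∀ j : Fin n, distMatrix n i (u + Pi.single j 1) w
      = if hammingNorm ((u + w) + Pi.single j 1) = i then (1:ℝ) else 0 := by
    intro j
    unfold distMatrix
    rw [dist_eq_norm_add, add_right_comm]
  simp_rw [hAi]
  rw [count_step n i (u + w)]
  simp only [Matrix.add_apply, Matrix.smul_apply, smul_eq_mul]
  unfold distMatrix
  rw [dist_eq_norm_add]
  congr 1
  · by_cases hc : hammingNorm (u + w) = i + 1 <;> simp [hc]
  · have hiff : hammingNorm (u + w) + 1 = i ↔ hammingNorm (u + w) = i - 1 := by omega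
    by_cases hc : hammingNorm (u + w) + 1 = i
    · have h1 : i - 1 + 1 = i := by omega
      have h2 : ¬ (i - 1 = i + 1) := by omega
      simp [hc, hiff.mp hc, h1, h2]
    · rw [if_neg hc, if_neg (by rw [hiff] at hc; exact hc), mul_zero]

lemma distMatrix_zero (n : ℕ) : distMatrix n 0 = 1 := by
  ext u v
  unfold distMatrix
  simp [hammingDist_eq_zero, Matrix.one_apply, eq_comm]

lemma row_sum_one (n : ℕ) (u : Fin n → ZMod 2) :
    ∑ v, distMatrix n 1 u v = (n : ℝ) := by
  have hre : ∑ v, distMatrix n 1 u v = ∑ t, distMatrix n 1 u (u + t) :=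
    (Fintype.sum_equiv (Equiv.addLeft u) _ _ (fun t => rfl)).symm
  rw [hre]
  have hA1 : ∀ t, distMatrix n 1 u (u + t) = if hammingNorm t = 1 then (1:ℝ) else 0 := by
    intro t
    unfold distMatrix
    rw [dist_eq_norm_add]
    have h : u + (u + t) = t := by
      funext k
      simp [← add_assoc, CharTwo.add_self_eq_zero]
    rw [h]
  simp_rw [hA1]
  rw [sum_weight_one n (fun _ => (1:ℝ))]
  simp

lemma mulVec_const (n : ℕ) (a : ℝ) :
    (distMatrix n 1).mulVec (fun _ => a) = fun _ => (n:ℝ) * a := by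
  funext u
  simp only [Matrix.mulVec, dotProduct]
  rw [← Finset.sum_mul, row_sum_one]

/-- Suppose `n ≡ 2 (mod 4)` and `l` is a distance magic labeling of `Qₙ`
(viewed as a real vector with `A₁ l ∈ span{𝟏}`). Then for every nonempty set `D`
of odd integers in `{1,...,n}`, `l` is also `D`-magic: `(∑_{i∈D} A_i) l ∈ span{𝟏}`. -/
theorem stmt_19 (n : ℕ) (hn : n % 4 = 2)
    (l : (Fin n → ZMod 2) → ℝ)
    (hlab : ∃ f : (Fin n → ZMod 2) ≃ Fin (2 ^ n), ∀ x, l x = (f x : ℕ) + 1)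
    (hmagic : ∃ c : ℝ, (distMatrix n 1).mulVec l = fun _ => c)
    (D : Finset ℕ) (hD : D.Nonempty) (hDodd : ∀ i ∈ D, Odd i ∧ 1 ≤ i ∧ i ≤ n) :
    ∃ c' : ℝ, (∑ i ∈ D, distMatrix n i).mulVec l = fun _ => c' := by
  classical
  obtain ⟨c, hc⟩ := hmagic
  -- affine combination lemma for A1
  have hA1aff : ∀ a b : ℝ, (distMatrix n 1).mulVec (fun x => a + b * l x)
      = fun _ => (n:ℝ) * a + b * c := by
    intro a b
    have : (fun x => a + b * l x) = (fun _ => a) + b • l := by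
      funext x; simp [Pi.add_apply, Pi.smul_apply, smul_eq_mul]
    rw [this, Matrix.mulVec_add, Matrix.mulVec_smul, mulVec_const, hc]
    funext x
    simp [smul_eq_mul]
  -- key induction
  have key : ∀ i : ℕ, (Odd i → ∃ a : ℝ, (distMatrix n i).mulVec l = fun _ => a) ∧
      (Even i → ∃ a b : ℝ, (distMatrix n i).mulVec l = fun x => a + b * l x) := by
    intro i
    induction i using Nat.strong_induction_on with
    | _ i IH =>
      match i with
      | 0 =>
        refine ⟨fun h => absurd h (by simp), fun _ => ⟨0, 1, ?_⟩⟩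
        rw [distMatrix_zero, Matrix.one_mulVec]
        funext x; ring
      | 1 =>
        exact ⟨fun _ => ⟨c, hc⟩, fun h => absurd h (by simp)⟩
      | (k+2) =>
        have hrec := distMatrix_rec n (k+1) (by omega)
        have hml := congrArg (fun M => M.mulVec l) hrec
        simp only [Matrix.add_mulVec, Matrix.smul_mulVec, ← Matrix.mulVec_mulVec] at hml
        -- hml : A1 *ᵥ (A_{k+1} *ᵥ l) = ((k+1)+1) • A_{k+2} *ᵥ l + (n-(k+1)+1) • A_k *ᵥ l
        have hk1 : k + 1 - 1 = k := by omega
        rw [hk1] at hml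
        have hcoef : ((k:ℝ)+1) + 1 ≠ 0 := by positivity
        obtain ⟨IH1odd, IH1even⟩ := IH (k+1) (by omega)
        obtain ⟨IH0odd, IH0even⟩ := IH k (by omega)
        rcases Nat.even_or_odd k with hke | hko
        · -- k even, k+1 odd, target k+2 even
          obtain ⟨a1, ha1⟩ := IH1odd (by simpa using hke.add_one)
          obtain ⟨a0, b0, ha0⟩ := IH0even hke
          refine ⟨fun h => by obtain ⟨m1, hm1⟩ := h; obtain ⟨m2, hm2⟩ := hke; omega,
              fun _ => ?_⟩
          refine ⟨(((n:ℝ)*a1 - ((n:ℝ)-(k+1)+1)*a0) / (((k:ℝ)+1)+1)),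
              (-(((n:ℝ)-(k+1)+1)*b0) / (((k:ℝ)+1)+1)), ?_⟩
          rw [ha1, mulVec_const, ha0] at hml
          funext x
          have := congrFun hml x
          simp only [Pi.add_apply, Pi.smul_apply, smul_eq_mul] at this
          push_cast at this ⊢
          field_simp
          linarith [this]
        · -- k odd, k+1 even, target k+2 odd
          obtain ⟨a1, b1, ha1⟩ := IH1even (by simpa using hko.add_one)
          obtain ⟨a0, ha0⟩ := IH0odd hko
          refine ⟨fun _ => ?_, fun h => by obtain ⟨m1, hm1⟩ := h; obtain ⟨m2, hm2⟩ := hko; omega⟩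
          refine ⟨(((n:ℝ)*a1 + b1*c - ((n:ℝ)-(k+1)+1)*a0) / (((k:ℝ)+1)+1)), ?_⟩
          rw [ha1, hA1aff, ha0] at hml
          funext x
          have := congrFun hml x
          simp only [Pi.add_apply, Pi.smul_apply, smul_eq_mul] at this
          push_cast at this ⊢
          field_simp
          linarith [this]
  -- conclude
  choose a ha using fun i (hi : i ∈ D) => (key i).1 (hDodd i hi).1
  refine ⟨∑ i ∈ D.attach, a i i.2, ?_⟩
  funext x
  simp only [Matrix.mulVec, dotProduct, Matrix.sum_apply, Finset.sum_mul]
  rw [Finset.sum_comm]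
  rw [← Finset.sum_attach D (fun i => ∑ v, distMatrix n i x v * l v)]
  apply Finset.sum_congr rfl
  intro i _
  have := congrFun (ha i i.2) x
  simpa [Matrix.mulVec, dotProduct] using this
end
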